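/- arXiv:1703.10797 — 7 statements merged into one kernel-verified Lean document; each statement's English description precedes it below -/
import Mathlib

section
/- Let F, G : [0,∞) → [0,∞) be nondecreasing continuous functions such that F(s)G(s) → +∞ as s → +∞. Let (λ_j)_{j∈ℕ} be a sequence of nonnegative real numbers and (a_j)_{j∈ℕ} a sequence of real numbers with 0 < Σ_j a_j² < ∞ and Σ_j F(λ_j)² G(λ_j)² a_j² < ∞. Then the sums Σ_j F(λ_j)² a_j² and Σ_j G(λ_j)² a_j² are finite and ( Σ_j F(λ_j)² a_j² )^{1/2} · ( Σ_j G(λ_j)² a_j² )^{1/2} ≤ 2 ( Σ_j F(λ_j)² G(λ_j)² a_j² )^{1/2} · ( Σ_j a_j² )^{1/2}. -/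
open scoped BigOperators

/-- Spectral-coefficient form of `‖F(L)u‖ ‖G(L)u‖ ≤ 2 ‖F(L)G(L)u‖ ‖u‖` for
nondecreasing continuous `F, G : [0,∞) → [0,∞)` with `F·G → +∞` at infinity. -/
theorem statement2 (F G : ℝ → ℝ) (lam a : ℕ → ℝ)
    (hFnonneg : ∀ s, 0 ≤ s → 0 ≤ F s)
    (hGnonneg : ∀ s, 0 ≤ s → 0 ≤ G s)
    (hFmono : MonotoneOn F (Set.Ici (0 : ℝ)))
    (hGmono : MonotoneOn G (Set.Ici (0 : ℝ)))
    (hFcont : ContinuousOn F (Set.Ici (0 : ℝ)))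
    (hGcont : ContinuousOn G (Set.Ici (0 : ℝ)))
    (hFGtop : Filter.Tendsto (fun s => F s * G s) Filter.atTop Filter.atTop)
    (hlam : ∀ j, 0 ≤ lam j)
    (ha : Summable (fun j => (a j) ^ 2))
    (hapos : 0 < ∑' j, (a j) ^ 2)
    (hFG : Summable (fun j => (F (lam j)) ^ 2 * (G (lam j)) ^ 2 * (a j) ^ 2)) :
    Summable (fun j => (F (lam j)) ^ 2 * (a j) ^ 2) ∧
    Summable (fun j => (G (lam j)) ^ 2 * (a j) ^ 2) ∧
    Real.sqrt (∑' j, (F (lam j)) ^ 2 * (a j) ^ 2) *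
        Real.sqrt (∑' j, (G (lam j)) ^ 2 * (a j) ^ 2)
      ≤ 2 * Real.sqrt (∑' j, (F (lam j)) ^ 2 * (G (lam j)) ^ 2 * (a j) ^ 2) *
          Real.sqrt (∑' j, (a j) ^ 2) := by
  -- a threshold point where F·G ≥ 1
  obtain ⟨s₀, hs₀0, hs₀⟩ : ∃ s, 0 ≤ s ∧ 1 ≤ F s * G s := by
    have h2 : ∀ᶠ s in Filter.atTop, 0 ≤ s ∧ 1 ≤ F s * G s :=
      (Filter.eventually_ge_atTop (0 : ℝ)).and (hFGtop.eventually_ge_atTop 1)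
    obtain ⟨s, hs⟩ := h2.exists
    exact ⟨s, hs.1, hs.2⟩
  have hF0 := hFnonneg s₀ hs₀0
  have hG0 := hGnonneg s₀ hs₀0
  have hFs₀ : 0 < F s₀ := by
    rcases lt_or_ge 0 (F s₀) with h | h
    · exact h
    · have : F s₀ = 0 := le_antisymm h hF0
      nlinarith
  have hGs₀ : 0 < G s₀ := by
    rcases lt_or_ge 0 (G s₀) with h | h
    · exact h
    · have : G s₀ = 0 := le_antisymm h hG0
      nlinarith
  -- key pointwise inequality
  have hkey : ∀ s t : ℝ, 0 ≤ s → 0 ≤ t →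
      F s ^ 2 * G t ^ 2 ≤ F s ^ 2 * G s ^ 2 + F t ^ 2 * G t ^ 2 := by
    intro s t hs ht
    have hFs := hFnonneg s hs
    have hFt := hFnonneg t ht
    have hGs := hGnonneg s hs
    have hGt := hGnonneg t ht
    rcases le_total s t with h | h
    · have h1 : F s ≤ F t := hFmono hs ht h
      have h2 : F s ^ 2 ≤ F t ^ 2 := pow_le_pow_left₀ hFs h1 2
      have h3 : F s ^ 2 * G t ^ 2 ≤ F t ^ 2 * G t ^ 2 :=
        mul_le_mul_of_nonneg_right h2 (sq_nonneg _)
      have h4 : (0:ℝ) ≤ F s ^ 2 * G s ^ 2 := by positivity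
      linarith
    · have h1 : G t ≤ G s := hGmono ht hs h
      have h2 : G t ^ 2 ≤ G s ^ 2 := pow_le_pow_left₀ hGt h1 2
      have h3 : F s ^ 2 * G t ^ 2 ≤ F s ^ 2 * G s ^ 2 :=
        mul_le_mul_of_nonneg_left h2 (sq_nonneg _)
      have h4 : (0:ℝ) ≤ F t ^ 2 * G t ^ 2 := by positivity
      linarith
  -- summability of X
  have hFdom : ∀ j, F (lam j) ^ 2 * a j ^ 2 ≤
      F s₀ ^ 2 * a j ^ 2 + (1 / G s₀ ^ 2) * (F (lam j) ^ 2 * G (lam j) ^ 2 * a j ^ 2) := by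
    intro j
    have hFj := hFnonneg (lam j) (hlam j)
    have hGj := hGnonneg (lam j) (hlam j)
    have hc : (0 : ℝ) < G s₀ ^ 2 := by positivity
    rcases le_total (lam j) s₀ with h | h
    · have h1 : F (lam j) ≤ F s₀ := hFmono (hlam j) hs₀0 h
      have h2 : (0 : ℝ) ≤ (1 / G s₀ ^ 2) * (F (lam j) ^ 2 * G (lam j) ^ 2 * a j ^ 2) := by
        positivity
      have h5 : F (lam j) ^ 2 ≤ F s₀ ^ 2 := pow_le_pow_left₀ hFj h1 2
      have h6 : F (lam j) ^ 2 * a j ^ 2 ≤ F s₀ ^ 2 * a j ^ 2 :=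
        mul_le_mul_of_nonneg_right h5 (sq_nonneg _)
      linarith
    · have h1 : G s₀ ≤ G (lam j) := hGmono hs₀0 (hlam j) h
      have h2 : F (lam j) ^ 2 * a j ^ 2 * G s₀ ^ 2 ≤ F (lam j) ^ 2 * G (lam j) ^ 2 * a j ^ 2 := by
        have h5 : G s₀ ^ 2 ≤ G (lam j) ^ 2 := pow_le_pow_left₀ hG0 h1 2
        calc F (lam j) ^ 2 * a j ^ 2 * G s₀ ^ 2
            ≤ F (lam j) ^ 2 * a j ^ 2 * G (lam j) ^ 2 :=
              mul_le_mul_of_nonneg_left h5 (by positivity)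
          _ = F (lam j) ^ 2 * G (lam j) ^ 2 * a j ^ 2 := by ring
      have h3 : F (lam j) ^ 2 * a j ^ 2 ≤ (F (lam j) ^ 2 * G (lam j) ^ 2 * a j ^ 2) / G s₀ ^ 2 :=
        (le_div_iff₀ hc).2 h2
      have h4 : (0 : ℝ) ≤ F s₀ ^ 2 * a j ^ 2 := by positivity
      calc F (lam j) ^ 2 * a j ^ 2 ≤ (F (lam j) ^ 2 * G (lam j) ^ 2 * a j ^ 2) / G s₀ ^ 2 := h3
        _ = (1 / G s₀ ^ 2) * (F (lam j) ^ 2 * G (lam j) ^ 2 * a j ^ 2) := by ring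
        _ ≤ _ := by linarith
  have hX : Summable (fun j => F (lam j) ^ 2 * a j ^ 2) := by
    refine Summable.of_nonneg_of_le (fun j => by positivity) hFdom ?_
    exact (ha.mul_left _).add (hFG.mul_left _)
  -- summability of Y
  have hGdom : ∀ j, G (lam j) ^ 2 * a j ^ 2 ≤
      G s₀ ^ 2 * a j ^ 2 + (1 / F s₀ ^ 2) * (F (lam j) ^ 2 * G (lam j) ^ 2 * a j ^ 2) := by
    intro j
    have hFj := hFnonneg (lam j) (hlam j)
    have hGj := hGnonneg (lam j) (hlam j)
    have hc : (0 : ℝ) < F s₀ ^ 2 := by positivity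
    rcases le_total (lam j) s₀ with h | h
    · have h1 : G (lam j) ≤ G s₀ := hGmono (hlam j) hs₀0 h
      have h2 : (0 : ℝ) ≤ (1 / F s₀ ^ 2) * (F (lam j) ^ 2 * G (lam j) ^ 2 * a j ^ 2) := by
        positivity
      have h5 : G (lam j) ^ 2 ≤ G s₀ ^ 2 := pow_le_pow_left₀ hGj h1 2
      have h6 : G (lam j) ^ 2 * a j ^ 2 ≤ G s₀ ^ 2 * a j ^ 2 :=
        mul_le_mul_of_nonneg_right h5 (sq_nonneg _)
      linarith
    · have h1 : F s₀ ≤ F (lam j) := hFmono hs₀0 (hlam j) h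
      have h2 : G (lam j) ^ 2 * a j ^ 2 * F s₀ ^ 2 ≤ F (lam j) ^ 2 * G (lam j) ^ 2 * a j ^ 2 := by
        have h5 : F s₀ ^ 2 ≤ F (lam j) ^ 2 := pow_le_pow_left₀ hF0 h1 2
        calc G (lam j) ^ 2 * a j ^ 2 * F s₀ ^ 2
            ≤ G (lam j) ^ 2 * a j ^ 2 * F (lam j) ^ 2 :=
              mul_le_mul_of_nonneg_left h5 (by positivity)
          _ = F (lam j) ^ 2 * G (lam j) ^ 2 * a j ^ 2 := by ring
      have h3 : G (lam j) ^ 2 * a j ^ 2 ≤ (F (lam j) ^ 2 * G (lam j) ^ 2 * a j ^ 2) / F s₀ ^ 2 :=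
        (le_div_iff₀ hc).2 h2
      have h4 : (0 : ℝ) ≤ G s₀ ^ 2 * a j ^ 2 := by positivity
      calc G (lam j) ^ 2 * a j ^ 2 ≤ (F (lam j) ^ 2 * G (lam j) ^ 2 * a j ^ 2) / F s₀ ^ 2 := h3
        _ = (1 / F s₀ ^ 2) * (F (lam j) ^ 2 * G (lam j) ^ 2 * a j ^ 2) := by ring
        _ ≤ _ := by linarith
  have hY : Summable (fun j => G (lam j) ^ 2 * a j ^ 2) := by
    refine Summable.of_nonneg_of_le (fun j => by positivity) hGdom ?_
    exact (ha.mul_left _).add (hFG.mul_left _)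
  refine ⟨hX, hY, ?_⟩
  set X := ∑' j, F (lam j) ^ 2 * a j ^ 2 with hXdef
  set Y := ∑' j, G (lam j) ^ 2 * a j ^ 2 with hYdef
  set Z := ∑' j, F (lam j) ^ 2 * G (lam j) ^ 2 * a j ^ 2 with hZdef
  set N := ∑' j, (a j) ^ 2 with hNdef
  have hXnn : 0 ≤ X := tsum_nonneg fun j => by positivity
  have hYnn : 0 ≤ Y := tsum_nonneg fun j => by positivity
  have hZnn : 0 ≤ Z := tsum_nonneg fun j => by positivity
  have hNnn : 0 ≤ N := tsum_nonneg fun j => by positivity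
  -- the core estimate X * Y ≤ 2 * Z * N
  have hstep : ∀ j, F (lam j) ^ 2 * a j ^ 2 * Y ≤
      F (lam j) ^ 2 * G (lam j) ^ 2 * a j ^ 2 * N + a j ^ 2 * Z := by
    intro j
    have e1 : F (lam j) ^ 2 * a j ^ 2 * Y
        = ∑' k, F (lam j) ^ 2 * a j ^ 2 * (G (lam k) ^ 2 * a k ^ 2) := by
      rw [tsum_mul_left]
    rw [e1]
    have hs1 : Summable (fun k => F (lam j) ^ 2 * a j ^ 2 * (G (lam k) ^ 2 * a k ^ 2)) :=
      hY.mul_left _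
    have hs2a : Summable (fun k => F (lam j) ^ 2 * G (lam j) ^ 2 * a j ^ 2 * a k ^ 2) :=
      ha.mul_left _
    have hs2b : Summable (fun k => a j ^ 2 * (F (lam k) ^ 2 * G (lam k) ^ 2 * a k ^ 2)) :=
      hFG.mul_left _
    have hpt : ∀ k, F (lam j) ^ 2 * a j ^ 2 * (G (lam k) ^ 2 * a k ^ 2) ≤
        F (lam j) ^ 2 * G (lam j) ^ 2 * a j ^ 2 * a k ^ 2
          + a j ^ 2 * (F (lam k) ^ 2 * G (lam k) ^ 2 * a k ^ 2) := by
      intro k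
      have h := mul_le_mul_of_nonneg_right (hkey (lam j) (lam k) (hlam j) (hlam k))
        (mul_nonneg (sq_nonneg (a j)) (sq_nonneg (a k)))
      nlinarith [h]
    calc (∑' k, F (lam j) ^ 2 * a j ^ 2 * (G (lam k) ^ 2 * a k ^ 2))
        ≤ ∑' k, (F (lam j) ^ 2 * G (lam j) ^ 2 * a j ^ 2 * a k ^ 2
            + a j ^ 2 * (F (lam k) ^ 2 * G (lam k) ^ 2 * a k ^ 2)) :=
          Summable.tsum_le_tsum hpt hs1 (hs2a.add hs2b)
      _ = F (lam j) ^ 2 * G (lam j) ^ 2 * a j ^ 2 * N + a j ^ 2 * Z := by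
          rw [Summable.tsum_add hs2a hs2b, tsum_mul_left, tsum_mul_left]
  have hXY : X * Y ≤ 2 * Z * N := by
    have e2 : X * Y = ∑' j, F (lam j) ^ 2 * a j ^ 2 * Y := tsum_mul_right.symm
    have hsl : Summable (fun j => F (lam j) ^ 2 * a j ^ 2 * Y) := hX.mul_right _
    have hsra : Summable (fun j => F (lam j) ^ 2 * G (lam j) ^ 2 * a j ^ 2 * N) := hFG.mul_right _
    have hsrb : Summable (fun j => a j ^ 2 * Z) := ha.mul_right _
    calc X * Y = ∑' j, F (lam j) ^ 2 * a j ^ 2 * Y := e2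
      _ ≤ ∑' j, (F (lam j) ^ 2 * G (lam j) ^ 2 * a j ^ 2 * N + a j ^ 2 * Z) :=
          Summable.tsum_le_tsum hstep hsl (hsra.add hsrb)
      _ = Z * N + N * Z := by rw [Summable.tsum_add hsra hsrb, tsum_mul_right, tsum_mul_right]
      _ = 2 * Z * N := by ring
  -- conclude with square roots
  have h1 : Real.sqrt X * Real.sqrt Y = Real.sqrt (X * Y) := (Real.sqrt_mul hXnn Y).symm
  have h2 : X * Y ≤ 4 * Z * N := by nlinarith [mul_nonneg hZnn hNnn]
  have h3 : Real.sqrt (X * Y) ≤ Real.sqrt (4 * Z * N) := Real.sqrt_le_sqrt h2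
  have h4 : Real.sqrt (4 * Z * N) = 2 * Real.sqrt Z * Real.sqrt N := by
    rw [mul_assoc, Real.sqrt_mul (by norm_num : (0:ℝ) ≤ 4), Real.sqrt_mul hZnn,
      show (4:ℝ) = 2 ^ 2 by norm_num, Real.sqrt_sq (by norm_num : (0:ℝ) ≤ 2)]
    ring
  rw [h1]
  calc Real.sqrt (X * Y) ≤ Real.sqrt (4 * Z * N) := h3
    _ = 2 * Real.sqrt Z * Real.sqrt N := h4
end

section
/- Let (λ_j)_{j∈ℕ} be a sequence of nonnegative real numbers, (a_j)_{j∈ℕ} a sequence of real numbers with 0 < Σ_j a_j² < ∞, and let σ > 0 be such that Σ_j (1+λ_j)^σ a_j² < ∞. Let H : [0,∞) → (0,∞) be nonincreasing with H(s) → 0 as s → +∞. Then ( Σ_j (1+λ_j)^σ H(λ_j)² a_j² ) / ( Σ_j H(λ_j)² a_j² ) ≤ 4 · ( Σ_j (1+λ_j)^σ a_j² ) / ( Σ_j a_j² ). -/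
open scoped BigOperators

set_option maxHeartbeats 1000000

/-- Spectral-coefficient form of `Λ_σ(H(L)u) ≤ 2 Λ_σ(u)` for a nonincreasing
positive `H` tending to `0` at infinity:
`(∑ (1+λⱼ)^σ H(λⱼ)² aⱼ²)/(∑ H(λⱼ)² aⱼ²) ≤ 4 (∑ (1+λⱼ)^σ aⱼ²)/(∑ aⱼ²)`. -/
theorem statement3 (lam a : ℕ → ℝ) (σ : ℝ) (H : ℝ → ℝ)
    (hlam : ∀ j, 0 ≤ lam j)
    (hσ : 0 < σ)
    (ha : Summable (fun j => (a j) ^ 2))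
    (hapos : 0 < ∑' j, (a j) ^ 2)
    (hsob : Summable (fun j => (1 + lam j) ^ σ * (a j) ^ 2))
    (hHpos : ∀ s, 0 ≤ s → 0 < H s)
    (hHanti : AntitoneOn H (Set.Ici (0 : ℝ)))
    (hH0 : Filter.Tendsto H Filter.atTop (nhds 0)) :
    (∑' j, (1 + lam j) ^ σ * (H (lam j)) ^ 2 * (a j) ^ 2) /
        (∑' j, (H (lam j)) ^ 2 * (a j) ^ 2)
      ≤ 4 * (∑' j, (1 + lam j) ^ σ * (a j) ^ 2) / (∑' j, (a j) ^ 2) := by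
  obtain ⟨j₀, hj₀⟩ : ∃ j, a j ≠ 0 := by
    by_contra hcon
    push_neg at hcon
    simp [hcon] at hapos
  -- basic positivity facts
  have hHlam : ∀ j, 0 < H (lam j) := fun j => hHpos _ (hlam j)
  have hHle0 : ∀ j, H (lam j) ≤ H 0 := fun j =>
    hHanti (Set.mem_Ici.2 le_rfl) (Set.mem_Ici.2 (hlam j)) (hlam j)
  have hw1 : ∀ j, (1 : ℝ) ≤ (1 + lam j) ^ σ := fun j =>
    Real.one_le_rpow (by linarith [hlam j]) hσ.le
  -- summability of the two modified series
  have sD : Summable (fun j => (H (lam j)) ^ 2 * (a j) ^ 2) := by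
    refine Summable.of_nonneg_of_le (fun j => by positivity) (fun j => ?_)
      (ha.mul_left (H 0 ^ 2))
    have : H (lam j) ^ 2 ≤ H 0 ^ 2 := pow_le_pow_left₀ (hHlam j).le (hHle0 j) 2
    exact mul_le_mul_of_nonneg_right this (sq_nonneg _)
  have sN : Summable (fun j => (1 + lam j) ^ σ * (H (lam j)) ^ 2 * (a j) ^ 2) := by
    refine Summable.of_nonneg_of_le (fun j => ?_) (fun j => ?_) (hsob.mul_left (H 0 ^ 2))
    · have hwj : (0:ℝ) ≤ (1 + lam j) ^ σ := le_trans zero_le_one (hw1 j)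
      positivity
    · have h2 : H (lam j) ^ 2 ≤ H 0 ^ 2 := pow_le_pow_left₀ (hHlam j).le (hHle0 j) 2
      have hwa : (0:ℝ) ≤ (1 + lam j) ^ σ * (a j) ^ 2 := by
        have := hw1 j; positivity
      calc (1 + lam j) ^ σ * (H (lam j)) ^ 2 * (a j) ^ 2
          = H (lam j) ^ 2 * ((1 + lam j) ^ σ * (a j) ^ 2) := by ring
        _ ≤ H 0 ^ 2 * ((1 + lam j) ^ σ * (a j) ^ 2) :=
            mul_le_mul_of_nonneg_right h2 hwa
  set A := ∑' j, (a j) ^ 2 with hAdef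
  set B := ∑' j, (1 + lam j) ^ σ * (a j) ^ 2 with hBdef
  set D := ∑' j, (H (lam j)) ^ 2 * (a j) ^ 2 with hDdef
  set N := ∑' j, (1 + lam j) ^ σ * (H (lam j)) ^ 2 * (a j) ^ 2 with hNdef
  have hApos : 0 < A := hapos
  have hAB : A ≤ B := by
    apply Summable.tsum_le_tsum _ ha hsob
    intro j
    nlinarith [hw1 j, sq_nonneg (a j)]
  have hBpos : 0 < B := lt_of_lt_of_le hApos hAB
  have hDpos : 0 < D := by
    refine Summable.tsum_pos sD (fun j => by positivity) j₀ ?_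
    have := hHlam j₀
    positivity
  -- the threshold
  set c : ℝ := 2 * B / A with hcdef
  have hc2 : (2:ℝ) ≤ c := by
    rw [hcdef, le_div_iff₀ hApos]
    linarith
  have hcpos : 0 < c := by linarith
  set T : ℝ := c ^ σ⁻¹ - 1 with hTdef
  have hT1 : 1 + T = c ^ σ⁻¹ := by rw [hTdef]; ring
  have hTc : (1 + T) ^ σ = c := by
    rw [hT1, ← Real.rpow_mul hcpos.le, inv_mul_cancel₀ hσ.ne', Real.rpow_one]
  have hT0 : 0 ≤ T := by
    have : (1:ℝ) ≤ c ^ σ⁻¹ := Real.one_le_rpow (by linarith) (by positivity)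
    rw [hTdef]; linarith
  set h : ℝ := H T with hhdef
  have hhpos : 0 < h := hHpos T hT0
  -- pointwise estimate 1
  have key1 : ∀ j, (1 + lam j) ^ σ * (H (lam j)) ^ 2 * (a j) ^ 2 ≤
      c * ((H (lam j)) ^ 2 * (a j) ^ 2) + h ^ 2 * ((1 + lam j) ^ σ * (a j) ^ 2) := by
    intro j
    have hwj : (0:ℝ) ≤ (1 + lam j) ^ σ := le_trans zero_le_one (hw1 j)
    rcases le_or_gt (lam j) T with hle | hgt
    · have hwc : (1 + lam j) ^ σ ≤ c := by
        rw [← hTc]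
        exact Real.rpow_le_rpow (by linarith [hlam j]) (by linarith) hσ.le
      nlinarith [mul_nonneg (mul_nonneg (sub_nonneg.2 hwc) (sq_nonneg (H (lam j))))
          (sq_nonneg (a j)),
        mul_nonneg (mul_nonneg (sq_nonneg h) hwj) (sq_nonneg (a j))]
    · have hHle : H (lam j) ≤ h := by
        rw [hhdef]
        exact hHanti (Set.mem_Ici.2 hT0) (Set.mem_Ici.2 (hlam j)) hgt.le
      have h2 : H (lam j) ^ 2 ≤ h ^ 2 := pow_le_pow_left₀ (hHlam j).le hHle 2
      nlinarith [mul_nonneg hwj (sq_nonneg (a j)), sq_nonneg (a j),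
        mul_nonneg (mul_nonneg hcpos.le (sq_nonneg (H (lam j)))) (sq_nonneg (a j))]
  -- pointwise estimate 2
  have key2 : ∀ j, h ^ 2 * (a j) ^ 2 ≤
      (H (lam j)) ^ 2 * (a j) ^ 2 + (h ^ 2 / c) * ((1 + lam j) ^ σ * (a j) ^ 2) := by
    intro j
    have hwj : (0:ℝ) ≤ (1 + lam j) ^ σ := le_trans zero_le_one (hw1 j)
    rcases le_or_gt (lam j) T with hle | hgt
    · have hhH : h ≤ H (lam j) := by
        rw [hhdef]
        exact hHanti (Set.mem_Ici.2 (hlam j)) (Set.mem_Ici.2 hT0) hle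
      have h2 : h ^ 2 ≤ H (lam j) ^ 2 := pow_le_pow_left₀ hhpos.le hhH 2
      nlinarith [sq_nonneg (a j), mul_nonneg (div_nonneg (sq_nonneg h) hcpos.le)
        (mul_nonneg hwj (sq_nonneg (a j)))]
    · have hcw : c ≤ (1 + lam j) ^ σ := by
        rw [← hTc]
        exact Real.rpow_le_rpow (by linarith) (by linarith) hσ.le
      have : (h ^ 2 / c) * c ≤ (h ^ 2 / c) * (1 + lam j) ^ σ :=
        mul_le_mul_of_nonneg_left hcw (by positivity)
      rw [div_mul_cancel₀ _ hcpos.ne'] at this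
      nlinarith [sq_nonneg (a j), mul_nonneg (sq_nonneg (H (lam j))) (sq_nonneg (a j))]
  -- sum estimate 1 : N ≤ c * D + h² * B
  have hNle : N ≤ c * D + h ^ 2 * B := by
    have hs1 : Summable (fun j => c * ((H (lam j)) ^ 2 * (a j) ^ 2)) := sD.mul_left _
    have hs2 : Summable (fun j => h ^ 2 * ((1 + lam j) ^ σ * (a j) ^ 2)) := hsob.mul_left _
    calc N ≤ ∑' j, (c * ((H (lam j)) ^ 2 * (a j) ^ 2)
              + h ^ 2 * ((1 + lam j) ^ σ * (a j) ^ 2)) :=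
          Summable.tsum_le_tsum key1 sN (hs1.add hs2)
      _ = c * D + h ^ 2 * B := by
          rw [Summable.tsum_add hs1 hs2, tsum_mul_left, tsum_mul_left]
  -- sum estimate 2 : h² * A ≤ D + (h²/c) * B
  have hDge : h ^ 2 * A ≤ D + (h ^ 2 / c) * B := by
    have hs2 : Summable (fun j => (h ^ 2 / c) * ((1 + lam j) ^ σ * (a j) ^ 2)) :=
      hsob.mul_left _
    calc h ^ 2 * A = ∑' j, h ^ 2 * (a j) ^ 2 := (tsum_mul_left).symm
      _ ≤ ∑' j, ((H (lam j)) ^ 2 * (a j) ^ 2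
            + (h ^ 2 / c) * ((1 + lam j) ^ σ * (a j) ^ 2)) :=
          Summable.tsum_le_tsum key2 (ha.mul_left _) (sD.add hs2)
      _ = D + (h ^ 2 / c) * B := by rw [Summable.tsum_add sD hs2, tsum_mul_left]
  -- arithmetic wrap-up
  have hcB : (h ^ 2 / c) * B = h ^ 2 * A / 2 := by
    rw [hcdef]
    field_simp
  have hD2 : h ^ 2 * A / 2 ≤ D := by
    rw [hcB] at hDge; linarith
  have hNfin : N ≤ 2 * c * D := by
    have : h ^ 2 * B = c * (h ^ 2 * A / 2) := by
      rw [hcdef]; field_simp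
    have h2 : h ^ 2 * B ≤ c * D := by
      rw [this]; exact mul_le_mul_of_nonneg_left hD2 hcpos.le
    linarith
  rw [div_le_div_iff₀ hDpos hApos]
  have : 2 * c * A = 4 * B := by rw [hcdef]; field_simp; ring
  calc N * A ≤ 2 * c * D * A := mul_le_mul_of_nonneg_right hNfin hApos.le
    _ = (2 * c * A) * D := by ring
    _ = 4 * B * D := by rw [this]
end

section
/- Fix α > 0 and T > 0, and set I(T,λ) = ∫₀^T exp(−α(1/t + 1/(T−t))) e^{−λ t} dt. Then there exist C_T > 0 and λ₀ > 0 such that for every λ ≥ λ₀ there is a real number R(T,λ) with |R(T,λ)| ≤ C_T and I(T,λ) = √π · (α^{1/4} / λ^{3/4}) · e^{−α/T} · e^{−2√(αλ)} · ( 1 + R(T,λ)/λ^{1/4} ). -/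
open scoped Real

open MeasureTheory Set Real

-- half Gaussian moment
lemma aux_halfgauss {b : ℝ} (hb : 0 < b) :
    ∫ x in Ioi (0:ℝ), x * Real.exp (-b * x^2) = (2*b)⁻¹ := by
  have h := integral_Ioi_of_hasDerivAt_of_tendsto
    (f := fun x => -(2*b)⁻¹ * Real.exp (-b * x^2))
    (f' := fun x => x * Real.exp (-b * x^2)) (a := 0) (m := 0)
    ?_ ?_ ?_ ?_
  · simpa using h
  · exact (Continuous.continuousWithinAt (by continuity))
  · intro x hx
    have : HasDerivAt (fun x : ℝ => -b * x^2) (-b * (2*x)) x := by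
      simpa using ((hasDerivAt_pow 2 x).const_mul (-b))
    have := (this.exp).const_mul (-(2*b)⁻¹)
    convert this using 1
    · rfl
    field_simp
  · exact (integrable_mul_exp_neg_mul_sq hb).integrableOn
  · have : Filter.Tendsto (fun x : ℝ => Real.exp (-b * x^2)) Filter.atTop (nhds 0) := by
      have := Real.tendsto_exp_atBot
      apply this.comp
      have : Filter.Tendsto (fun x : ℝ => b * x^2) Filter.atTop Filter.atTop := by
        apply Filter.Tendsto.const_mul_atTop hb
        exact Filter.tendsto_pow_atTop (by norm_num)
      simpa using Filter.tendsto_neg_atBot_iff.mpr this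
    simpa using (this.const_mul (-(2*b)⁻¹))

lemma glasser {a b : ℝ} (ha : 0 < a) (hb : 0 < b) :
    ∫ s in Ioi (0:ℝ), Real.exp (-(a*s - b/s)^2) = Real.sqrt π / (2*a) := by
  set u : ℝ → ℝ := fun s => a*s - b/s with hu
  set F : ℝ → ℝ := fun s => Real.exp (-(u s)^2) with hF
  have humeas : Measurable u := by
    apply Measurable.sub
    · exact measurable_id.const_mul a
    · exact measurable_const.div measurable_id
  have hFmeas : Measurable F := ((humeas.pow_const 2).neg).exp
  have hderiv : ∀ s ∈ Ioi (0:ℝ), HasDerivWithinAt u (a + b/s^2) (Ioi 0) s := by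
    intro s hs
    have hs0 : s ≠ 0 := ne_of_gt hs
    have h1 : HasDerivAt (fun x : ℝ => a * x) a s := by
      simpa using (hasDerivAt_id s).const_mul a
    have h2 : HasDerivAt (fun x : ℝ => b * x⁻¹) (b * (-(s^2)⁻¹)) s :=
      (hasDerivAt_inv hs0).const_mul b
    have h3 := h1.sub h2
    have heq : a - b * (-(s^2)⁻¹) = a + b/s^2 := by field_simp; ring
    rw [heq] at h3
    have h4 : u = fun x : ℝ => a * x - b * x⁻¹ := by
      funext x; simp [hu, div_eq_mul_inv]
    rw [h4]
    exact h3.hasDerivWithinAt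
  have hmono : StrictMonoOn u (Ioi (0:ℝ)) := by
    intro s hs t ht hst
    have h1 : b/t < b/s := div_lt_div_of_pos_left hb hs.out hst
    have h2 : a*s < a*t := by nlinarith [hs.out]
    simpa [hu] using sub_lt_sub h2 h1
  have hinj : InjOn u (Ioi (0:ℝ)) := hmono.injOn
  have himg : u '' Ioi (0:ℝ) = univ := by
    apply eq_univ_of_forall
    intro y
    set r := Real.sqrt (y^2 + 4*a*b) with hrdef
    have hr2 : r^2 = y^2 + 4*a*b := Real.sq_sqrt (by positivity)
    have hry : -y < r := by
      have h1 : |y| < r := by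
        have h0 : Real.sqrt (y^2) < r := by
          apply Real.sqrt_lt_sqrt (by positivity); nlinarith
        simpa [Real.sqrt_sq_eq_abs] using h0
      calc -y ≤ |y| := neg_le_abs y
        _ < r := h1
    have hspos : 0 < (y + r)/(2*a) := div_pos (by linarith) (by linarith)
    refine ⟨(y + r)/(2*a), hspos, ?_⟩
    have hyr : y + r ≠ 0 := by linarith
    show a * ((y + r)/(2*a)) - b / ((y + r)/(2*a)) = y
    field_simp
    nlinarith [hr2]
  have key : ∫ x : ℝ, Real.exp (-x^2) = Real.sqrt π := by
    have h := integral_gaussian 1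
    simpa using h
  have hcv := integral_image_eq_integral_abs_deriv_smul measurableSet_Ioi hderiv hinj
      (fun x => Real.exp (-x^2))
  rw [himg] at hcv
  have hcv' : Real.sqrt π = ∫ s in Ioi (0:ℝ), (a + b/s^2) * F s := by
    rw [← key, ← setIntegral_univ, hcv]
    apply setIntegral_congr_fun measurableSet_Ioi
    intro s hs
    have hpos : 0 < a + b/s^2 := by
      have : (0:ℝ) < s := hs
      positivity
    simp [abs_of_pos hpos, smul_eq_mul, hF]
  have hIcv := (integrableOn_image_iff_integrableOn_abs_deriv_smul measurableSet_Ioi hderiv hinj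
      (fun x => Real.exp (-x^2))).mp
      (by rw [himg, integrableOn_univ]
          simpa using integrable_exp_neg_mul_sq (by norm_num : (0:ℝ) < 1))
  have hItot : IntegrableOn (fun s => (a + b/s^2) * F s) (Ioi (0:ℝ)) := by
    apply hIcv.congr_fun _ measurableSet_Ioi
    intro s hs
    have hpos : 0 < a + b/s^2 := by
      have : (0:ℝ) < s := hs
      positivity
    simp [abs_of_pos hpos, smul_eq_mul, hF]
  have hFnonneg : ∀ s, 0 ≤ F s := fun s => (Real.exp_pos _).le
  have hIF : IntegrableOn F (Ioi (0:ℝ)) := by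
    apply Integrable.mono' (hItot.const_mul a⁻¹) (hFmeas.aestronglyMeasurable.restrict)
    filter_upwards [ae_restrict_mem measurableSet_Ioi] with s hs
    rw [Real.norm_eq_abs, abs_of_nonneg (hFnonneg s)]
    have hone : (1:ℝ) ≤ a⁻¹ * (a + b/s^2) := by
      rw [mul_add, inv_mul_cancel₀ ha.ne']
      have : 0 ≤ a⁻¹ * (b/s^2) := by positivity
      linarith
    calc F s = 1 * F s := (one_mul _).symm
      _ ≤ (a⁻¹ * (a + b/s^2)) * F s := mul_le_mul_of_nonneg_right hone (hFnonneg s)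
      _ = a⁻¹ * ((a + b/s^2) * F s) := by ring
  have hIF2 : IntegrableOn (fun s => b/s^2 * F s) (Ioi (0:ℝ)) := by
    apply Integrable.mono' hItot
      (((measurable_const.div (measurable_id.pow_const 2)).mul hFmeas).aestronglyMeasurable.restrict)
    filter_upwards [ae_restrict_mem measurableSet_Ioi] with s _
    show ‖b/s^2 * F s‖ ≤ _
    rw [Real.norm_eq_abs, abs_of_nonneg (by positivity)]
    exact mul_le_mul_of_nonneg_right (le_add_of_nonneg_left ha.le) (hFnonneg s)
  -- reflection identity : ∫ (b/s^2) F = a ∫ F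
  have hrefl : ∫ s in Ioi (0:ℝ), b/s^2 * F s = a * ∫ s in Ioi (0:ℝ), F s := by
    set c := b/a with hc
    have hcpos : 0 < c := div_pos hb ha
    have hwderiv : ∀ s ∈ Ioi (0:ℝ), HasDerivWithinAt (fun x : ℝ => c * x⁻¹) (-(c/s^2)) (Ioi 0) s := by
      intro s hs
      have h := (hasDerivAt_inv (ne_of_gt hs.out)).const_mul c
      have heq : c * (-(s^2)⁻¹) = -(c/s^2) := by field_simp
      rw [heq] at h
      exact h.hasDerivWithinAt
    have hwinj : InjOn (fun x : ℝ => c * x⁻¹) (Ioi (0:ℝ)) := by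
      intro x hx y hy hxy
      have hx0 : x ≠ 0 := ne_of_gt hx.out
      have hy0 : y ≠ 0 := ne_of_gt hy.out
      exact inv_injective (mul_left_cancel₀ hcpos.ne' hxy)
    have hwimg : (fun x : ℝ => c * x⁻¹) '' Ioi (0:ℝ) = Ioi (0:ℝ) := by
      ext y
      constructor
      · rintro ⟨x, hx, rfl⟩
        exact mul_pos hcpos (inv_pos.mpr hx.out)
      · intro hy
        refine ⟨c/y, div_pos hcpos hy.out, ?_⟩
        field_simp
    have hcv2 := integral_image_eq_integral_abs_deriv_smul measurableSet_Ioi hwderiv hwinj F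
    rw [hwimg] at hcv2
    have hFrefl : ∀ s : ℝ, 0 < s → F (c * s⁻¹) = F s := by
      intro s hs
      have hs0 : s ≠ 0 := ne_of_gt hs
      have hc0 : c ≠ 0 := ne_of_gt hcpos
      have : u (c * s⁻¹) = -(u s) := by
        simp only [hu, hc]
        field_simp
        ring
      simp [hF, this]
    have heq2 : ∫ s in Ioi (0:ℝ), F s = ∫ s in Ioi (0:ℝ), c/s^2 * F s := by
      rw [hcv2]
      apply setIntegral_congr_fun measurableSet_Ioi
      intro s hs
      have hs0 : (0:ℝ) < s := hs
      have hpos : 0 < c/s^2 := div_pos hcpos (by positivity)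
      show |(-(c/s^2))| • F (c * s⁻¹) = c/s^2 * F s
      rw [abs_neg, abs_of_pos hpos, smul_eq_mul, hFrefl s hs0]
    calc ∫ s in Ioi (0:ℝ), b/s^2 * F s = ∫ s in Ioi (0:ℝ), a * (c/s^2 * F s) := by
          apply setIntegral_congr_fun measurableSet_Ioi
          intro s hs
          have hs0 : s ≠ 0 := ne_of_gt hs.out
          field_simp [hc]
          rw [hc]; field_simp
      _ = a * ∫ s in Ioi (0:ℝ), c/s^2 * F s := by rw [integral_const_mul]
      _ = a * ∫ s in Ioi (0:ℝ), F s := by rw [← heq2]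
  -- combine
  have hsplit : ∫ s in Ioi (0:ℝ), (a + b/s^2) * F s
      = a * (∫ s in Ioi (0:ℝ), F s) + ∫ s in Ioi (0:ℝ), b/s^2 * F s := by
    rw [← integral_const_mul, ← integral_add (hIF.const_mul a) hIF2]
    apply setIntegral_congr_fun measurableSet_Ioi
    intro s _
    ring
  have : Real.sqrt π = 2 * a * ∫ s in Ioi (0:ℝ), F s := by
    rw [hcv', hsplit, hrefl]; ring
  rw [hF, hu] at this
  rw [this]
  rw [mul_div_cancel_left₀ _ (by positivity : (2*a) ≠ 0)]



section K
variable {a s₀ : ℝ}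

lemma Fbound (ha : 0 < a) (hs₀ : 0 < s₀) {s : ℝ} (hs : 0 < s) :
    Real.exp (-(a*s - (a*s₀^2)/s)^2) ≤ Real.exp (-(a*(s-s₀))^2) := by
  apply Real.exp_le_exp.mpr
  apply neg_le_neg
  have h1 : a*s - (a*s₀^2)/s = a*(s-s₀)*((s+s₀)/s) := by
    field_simp; ring
  rw [h1]
  have h2 : 1 ≤ (s+s₀)/s := by
    rw [le_div_iff₀ hs]; linarith
  calc (a*(s-s₀))^2 = (a*(s-s₀))^2 * 1 := by ring
    _ ≤ (a*(s-s₀))^2 * ((s+s₀)/s)^2 := by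
        apply mul_le_mul_of_nonneg_left _ (sq_nonneg _)
        nlinarith
    _ = (a*(s-s₀)*((s+s₀)/s))^2 := by ring

lemma gauss_int (ha : 0 < a) (s₀ : ℝ) :
    Integrable (fun v : ℝ => Real.exp (-(a*(v - s₀))^2)) := by
  have h := (integrable_exp_neg_mul_sq (show (0:ℝ) < a^2 by positivity)).comp_sub_right s₀
  apply h.congr
  filter_upwards [] with v
  congr 1
  rw [mul_pow]; ring

lemma gaussv_int (ha : 0 < a) (s₀ : ℝ) :
    Integrable (fun v : ℝ => (v - s₀) * Real.exp (-(a*(v - s₀))^2)) := by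
  have h := (integrable_mul_exp_neg_mul_sq (show (0:ℝ) < a^2 by positivity)).comp_sub_right s₀
  apply h.congr
  filter_upwards [] with v
  congr 1
  rw [mul_pow]; ring

lemma gaussabs_int (ha : 0 < a) (s₀ : ℝ) :
    Integrable (fun v : ℝ => |v - s₀| * Real.exp (-(a*(v - s₀))^2)) := by
  have h := (gaussv_int ha s₀).abs
  apply h.congr
  filter_upwards [] with v
  rw [abs_mul, abs_of_pos (Real.exp_pos _)]

lemma Fmeas (a c : ℝ) : Measurable (fun s : ℝ => Real.exp (-(a*s - c/s)^2)) := by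
  apply Real.measurable_exp.comp
  apply Measurable.neg
  apply Measurable.pow_const
  exact (measurable_id.const_mul a).sub (measurable_const.div measurable_id)

lemma K_int (ha : 0 < a) (hs₀ : 0 < s₀) :
    IntegrableOn (fun s => 2*s*Real.exp (-(a*s - (a*s₀^2)/s)^2)) (Ioi (0:ℝ)) := by
  set F := fun s : ℝ => Real.exp (-(a*s - (a*s₀^2)/s)^2) with hF
  have hg : Integrable (fun v : ℝ =>
      (2*s₀) * Real.exp (-(a*(v - s₀))^2) + 2 * (|v - s₀| * Real.exp (-(a*(v - s₀))^2))) :=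
    ((gauss_int ha s₀).const_mul (2*s₀)).add ((gaussabs_int ha s₀).const_mul 2)
  apply Integrable.mono' hg.integrableOn
  · exact ((measurable_id.const_mul 2).mul (Fmeas a (a*s₀^2))).aestronglyMeasurable.restrict
  · filter_upwards [ae_restrict_mem measurableSet_Ioi] with s hs
    have hs0 : (0:ℝ) < s := hs
    have hFb := Fbound ha hs₀ hs0
    have hFn : 0 ≤ F s := (Real.exp_pos _).le
    rw [Real.norm_eq_abs, abs_of_nonneg (by positivity)]
    have h2s : 2*s ≤ 2*s₀ + 2*|s - s₀| := by
      rcases abs_cases (s - s₀) with ⟨h, _⟩ | ⟨h, _⟩ <;> nlinarith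
    calc 2*s*F s ≤ (2*s₀ + 2*|s - s₀|) * F s :=
          mul_le_mul_of_nonneg_right h2s hFn
      _ ≤ (2*s₀ + 2*|s - s₀|) * Real.exp (-(a*(s-s₀))^2) := by
          apply mul_le_mul_of_nonneg_left hFb (by positivity)
      _ = (2*s₀) * Real.exp (-(a*(s - s₀))^2) + 2 * (|s - s₀| * Real.exp (-(a*(s - s₀))^2)) := by
          ring

lemma K_est (ha : 0 < a) (hs₀ : 0 < s₀) :
    |(∫ s in Ioi (0:ℝ), 2*s*Real.exp (-(a*s - (a*s₀^2)/s)^2)) - Real.sqrt π * s₀ / a| ≤ 2/a^2 := by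
  set F := fun s : ℝ => Real.exp (-(a*s - (a*s₀^2)/s)^2) with hF
  have hb : 0 < a*s₀^2 := by positivity
  -- integrability pieces
  have hIF : IntegrableOn F (Ioi (0:ℝ)) := by
    apply Integrable.mono' ((gauss_int ha s₀).integrableOn)
      ((Fmeas a (a*s₀^2)).aestronglyMeasurable.restrict)
    filter_upwards [ae_restrict_mem measurableSet_Ioi] with s hs
    rw [Real.norm_eq_abs, abs_of_pos (Real.exp_pos _)]
    exact Fbound ha hs₀ hs
  have hI2 : IntegrableOn (fun s => 2*(s - s₀)*F s) (Ioi (0:ℝ)) := by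
    apply Integrable.mono' (((gaussabs_int ha s₀).const_mul 2).integrableOn)
      (((measurable_id.sub measurable_const).const_mul 2).mul
        (Fmeas a (a*s₀^2))|>.aestronglyMeasurable.restrict)
    filter_upwards [ae_restrict_mem measurableSet_Ioi] with s hs
    show ‖2*(s - s₀)*F s‖ ≤ _
    rw [Real.norm_eq_abs, abs_mul, abs_mul]
    rw [abs_of_pos (show (0:ℝ) < 2 by norm_num), abs_of_pos (Real.exp_pos _)]
    rw [mul_assoc]
    apply mul_le_mul_of_nonneg_left _ (by norm_num)
    exact mul_le_mul_of_nonneg_left (Fbound ha hs₀ hs) (abs_nonneg _)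
  -- split
  have hsplit : ∫ s in Ioi (0:ℝ), 2*s*F s
      = (2*s₀) * (∫ s in Ioi (0:ℝ), F s) + ∫ s in Ioi (0:ℝ), 2*(s - s₀)*F s := by
    rw [← integral_const_mul, ← integral_add (hIF.const_mul (2*s₀)) hI2]
    apply setIntegral_congr_fun measurableSet_Ioi
    intro s _; ring
  have hGl : ∫ s in Ioi (0:ℝ), F s = Real.sqrt π / (2*a) := glasser ha hb
  have hmain : (2*s₀) * (∫ s in Ioi (0:ℝ), F s) = Real.sqrt π * s₀ / a := by
    rw [hGl]; field_simp
  rw [hsplit, hmain, add_sub_cancel_left]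
  -- bound the correction
  have h1 : |∫ s in Ioi (0:ℝ), 2*(s - s₀)*F s| ≤ ∫ s in Ioi (0:ℝ), |2*(s - s₀)*F s| := by
    have h := norm_integral_le_integral_norm (μ := volume.restrict (Ioi (0:ℝ)))
        (fun s => 2*(s - s₀)*F s)
    simpa only [Real.norm_eq_abs] using h
  have h2 : ∫ s in Ioi (0:ℝ), |2*(s - s₀)*F s|
      ≤ ∫ s in Ioi (0:ℝ), 2 * (|s - s₀| * Real.exp (-(a*(s - s₀))^2)) := by
    apply setIntegral_mono_on hI2.abs (((gaussabs_int ha s₀).const_mul 2).integrableOn)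
      measurableSet_Ioi
    intro s hs
    rw [abs_mul, abs_mul, abs_of_pos (show (0:ℝ) < 2 by norm_num),
      abs_of_pos (Real.exp_pos _), mul_assoc]
    apply mul_le_mul_of_nonneg_left _ (by norm_num)
    exact mul_le_mul_of_nonneg_left (Fbound ha hs₀ hs) (abs_nonneg _)
  have h3 : ∫ s in Ioi (0:ℝ), 2 * (|s - s₀| * Real.exp (-(a*(s - s₀))^2))
      ≤ ∫ s : ℝ, 2 * (|s - s₀| * Real.exp (-(a*(s - s₀))^2)) := by
    apply setIntegral_le_integral ((gaussabs_int ha s₀).const_mul 2)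
    filter_upwards [] with s
    positivity
  have h4 : ∫ s : ℝ, 2 * (|s - s₀| * Real.exp (-(a*(s - s₀))^2)) = 2/a^2 := by
    have h5 : ∫ s : ℝ, 2 * (|s - s₀| * Real.exp (-(a*(s - s₀))^2))
        = ∫ v : ℝ, 2 * (|v| * Real.exp (-(a*v)^2)) := by
      exact integral_sub_right_eq_self (fun v => 2 * (|v| * Real.exp (-(a*v)^2))) s₀
    rw [h5]
    have h6 : ∫ v : ℝ, 2 * (|v| * Real.exp (-(a*v)^2))
        = 2 * ∫ v in Ioi (0:ℝ), 2 * (v * Real.exp (-(a*v)^2)) := by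
      rw [← integral_comp_abs (f := fun v => 2 * (v * Real.exp (-(a*v)^2)))]
      congr 1
      funext v
      congr 2
      rw [mul_pow, mul_pow, sq_abs]
    rw [h6]
    have h7 : ∫ v in Ioi (0:ℝ), 2 * (v * Real.exp (-(a*v)^2))
        = 2 * ∫ v in Ioi (0:ℝ), v * Real.exp (-(a^2) * v^2) := by
      rw [← integral_const_mul]
      apply setIntegral_congr_fun measurableSet_Ioi
      intro v _
      simp only [mul_pow]
      ring
    rw [h7, aux_halfgauss (show (0:ℝ) < a^2 by positivity)]
    field_simp
  calc |∫ s in Ioi (0:ℝ), 2*(s - s₀)*F s| ≤ _ := h1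
    _ ≤ _ := h2
    _ ≤ _ := h3
    _ = 2/a^2 := h4

lemma K_tail (ha : 0 < a) (hs₀ : 0 < s₀) {d : ℝ} (hd : 2*s₀ ≤ d) :
    ∫ s in Ioi d, 2*s*Real.exp (-(a*s - (a*s₀^2)/s)^2) ≤ 2/a^2 := by
  set F := fun s : ℝ => Real.exp (-(a*s - (a*s₀^2)/s)^2) with hF
  have hds : s₀ ≤ d := by linarith
  have h1 : ∫ s in Ioi d, 2*s*F s
      ≤ ∫ s in Ioi d, 4*(s - s₀) * Real.exp (-(a*(s - s₀))^2) := by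
    apply setIntegral_mono_on ((K_int ha hs₀).mono_set (Ioi_subset_Ioi (by linarith)))
      (((gaussv_int ha s₀).const_mul 4).integrableOn.congr_fun (fun s _ => by ring)
        measurableSet_Ioi) measurableSet_Ioi
    intro s hs
    have hs0 : (0:ℝ) < s := lt_of_le_of_lt (by positivity) (lt_of_le_of_lt hd hs)
    have h2s : 2*s ≤ 4*(s - s₀) := by
      have : d < s := hs
      nlinarith
    calc 2*s*F s ≤ 4*(s - s₀)*F s :=
          mul_le_mul_of_nonneg_right h2s (Real.exp_pos _).le
      _ ≤ 4*(s - s₀) * Real.exp (-(a*(s - s₀))^2) := by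
          apply mul_le_mul_of_nonneg_left (Fbound ha hs₀ hs0)
          have : d < s := hs
          nlinarith
  have h2 : ∫ s in Ioi d, 4*(s - s₀) * Real.exp (-(a*(s - s₀))^2)
      ≤ ∫ s in Ioi s₀, 4*(s - s₀) * Real.exp (-(a*(s - s₀))^2) := by
    apply setIntegral_mono_set
      (((gaussv_int ha s₀).const_mul 4).integrableOn.congr_fun (fun s _ => by ring)
        measurableSet_Ioi)
    · filter_upwards [ae_restrict_mem measurableSet_Ioi] with s hs
      have h0 : s₀ < s := hs
      have he := Real.exp_pos (-(a*(s - s₀))^2)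
      simp only [Pi.zero_apply]
      nlinarith
    · exact HasSubset.Subset.eventuallyLE (Ioi_subset_Ioi hds)
  have h3 : ∫ s in Ioi s₀, 4*(s - s₀) * Real.exp (-(a*(s - s₀))^2)
      = ∫ v in Ioi (0:ℝ), 4*v*Real.exp (-(a*v)^2) := by
    have himg : (fun v : ℝ => v + s₀) '' Ioi (0:ℝ) = Ioi s₀ := by
      rw [image_add_const_Ioi, zero_add]
    have hderiv : ∀ v ∈ Ioi (0:ℝ), HasDerivWithinAt (fun v : ℝ => v + s₀) (1:ℝ) (Ioi 0) v :=
      fun v _ => ((hasDerivAt_id v).add_const s₀).hasDerivWithinAt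
    have hinj : InjOn (fun v : ℝ => v + s₀) (Ioi (0:ℝ)) := fun x _ y _ h => by simpa using h
    have := integral_image_eq_integral_abs_deriv_smul measurableSet_Ioi hderiv hinj
      (fun s => 4*(s - s₀) * Real.exp (-(a*(s - s₀))^2))
    rw [himg] at this
    rw [this]
    apply setIntegral_congr_fun measurableSet_Ioi
    intro v _
    simp
  have h4 : ∫ v in Ioi (0:ℝ), 4*v*Real.exp (-(a*v)^2) = 2/a^2 := by
    have h7 : ∫ v in Ioi (0:ℝ), 4*v*Real.exp (-(a*v)^2)
        = 4 * ∫ v in Ioi (0:ℝ), v * Real.exp (-(a^2) * v^2) := by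
      rw [← integral_const_mul]
      apply setIntegral_congr_fun measurableSet_Ioi
      intro v _
      simp only [mul_pow]
      ring
    rw [h7, aux_halfgauss (show (0:ℝ) < a^2 by positivity)]
    field_simp
    ring
  rw [h3, h4] at h2
  linarith
end K


lemma root4 {c x : ℝ} (hc : 0 ≤ c) (h : c^4 ≤ x) : c ≤ x ^ ((1:ℝ)/4) := by
  have h0 : (0:ℝ) ≤ c^4 := by positivity
  have h1 := Real.rpow_le_rpow h0 h (by norm_num : (0:ℝ) ≤ 1/4)
  calc c = (c^4) ^ ((1:ℝ)/4) := by
        rw [← Real.rpow_natCast c 4, ← Real.rpow_mul hc]; norm_num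
    _ ≤ x ^ ((1:ℝ)/4) := h1

set_option maxHeartbeats 2000000 in
/-- Asymptotic expansion of the Laplace-type integral
`I(T,λ) = ∫₀^T e^{-α(1/t + 1/(T-t))} e^{-λt} dt` as `λ → +∞`:
`I(T,λ) = √π (α^{1/4}/λ^{3/4}) e^{-α/T} e^{-2√(αλ)} (1 + R(T,λ)/λ^{1/4})`
with `|R(T,λ)| ≤ C_T`. -/
theorem statement5 (α T : ℝ) (hα : 0 < α) (hT : 0 < T) :
    ∃ C_T > (0 : ℝ), ∃ lam₀ > (0 : ℝ), ∀ lam ≥ lam₀, ∃ R : ℝ, |R| ≤ C_T ∧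
      (∫ t in (0:ℝ)..T, Real.exp (-α * (1 / t + 1 / (T - t))) * Real.exp (-lam * t))
        = Real.sqrt Real.pi * (α ^ ((1:ℝ)/4) / lam ^ ((3:ℝ)/4)) * Real.exp (-α / T)
            * Real.exp (-2 * Real.sqrt (α * lam)) * (1 + R / lam ^ ((1:ℝ)/4)) := by
  have hπ : 0 < Real.sqrt π := Real.sqrt_pos.mpr Real.pi_pos
  set q4 : ℝ := α ^ ((1:ℝ)/4) with hq4def
  have hq4 : 0 < q4 := Real.rpow_pos_of_pos hα _
  set C_T : ℝ := 2*α/T^2 + 4/(Real.sqrt π * q4) with hCdef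
  have hC : 0 < C_T := by positivity
  refine ⟨C_T, hC, max 1 (max ((2/T)^4) (max ((4*Real.sqrt α)^4) ((4/(Real.sqrt π * q4))^4))),
    by positivity, ?_⟩
  intro lam hlam
  have hlam1 : (1:ℝ) ≤ lam := le_trans (le_max_left _ _) hlam
  have hlampos : 0 < lam := by linarith
  have hlam2 : (2/T)^4 ≤ lam := le_trans (le_trans (le_max_left _ _) (le_max_right _ _)) hlam
  have hlam3 : (4*Real.sqrt α)^4 ≤ lam :=
    le_trans (le_trans (le_trans (le_max_left _ _) (le_max_right _ _)) (le_max_right _ _)) hlam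
  have hlam4 : (4/(Real.sqrt π * q4))^4 ≤ lam :=
    le_trans (le_trans (le_trans (le_max_right _ _) (le_max_right _ _)) (le_max_right _ _)) hlam
  -- basic quantities
  set a : ℝ := Real.sqrt lam with hadef
  set b : ℝ := Real.sqrt α with hbdef
  have ha : 0 < a := Real.sqrt_pos.mpr hlampos
  have hb : 0 < b := Real.sqrt_pos.mpr hα
  have ha2 : a^2 = lam := Real.sq_sqrt hlampos.le
  have hb2 : b^2 = α := Real.sq_sqrt hα.le
  set s₀ : ℝ := Real.sqrt (b/a) with hs₀def
  have hs₀ : 0 < s₀ := Real.sqrt_pos.mpr (div_pos hb ha)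
  have hs₀2 : s₀^2 = b/a := Real.sq_sqrt (div_pos hb ha).le
  have hc : a * s₀^2 = b := by rw [hs₀2]; field_simp
  set p4 : ℝ := lam ^ ((1:ℝ)/4) with hp4def
  have hp4 : 0 < p4 := Real.rpow_pos_of_pos hlampos _
  have hp4sq : p4^2 = a := by
    rw [hadef, Real.sqrt_eq_rpow, hp4def, ← Real.rpow_natCast (lam ^ ((1:ℝ)/4)) 2,
      ← Real.rpow_mul hlampos.le]
    norm_num
  have hp4four : p4^4 = lam := by
    rw [hp4def, ← Real.rpow_natCast (lam ^ ((1:ℝ)/4)) 4, ← Real.rpow_mul hlampos.le]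
    norm_num
  have hq4sq : q4^2 = b := by
    rw [hbdef, Real.sqrt_eq_rpow, hq4def, ← Real.rpow_natCast (α ^ ((1:ℝ)/4)) 2,
      ← Real.rpow_mul hα.le]
    norm_num
  have hs₀q : s₀ = q4 / p4 := by
    rw [hs₀def, show b/a = q4^2/p4^2 by rw [hq4sq, hp4sq], ← div_pow,
      Real.sqrt_sq (by positivity)]
  have hp4cube : lam ^ ((3:ℝ)/4) = p4^3 := by
    rw [hp4def, ← Real.rpow_natCast (lam ^ ((1:ℝ)/4)) 3, ← Real.rpow_mul hlampos.le]
    norm_num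
  have hM3 : s₀ / a = q4 / lam ^ ((3:ℝ)/4) := by
    rw [hs₀q, hp4cube, ← hp4sq, div_div]
    congr 1
    ring
  -- cutoffs
  set δ : ℝ := 1/p4 with hδdef
  have hδpos : 0 < δ := by positivity
  set δ' : ℝ := Real.sqrt δ with hδ'def
  have hδ'pos : 0 < δ' := Real.sqrt_pos.mpr hδpos
  have hδ'2 : δ'^2 = δ := Real.sq_sqrt hδpos.le
  have hδT : δ ≤ T/2 := by
    have h1 : 2/T ≤ p4 := root4 (by positivity) hlam2
    rw [hδdef, div_le_div_iff₀ hp4 (by norm_num : (0:ℝ) < 2)]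
    calc (1:ℝ)*2 = 2 := by ring
      _ ≤ (2/T)*T := by field_simp; exact le_rfl
      _ ≤ p4*T := mul_le_mul_of_nonneg_right h1 hT.le
      _ = T*p4 := by ring
  have hδT' : δ < T := by linarith
  have h2s₀ : 2*s₀ ≤ δ' := by
    have h1 : 4*b ≤ p4 := by
      rw [hbdef]; exact root4 (by positivity) hlam3
    have h3 : 4*b*p4 ≤ a := by
      calc 4*b*p4 ≤ p4*p4 := mul_le_mul_of_nonneg_right h1 hp4.le
        _ = a := by rw [← hp4sq]; ring
    have h2 : (2*s₀)^2 ≤ δ'^2 := by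
      rw [hδ'2, hδdef]
      have hrw : (2*s₀)^2 = (4*b)/a := by
        rw [mul_pow, hs₀2]; ring
      rw [hrw, div_le_div_iff₀ ha hp4]
      calc 4*b*p4 ≤ a := h3
        _ = 1*a := by ring
    calc 2*s₀ = Real.sqrt ((2*s₀)^2) := (Real.sqrt_sq (by positivity)).symm
      _ ≤ Real.sqrt (δ'^2) := Real.sqrt_le_sqrt h2
      _ = δ' := Real.sqrt_sq hδ'pos.le
  set M : ℝ := Real.sqrt π * s₀ / a with hMdef
  have hM : 0 < M := by positivity
  have hMδ : δ * M = Real.sqrt π * q4 / lam := by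
    rw [hMdef, hs₀q, ← hp4sq, hδdef, ← hp4four]
    field_simp
  have hM4 : 4/lam ≤ M := by
    have h1 : 4/(Real.sqrt π * q4) ≤ p4 := root4 (by positivity) hlam4
    have h2 : 4 ≤ Real.sqrt π * q4 * p4 := by
      rw [div_le_iff₀ (by positivity)] at h1
      linarith
    rw [div_le_iff₀ hlampos, hMdef, hs₀q, ← hp4sq, ← hp4four]
    calc (4:ℝ) ≤ Real.sqrt π * q4 * p4 := h2
      _ = Real.sqrt π * (q4/p4) / p4^2 * p4^4 := by field_simp
      _ = Real.sqrt π * (q4 / p4) / p4 ^ 2 * p4 ^ 4 := by ring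
  -- functions
  set F : ℝ → ℝ := fun s => Real.exp (-(a*s - (a*s₀^2)/s)^2) with hFdef
  set G : ℝ → ℝ := fun s => Real.exp (-α/(T - s^2)) with hGdef
  have hGmeas : Measurable G := by
    apply Real.measurable_exp.comp
    exact measurable_const.div (measurable_const.sub (measurable_id.pow_const 2))
  have hrT : 0 < Real.sqrt T := Real.sqrt_pos.mpr hT
  have hrT2 : (Real.sqrt T)^2 = T := Real.sq_sqrt hT.le
  -- substitution t = s^2
  have himgsq : (fun s : ℝ => s^2) '' Ioc 0 (Real.sqrt T) = Ioc 0 T := by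
    ext y; constructor
    · rintro ⟨s, ⟨hs1, hs2⟩, rfl⟩
      refine ⟨by positivity, ?_⟩
      calc s^2 ≤ (Real.sqrt T)^2 := pow_le_pow_left₀ hs1.le hs2 2
        _ = T := hrT2
    · rintro ⟨hy1, hy2⟩
      exact ⟨Real.sqrt y, ⟨Real.sqrt_pos.mpr hy1, Real.sqrt_le_sqrt hy2⟩, Real.sq_sqrt hy1.le⟩
  have hsqderiv : ∀ s ∈ Ioc (0:ℝ) (Real.sqrt T),
      HasDerivWithinAt (fun s : ℝ => s^2) (2*s) (Ioc 0 (Real.sqrt T)) s := by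
    intro s _
    have h := hasDerivAt_pow 2 s
    have h2 : ((2:ℕ):ℝ) * s ^ (2-1) = 2*s := by norm_num
    rw [h2] at h
    exact h.hasDerivWithinAt
  have hsqinj : InjOn (fun s : ℝ => s^2) (Ioc (0:ℝ) (Real.sqrt T)) := by
    intro x hx y hy h
    simp only at h
    calc x = Real.sqrt (x^2) := (Real.sqrt_sq hx.1.le).symm
      _ = Real.sqrt (y^2) := by rw [h]
      _ = y := Real.sqrt_sq hy.1.le
  have hsub := integral_image_eq_integral_abs_deriv_smul measurableSet_Ioc hsqderiv hsqinj
      (fun t => Real.exp (-α * (1 / t + 1 / (T - t))) * Real.exp (-lam * t))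
  rw [himgsq] at hsub
  set J : ℝ := ∫ s in Ioo (0:ℝ) (Real.sqrt T), 2*s*(F s * G s) with hJdef
  have hJeq : (∫ t in (0:ℝ)..T, Real.exp (-α * (1 / t + 1 / (T - t))) * Real.exp (-lam * t))
      = Real.exp (-(2*(b*a))) * J := by
    rw [intervalIntegral.integral_of_le hT.le, hsub, integral_Ioc_eq_integral_Ioo, hJdef,
      ← integral_const_mul]
    apply setIntegral_congr_fun measurableSet_Ioo
    intro s hs
    obtain ⟨hs1, hs2⟩ := hs
    have hs0 : s ≠ 0 := ne_of_gt hs1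
    have hTs : 0 < T - s^2 := by
      have h := pow_lt_pow_left₀ hs2 hs1.le (by norm_num : 2 ≠ 0)
      rw [hrT2] at h
      linarith
    have hbs : (a*s₀^2)/s = b/s := by rw [hc]
    have e1 : (a*s - b/s)^2 = lam*s^2 - 2*(b*a) + α/s^2 := by
      have e0 : (a*s - b/s)^2 = a^2*s^2 - 2*(a*b) + b^2/s^2 := by
        field_simp; ring
      rw [e0, ha2, hb2]; ring
    have hexp : Real.exp (-α * (1/s^2 + 1/(T - s^2))) * Real.exp (-lam * s^2)
        = Real.exp (-(2*(b*a))) * (F s * G s) := by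
      rw [hFdef, hGdef]
      simp only [hbs]
      rw [← Real.exp_add, ← Real.exp_add, ← Real.exp_add]
      congr 1
      rw [e1]
      field_simp
      ring
    show |2*s| • (Real.exp (-α * (1/s^2 + 1/(T - s^2))) * Real.exp (-lam * s^2))
        = Real.exp (-(2*(b*a))) * (2*s*(F s * G s))
    rw [smul_eq_mul, abs_of_pos (by positivity : (0:ℝ) < 2*s), hexp]
    ring
  -- bounds on J
  set G0 : ℝ := Real.exp (-α/T) with hG0def
  have hG0 : 0 < G0 := Real.exp_pos _
  set K : ℝ := ∫ s in Ioi (0:ℝ), 2*s*F s with hKdef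
  have hKM : |K - M| ≤ 2/lam := by
    have h := K_est ha hs₀
    rw [← ha2]
    exact h
  have hFGmeas : Measurable (fun s : ℝ => 2*s*(F s * G s)) :=
    (measurable_id.const_mul 2).mul ((Fmeas a (a*s₀^2)).mul hGmeas)
  have hFpos : ∀ s, 0 < F s := fun s => Real.exp_pos _
  have hGpos : ∀ s, 0 < G s := fun s => Real.exp_pos _
  have hGle : ∀ s ∈ Ioo (0:ℝ) (Real.sqrt T), G s ≤ G0 := by
    intro s hs
    obtain ⟨hs1, hs2⟩ := hs
    have hTs : 0 < T - s^2 := by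
      have h := pow_lt_pow_left₀ hs2 hs1.le (by norm_num : 2 ≠ 0)
      rw [hrT2] at h
      linarith
    apply Real.exp_le_exp.mpr
    rw [neg_div, neg_div, neg_le_neg_iff]
    gcongr
    all_goals first
      | positivity
      | linarith [sq_nonneg s, pow_pos hs1 2]
  have hJint : IntegrableOn (fun s : ℝ => 2*s*(F s * G s)) (Ioo 0 (Real.sqrt T)) := by
    apply Integrable.mono' ((K_int ha hs₀).mono_set Ioo_subset_Ioi_self)
      hFGmeas.aestronglyMeasurable.restrict
    filter_upwards [ae_restrict_mem measurableSet_Ioo] with s hs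
    have hs1 : 0 < s := hs.1
    have hTs : 0 < T - s^2 := by
      obtain ⟨hsa, hs2⟩ := hs
      have h := pow_lt_pow_left₀ hs2 hsa.le (by norm_num : 2 ≠ 0)
      rw [hrT2] at h
      linarith
    have hG1 : G s ≤ 1 := by
      apply Real.exp_le_one_iff.mpr
      rw [neg_div]
      simp only [neg_nonpos]
      positivity
    rw [Real.norm_eq_abs, abs_of_nonneg (by positivity)]
    calc 2*s*(F s * G s) ≤ 2*s*(F s * 1) := by
          apply mul_le_mul_of_nonneg_left _ (by positivity)
          exact mul_le_mul_of_nonneg_left hG1 (hFpos s).le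
      _ = 2*s*F s := by ring
  have hIoo2sF : IntegrableOn (fun s : ℝ => 2*s*F s) (Ioo 0 (Real.sqrt T)) :=
    (K_int ha hs₀).mono_set Ioo_subset_Ioi_self
  have hup : J ≤ G0 * K := by
    have step1 : J ≤ ∫ s in Ioo (0:ℝ) (Real.sqrt T), G0 * (2*s*F s) := by
      apply setIntegral_mono_on hJint (hIoo2sF.const_mul G0) measurableSet_Ioo
      intro s hs
      have hs1 : 0 < s := hs.1
      calc 2*s*(F s * G s) ≤ 2*s*(F s * G0) := by
            apply mul_le_mul_of_nonneg_left _ (by positivity)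
            exact mul_le_mul_of_nonneg_left (hGle s hs) (hFpos s).le
        _ = G0 * (2*s*F s) := by ring
    have step2 : ∫ s in Ioo (0:ℝ) (Real.sqrt T), G0 * (2*s*F s) ≤ G0 * K := by
      rw [integral_const_mul]
      apply mul_le_mul_of_nonneg_left _ hG0.le
      apply setIntegral_mono_set (K_int ha hs₀)
      · filter_upwards [ae_restrict_mem measurableSet_Ioi] with s hs
        have : (0:ℝ) < s := hs
        simp only [Pi.zero_apply]
        positivity
      · exact HasSubset.Subset.eventuallyLE Ioo_subset_Ioi_self
    linarith
  -- lower bound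
  have hδ'T : δ' ≤ Real.sqrt T := by
    rw [hδ'def]
    apply Real.sqrt_le_sqrt
    linarith
  have hTδ : 0 < T - δ := by linarith
  set Gδ : ℝ := Real.exp (-α/(T - δ)) with hGδdef
  have hGδpos : 0 < Gδ := Real.exp_pos _
  have hsplitK : K = (∫ s in Ioo (0:ℝ) δ', 2*s*F s) + ∫ s in Ici δ', 2*s*F s := by
    rw [hKdef, ← Ioo_union_Ici_eq_Ioi hδ'pos]
    apply setIntegral_union _ measurableSet_Ici
      ((K_int ha hs₀).mono_set (fun x hx => hx.1))
      ((K_int ha hs₀).mono_set (fun x hx => lt_of_lt_of_le hδ'pos hx))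
    rw [Set.disjoint_left]
    rintro z ⟨_, h2⟩ h3
    exact absurd h3 (not_le.mpr h2)
  have htail : ∫ s in Ici δ', 2*s*F s ≤ 2/lam := by
    rw [integral_Ici_eq_integral_Ioi, ← ha2]
    exact K_tail ha hs₀ h2s₀
  have hlow : Gδ * (K - 2/lam) ≤ J := by
    have step0 : ∫ s in Ioo (0:ℝ) δ', Gδ * (2*s*F s) ≤ ∫ s in Ioo (0:ℝ) δ', 2*s*(F s * G s) := by
      apply setIntegral_mono_on
        (((K_int ha hs₀).mono_set (fun x hx => hx.1)).const_mul Gδ)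
        (hJint.mono_set (fun x hx => ⟨hx.1, lt_of_lt_of_le hx.2 hδ'T⟩))
        measurableSet_Ioo
      intro s hs
      obtain ⟨hs1, hs2⟩ := hs
      have hsδ : s^2 ≤ δ := by
        rw [← hδ'2]
        exact pow_le_pow_left₀ hs1.le hs2.le 2
      have hGδle : Gδ ≤ G s := by
        apply Real.exp_le_exp.mpr
        rw [neg_div, neg_div, neg_le_neg_iff]
        gcongr
        all_goals first
          | positivity
          | linarith
      calc Gδ * (2*s*F s) = 2*s*(F s * Gδ) := by ring
        _ ≤ 2*s*(F s * G s) := by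
            apply mul_le_mul_of_nonneg_left _ (by positivity)
            exact mul_le_mul_of_nonneg_left hGδle (hFpos s).le
    have step1 : ∫ s in Ioo (0:ℝ) δ', 2*s*(F s * G s) ≤ J := by
      rw [hJdef]
      apply setIntegral_mono_set hJint
      · filter_upwards [ae_restrict_mem measurableSet_Ioo] with s hs
        have hs1 : 0 < s := hs.1
        simp only [Pi.zero_apply]
        positivity
      · exact HasSubset.Subset.eventuallyLE (fun x hx => ⟨hx.1, lt_of_lt_of_le hx.2 hδ'T⟩)
    have step2 : Gδ * (K - 2/lam) ≤ ∫ s in Ioo (0:ℝ) δ', Gδ * (2*s*F s) := by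
      rw [integral_const_mul]
      apply mul_le_mul_of_nonneg_left _ hGδpos.le
      have : (∫ s in Ioo (0:ℝ) δ', 2*s*F s) = K - ∫ s in Ici δ', 2*s*F s := by
        rw [hsplitK]; ring
      rw [this]
      linarith
    linarith
  -- numeric estimates
  set x : ℝ := 2*α*δ/T^2 with hxdef
  have hx0 : 0 ≤ x := by positivity
  have hGδlow : G0 * (1 - x) ≤ Gδ := by
    have h1 : Gδ = G0 * Real.exp (α/T - α/(T - δ)) := by
      rw [hG0def, hGδdef, ← Real.exp_add]
      congr 1
      ring
    have h2 : α/T - α/(T - δ) = -(α*δ/(T*(T - δ))) := by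
      field_simp
      ring
    have h3 : α*δ/(T*(T - δ)) ≤ x := by
      rw [hxdef]
      rw [div_le_div_iff₀ (by positivity) (by positivity)]
      have h6 : 0 ≤ T*(T - 2*δ) := mul_nonneg hT.le (by linarith)
      have e6 : 2*(T*(T - δ)) - T^2 = T*(T - 2*δ) := by ring
      have h7 : T^2 ≤ 2*(T*(T - δ)) := by linarith
      calc α*δ*T^2 ≤ α*δ*(2*(T*(T - δ))) := by
            apply mul_le_mul_of_nonneg_left h7 (by positivity)
        _ = 2*α*δ*(T*(T - δ)) := by ring
    have h4 : 1 - x ≤ Real.exp (α/T - α/(T - δ)) := by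
      have h5 := Real.add_one_le_exp (α/T - α/(T - δ))
      rw [h2] at h5 ⊢
      linarith
    calc G0 * (1 - x) ≤ G0 * Real.exp (α/T - α/(T - δ)) :=
          mul_le_mul_of_nonneg_left h4 hG0.le
      _ = Gδ := h1.symm
  have hJlow : G0*M - G0*(x*M + 4/lam) ≤ J := by
    have h1 : M - 4/lam ≤ K - 2/lam := by
      have h := abs_le.mp hKM
      have h24 : (4:ℝ)/lam = 2/lam + 2/lam := by ring
      linarith [h.1]
    have h2 : (0:ℝ) ≤ M - 4/lam := by linarith [hM4]
    have h3 : Gδ * (M - 4/lam) ≤ Gδ * (K - 2/lam) :=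
      mul_le_mul_of_nonneg_left h1 hGδpos.le
    have h4 : G0 * (1 - x) * (M - 4/lam) ≤ Gδ * (M - 4/lam) :=
      mul_le_mul_of_nonneg_right hGδlow h2
    have h5 : G0*M - G0*(x*M + 4/lam) ≤ G0 * (1 - x) * (M - 4/lam) := by
      have hxy : 0 ≤ G0 * (x * (4/lam)) := by positivity
      have e5 : G0 * (1 - x) * (M - 4/lam) - (G0*M - G0*(x*M + 4/lam))
          = G0 * (x * (4/lam)) := by ring
      linarith
    linarith
  have hJup : J ≤ G0*M + G0*(x*M + 4/lam) := by
    have h1 : K ≤ M + 2/lam := by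
      have h := abs_le.mp hKM
      linarith [h.2]
    have h2 : G0 * K ≤ G0 * (M + 2/lam) := mul_le_mul_of_nonneg_left h1 hG0.le
    have h5 : (2:ℝ)/lam ≤ 4/lam := (div_le_div_iff_of_pos_right hlampos).mpr (by norm_num)
    have h6 : G0*(2/lam) ≤ G0*(x*M + 4/lam) := by
      apply mul_le_mul_of_nonneg_left _ hG0.le
      have : 0 ≤ x*M := by positivity
      linarith
    have h7 : G0 * (M + 2/lam) = G0*M + G0*(2/lam) := by ring
    linarith
  have hcomb : x*M + 4/lam = C_T*(δ*M) := by
    have h8 : (4/(Real.sqrt π * q4)) * (δ*M) = 4/lam := by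
      rw [hMδ]
      field_simp
    rw [hCdef, hxdef,
      show (2*α/T^2 + 4/(Real.sqrt π * q4))*(δ*M)
        = (2*α*δ/T^2)*M + (4/(Real.sqrt π * q4))*(δ*M) by ring, h8]
  have hdiff : |J - G0*M| ≤ G0*(C_T*(δ*M)) := by
    rw [hcomb] at hJlow hJup
    rw [abs_le]
    constructor <;> linarith
  have hGM : (0:ℝ) < G0*M := by positivity
  refine ⟨(J/(G0*M) - 1)*p4, ?_, ?_⟩
  · have h0 : J/(G0*M) - 1 = (J - G0*M)/(G0*M) := by field_simp
    rw [abs_mul, h0, abs_div, abs_of_pos hGM, abs_of_pos hp4]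
    rw [div_mul_eq_mul_div, div_le_iff₀ hGM]
    calc |J - G0*M| * p4 ≤ (G0*(C_T*(δ*M))) * p4 :=
          mul_le_mul_of_nonneg_right hdiff hp4.le
      _ = C_T*(G0*M) := by
          rw [hδdef]
          field_simp
  · rw [hJeq]
    have hMval : Real.sqrt π * (q4 / lam ^ ((3:ℝ)/4)) = M := by
      rw [← hM3, hMdef, mul_div_assoc]
    have hab : Real.sqrt (α*lam) = b*a := by
      rw [Real.sqrt_mul hα.le]
    rw [hMval, hab, show (-2 : ℝ) * (b*a) = -(2*(b*a)) by ring]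
    rw [mul_div_assoc, div_self hp4.ne', mul_one,
      show (1:ℝ) + (J/(G0*M) - 1) = J/(G0*M) by ring]
    field_simp
end

section
/- Fix α > 0 and T > 0, and set I(T,λ) = ∫₀^T exp(−α(1/t + 1/(T−t))) e^{−λ t} dt. Then there exists C > 1 such that for all λ ≥ 0: C^{-1} · e^{−2√(αλ)} / (1+λ)^{3/4} ≤ I(T,λ) ≤ C · e^{−2√(αλ)} / (1+λ)^{3/4}. -/
open MeasureTheory Set
open scoped Real

lemma s6_cube_le_exp {x : ℝ} (hx : 0 ≤ x) : x^3 ≤ 27 * Real.exp x := by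
  have h := Real.add_one_le_exp (x/3)
  have h2 : (x/3+1)^3 ≤ (Real.exp (x/3))^3 :=
    pow_le_pow_left₀ (by positivity) h 3
  have h3 : (Real.exp (x/3))^3 = Real.exp x := by
    rw [← Real.exp_nat_mul]; congr 1; push_cast; ring
  nlinarith [sq_nonneg x, sq_nonneg (x/3+1)]

lemma s6_exponent_id (α lam t : ℝ) (hα : 0 < α) (hlam : 0 < lam) (ht : 0 < t) :
    α / t + lam * t = 2 * Real.sqrt (α * lam)
      + lam * (t - Real.sqrt α / Real.sqrt lam)^2 / t := by
  have ha : Real.sqrt α ^ 2 = α := Real.sq_sqrt hα.le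
  have hl : Real.sqrt lam ^ 2 = lam := Real.sq_sqrt hlam.le
  have hm : Real.sqrt (α * lam) = Real.sqrt α * Real.sqrt lam := Real.sqrt_mul hα.le lam
  have hlp : 0 < Real.sqrt lam := Real.sqrt_pos.2 hlam
  rw [hm]
  field_simp
  linear_combination -lam*ha + (α - 2*t*Real.sqrt lam*Real.sqrt α)*hl

/-- pointwise bound for the small-lambda lower estimate -/
lemma s6_ptw_small (α T lam lam0 t : ℝ) (hα : 0 < α) (hT : 0 < T)
    (hlam : 0 ≤ lam) (hll : lam ≤ lam0) (h1 : T/4 < t) (h2 : t ≤ 3*T/4) :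
    Real.exp (-(8*α/T) - lam0*T)
      ≤ Real.exp (-α * (1 / t + 1 / (T - t))) * Real.exp (-lam * t) := by
  have htpos : 0 < t := by linarith
  have hTt : 0 < T - t := by linarith
  rw [← Real.exp_add]
  apply Real.exp_le_exp.2
  have e1 : 1/t ≤ 4/T := by rw [div_le_div_iff₀ htpos hT]; linarith
  have e2 : 1/(T-t) ≤ 4/T := by rw [div_le_div_iff₀ hTt hT]; linarith
  have e3 : lam * t ≤ lam0 * T :=
    mul_le_mul hll (by linarith) htpos.le (by linarith)
  have e4 : α * (1/t + 1/(T-t)) ≤ α * (4/T + 4/T) :=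
    mul_le_mul_of_nonneg_left (by linarith) hα.le
  have e5 : α * (4/T + 4/T) = 8*α/T := by ring
  linarith

/-- pointwise Gaussian bound near the saddle, for the upper estimate -/
lemma s6_ptw_upper1 (α T lam t : ℝ) (hα : 0 < α) (hT : 0 < T) (hlam : 0 < lam)
    (ht : 0 < t) (ht2 : t ≤ 2*(Real.sqrt α / Real.sqrt lam)) (htT : t ≤ T) :
    Real.exp (-α * (1 / t + 1 / (T - t))) * Real.exp (-lam * t)
      ≤ Real.exp (-2 * Real.sqrt (α * lam)) *
        Real.exp (-(lam / (2*(Real.sqrt α / Real.sqrt lam)))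
          * (t - Real.sqrt α / Real.sqrt lam)^2) := by
  set t0 := Real.sqrt α / Real.sqrt lam with ht0
  have ht0p : 0 < t0 := by
    rw [ht0]; positivity
  have hTt : 0 ≤ 1/(T-t) := by
    rcases eq_or_lt_of_le htT with h | h
    · simp [h]
    · exact one_div_nonneg.2 (by linarith)
  rw [← Real.exp_add, ← Real.exp_add]
  apply Real.exp_le_exp.2
  have hid := s6_exponent_id α lam t hα hlam ht
  rw [← ht0] at hid
  have e1 : lam*(t-t0)^2/(2*t0) ≤ lam*(t-t0)^2/t :=
    div_le_div₀ (by positivity) le_rfl ht ht2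
  have e2 : 0 ≤ α * (1/(T-t)) := mul_nonneg hα.le hTt
  have e3 : -(lam/(2*t0)) * (t - t0)^2 = -(lam*(t-t0)^2/(2*t0)) := by ring
  have e4 : α * (1/t) = α/t := by ring
  linarith

/-- pointwise tail bound for the upper estimate -/
lemma s6_ptw_upper2 (α T lam t : ℝ) (hα : 0 < α) (hT : 0 < T) (hlam : 0 < lam)
    (ht2 : 2*(Real.sqrt α / Real.sqrt lam) < t) (htT : t ≤ T) :
    Real.exp (-α * (1 / t + 1 / (T - t))) * Real.exp (-lam * t)
      ≤ Real.exp (-2 * Real.sqrt (α * lam)) * Real.exp (-(Real.sqrt (α*lam)/2)) := by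
  set t0 := Real.sqrt α / Real.sqrt lam with ht0
  have ht0p : 0 < t0 := by rw [ht0]; positivity
  have htpos : 0 < t := by linarith
  have hTt : 0 ≤ 1/(T-t) := by
    rcases eq_or_lt_of_le htT with h | h
    · simp [h]
    · exact one_div_nonneg.2 (by linarith)
  rw [← Real.exp_add, ← Real.exp_add]
  apply Real.exp_le_exp.2
  have hid := s6_exponent_id α lam t hα hlam htpos
  rw [← ht0] at hid
  have hlamt0 : lam * t0 = Real.sqrt (α*lam) := by
    have hl : Real.sqrt lam ^ 2 = lam := Real.sq_sqrt hlam.le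
    have hlp : 0 < Real.sqrt lam := Real.sqrt_pos.2 hlam
    rw [ht0, Real.sqrt_mul hα.le lam]
    field_simp
    linear_combination -hl
  have ht2' : t0 ≤ t/2 := by linarith
  have h3 : (t/2)^2 ≤ (t-t0)^2 := pow_le_pow_left₀ (by linarith) (by linarith) 2
  have h4 : lam*t/4 ≤ lam*(t-t0)^2/t := by
    have e : lam*t/4 = lam*(t/2)^2/t := by field_simp; ring
    rw [e]
    apply div_le_div₀ (by positivity) _ htpos le_rfl
    exact mul_le_mul_of_nonneg_left h3 hlam.le
  have h5 : Real.sqrt (α*lam)/2 ≤ lam*t/4 := by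
    have e : lam * (2*t0) ≤ lam * t := mul_le_mul_of_nonneg_left (by linarith) hlam.le
    nlinarith [hlamt0]
  have e2 : 0 ≤ α * (1/(T-t)) := mul_nonneg hα.le hTt
  have e4 : α * (1/t) = α/t := by ring
  linarith

/-- pointwise bound for the large-lambda lower estimate -/
lemma s6_ptw_lower (α T lam t δ : ℝ) (hα : 0 < α) (hT : 0 < T) (hlam : 0 < lam)
    (hδ : 0 < δ) (hδ1 : lam * δ^2 / (Real.sqrt α / Real.sqrt lam) ≤ 1)
    (ht1 : Real.sqrt α / Real.sqrt lam < t) (ht2 : t ≤ Real.sqrt α / Real.sqrt lam + δ)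
    (htT2 : Real.sqrt α / Real.sqrt lam + δ ≤ T/2) :
    Real.exp (-2 * Real.sqrt (α * lam)) * Real.exp (-1 - 2*α/T)
      ≤ Real.exp (-α * (1 / t + 1 / (T - t))) * Real.exp (-lam * t) := by
  set t0 := Real.sqrt α / Real.sqrt lam with ht0
  have ht0p : 0 < t0 := by rw [ht0]; positivity
  have htpos : 0 < t := by linarith
  have htT2' : t ≤ T/2 := by linarith
  have hTt : 0 < T - t := by linarith
  rw [← Real.exp_add, ← Real.exp_add]
  apply Real.exp_le_exp.2
  have hid := s6_exponent_id α lam t hα hlam htpos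
  rw [← ht0] at hid
  have e1 : lam * (t - t0)^2 / t ≤ lam * δ^2 / t0 := by
    apply div_le_div₀ (by positivity) _ ht0p ht1.le
    have h : (t - t0)^2 ≤ δ^2 := pow_le_pow_left₀ (by linarith) (by linarith) 2
    exact mul_le_mul_of_nonneg_left h hlam.le
  have e2 : α / (T - t) ≤ 2*α/T := by
    rw [div_le_div_iff₀ hTt hT]
    nlinarith
  have e3 : α * (1/t) = α / t := by ring
  have e4 : α * (1/(T-t)) = α / (T-t) := by ring
  linarith

set_option maxHeartbeats 1000000 in
/-- Two-sided comparison for the Laplace-type integral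
`I(T,λ) = ∫₀^T e^{-α(1/t + 1/(T-t))} e^{-λt} dt`:
there is `C > 1` with
`C⁻¹ e^{-2√(αλ)}/(1+λ)^{3/4} ≤ I(T,λ) ≤ C e^{-2√(αλ)}/(1+λ)^{3/4}` for all `λ ≥ 0`. -/
theorem statement6 (α T : ℝ) (hα : 0 < α) (hT : 0 < T) :
    ∃ C : ℝ, 1 < C ∧ ∀ lam ≥ (0 : ℝ),
      C⁻¹ * (Real.exp (-2 * Real.sqrt (α * lam)) / (1 + lam) ^ ((3:ℝ)/4))
          ≤ (∫ t in (0:ℝ)..T, Real.exp (-α * (1 / t + 1 / (T - t))) * Real.exp (-lam * t)) ∧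
      (∫ t in (0:ℝ)..T, Real.exp (-α * (1 / t + 1 / (T - t))) * Real.exp (-lam * t))
          ≤ C * (Real.exp (-2 * Real.sqrt (α * lam)) / (1 + lam) ^ ((3:ℝ)/4)) := by
  have hsa_pos : 0 < Real.sqrt α := Real.sqrt_pos.2 hα
  set sa := Real.sqrt α with hsa
  set lam0 : ℝ := max 1 (max (1/α) (16*α/T^2)) with hlam0def
  have hlam0_1 : (1:ℝ) ≤ lam0 := le_max_left _ _
  have hlam0_pos : (0:ℝ) < lam0 := lt_of_lt_of_le one_pos hlam0_1
  set c1 : ℝ := T/2 * Real.exp (-(8*α/T) - lam0*T) with hc1def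
  have hc1_pos : 0 < c1 := by positivity
  set c2 : ℝ := Real.sqrt sa * Real.exp (-1 - 2*α/T) with hc2def
  have hc2_pos : 0 < c2 := by positivity
  set m : ℝ := Real.exp (-2 * Real.sqrt (α*lam0)) / (1+lam0)^((3:ℝ)/4) with hmdef
  have hm_pos : 0 < m := by positivity
  set K1 : ℝ := Real.sqrt (2*π*sa) with hK1def
  have hK1_pos : 0 < K1 := Real.sqrt_pos.2 (by positivity)
  set K2 : ℝ := 216*T/(α*sa) with hK2def
  have hK2_pos : 0 < K2 := by positivity
  set K : ℝ := K1 + K2 with hKdef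
  have hK_pos : 0 < K := by positivity
  set C : ℝ := 1 + (1/c1 + 1/c2 + T/m + 2*K) with hCdef
  have hC1 : 1 < C := by
    have h : 0 < 1/c1 + 1/c2 + T/m + 2*K := by positivity
    rw [hCdef]; linarith only [h]
  have hC_pos : 0 < C := lt_trans one_pos hC1
  have hCinv_c1 : C⁻¹ ≤ c1 := by
    have h : 1/c1 ≤ C := by
      have h1 : 0 < 1/c2 + T/m + 2*K := by positivity
      rw [hCdef]; linarith only [h1]
    calc C⁻¹ ≤ (1/c1)⁻¹ := inv_anti₀ (by positivity) h
      _ = c1 := by simp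
  have hCinv_c2 : C⁻¹ ≤ c2 := by
    have h : 1/c2 ≤ C := by
      have h1 : 0 < 1/c1 + T/m + 2*K := by positivity
      rw [hCdef]; linarith only [h1]
    calc C⁻¹ ≤ (1/c2)⁻¹ := inv_anti₀ (by positivity) h
      _ = c2 := by simp
  have hC_Tm : T/m ≤ C := by
    have h1 : 0 < 1/c1 + 1/c2 + 2*K := by positivity
    rw [hCdef]; linarith only [h1]
  have hC_K : 2*K ≤ C := by
    have h1 : 0 < 1/c1 + 1/c2 + T/m := by positivity
    rw [hCdef]; linarith only [h1]
  refine ⟨C, hC1, ?_⟩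
  intro lam hlam
  rw [intervalIntegral.integral_of_le hT.le]
  set g : ℝ → ℝ := fun t => Real.exp (-α * (1 / t + 1 / (T - t))) * Real.exp (-lam * t)
    with hgdef
  have hgeq : ∀ t : ℝ, g t = Real.exp (-α * (1 / t + 1 / (T - t))) * Real.exp (-lam * t) :=
    fun t => rfl
  set E : ℝ := Real.exp (-2 * Real.sqrt (α * lam)) with hEdef
  set P : ℝ := (1 + lam) ^ ((3:ℝ)/4) with hPdef
  have hE_pos : 0 < E := Real.exp_pos _
  have hP_pos : 0 < P := by positivity
  have hP1 : 1 ≤ P := by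
    rw [hPdef]
    calc (1:ℝ) = (1+lam) ^ (0:ℝ) := by rw [Real.rpow_zero]
      _ ≤ (1+lam) ^ ((3:ℝ)/4) :=
        Real.rpow_le_rpow_of_exponent_le (by linarith only [hlam]) (by norm_num)
  have hE1 : E ≤ 1 := by
    rw [hEdef, Real.exp_le_one_iff]
    have h := Real.sqrt_nonneg (α*lam)
    linarith only [h]
  have hgpos : ∀ t, 0 < g t := fun t => by
    rw [hgeq t]; positivity
  have hgmeas : Measurable g := by
    have h1 : Measurable fun t : ℝ => -α * (1/t + 1/(T-t)) :=
      measurable_const.mul ((measurable_const.div measurable_id).add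
        (measurable_const.div (measurable_const.sub measurable_id)))
    have h2 : Measurable fun t : ℝ => -lam * t := measurable_const.mul measurable_id
    exact h1.exp.mul h2.exp
  have hgle1 : ∀ t ∈ Ioc (0:ℝ) T, g t ≤ 1 := by
    intro t ht
    rw [hgeq t]
    have h1 : 0 ≤ 1/t := one_div_nonneg.2 ht.1.le
    have h2 : 0 ≤ 1/(T - t) := one_div_nonneg.2 (by linarith only [ht.2])
    have e1 : Real.exp (-α * (1/t + 1/(T-t))) ≤ 1 := by
      rw [Real.exp_le_one_iff]
      have h3 := mul_nonneg hα.le (add_nonneg h1 h2)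
      linarith only [h3]
    have e2 : Real.exp (-lam * t) ≤ 1 := by
      rw [Real.exp_le_one_iff]
      have h3 := mul_nonneg hlam ht.1.le
      linarith only [h3]
    exact mul_le_one₀ e1 (Real.exp_pos _).le e2
  have hgint : IntegrableOn g (Ioc 0 T) := by
    apply Measure.integrableOn_of_bounded (M := 1) measure_Ioc_lt_top.ne
      hgmeas.aestronglyMeasurable
    filter_upwards [ae_restrict_mem measurableSet_Ioc] with t ht
    rw [Real.norm_eq_abs, abs_of_pos (hgpos t)]
    exact hgle1 t ht
  rcases le_or_gt lam lam0 with hcase | hcase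
  · -- SMALL LAMBDA
    constructor
    · -- lower bound
      have hsub : Ioc (T/4) (3*T/4) ⊆ Ioc (0:ℝ) T := by
        apply Ioc_subset_Ioc <;> linarith only [hT]
      have hlb : ∀ t ∈ Ioc (T/4) (3*T/4), Real.exp (-(8*α/T) - lam0*T) ≤ g t := by
        intro t ht
        rw [hgeq t]
        exact s6_ptw_small α T lam lam0 t hα hT hlam hcase ht.1 ht.2
      have h1 : Real.exp (-(8*α/T) - lam0*T) * (T/2) ≤ ∫ t in Ioc (T/4) (3*T/4), g t := by
        have h := setIntegral_ge_of_const_le (μ := volume) measurableSet_Ioc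
          measure_Ioc_lt_top.ne hlb (hgint.mono_set hsub)
        have hvol : (volume (Ioc (T/4) (3*T/4))).toReal = T/2 := by
          rw [Real.volume_Ioc, ENNReal.toReal_ofReal (by linarith only [hT])]; ring
        rw [show volume.real (Ioc (T/4) (3*T/4)) = T/2 from hvol, smul_eq_mul] at h; linarith only [h]
      have h2 : ∫ t in Ioc (T/4) (3*T/4), g t ≤ ∫ t in Ioc (0:ℝ) T, g t :=
        setIntegral_mono_set hgint (ae_of_all _ fun t => (hgpos t).le)
          (HasSubset.Subset.eventuallyLE hsub)
      have hEP1 : E / P ≤ 1 := by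
        rw [div_le_one hP_pos]; linarith only [hE1, hP1]
      calc C⁻¹ * (E / P) ≤ c1 * 1 :=
            mul_le_mul hCinv_c1 hEP1 (by positivity) hc1_pos.le
        _ = Real.exp (-(8*α/T) - lam0*T) * (T/2) := by rw [hc1def]; ring
        _ ≤ _ := le_trans h1 h2
    · -- upper bound
      have hIT : ∫ t in Ioc (0:ℝ) T, g t ≤ T := by
        have h := setIntegral_mono_on hgint
          (integrableOn_const measure_Ioc_lt_top.ne) measurableSet_Ioc hgle1
        rw [setIntegral_const, measureReal_def, Real.volume_Ioc, smul_eq_mul, mul_one,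
          ENNReal.toReal_ofReal (by linarith only [hT])] at h
        linarith only [h]
      have hmEP : m ≤ E / P := by
        rw [hmdef, hEdef, hPdef]
        apply div_le_div₀ (Real.exp_pos _).le _ (by positivity) _
        · apply Real.exp_le_exp.2
          have h : Real.sqrt (α*lam) ≤ Real.sqrt (α*lam0) :=
            Real.sqrt_le_sqrt (mul_le_mul_of_nonneg_left hcase hα.le)
          linarith only [h]
        · exact Real.rpow_le_rpow (by linarith only [hlam])
            (by linarith only [hcase]) (by norm_num)
      calc ∫ t in Ioc (0:ℝ) T, g t ≤ T := hIT
        _ = (T/m) * m := (div_mul_cancel₀ T hm_pos.ne').symm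
        _ ≤ C * (E/P) := mul_le_mul hC_Tm hmEP hm_pos.le hC_pos.le
  · -- LARGE LAMBDA
    have hlam_ge : lam0 ≤ lam := hcase.le
    have hlam1 : (1:ℝ) ≤ lam := le_trans hlam0_1 hlam_ge
    have hlam_pos : (0:ℝ) < lam := lt_of_lt_of_le one_pos hlam1
    set sl := Real.sqrt lam with hsl
    have hsl_pos : 0 < sl := Real.sqrt_pos.2 hlam_pos
    have hsl1 : 1 ≤ sl := by
      rw [hsl, show (1:ℝ) = Real.sqrt 1 by simp]
      exact Real.sqrt_le_sqrt hlam1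
    have ha2 : sa^2 = α := Real.sq_sqrt hα.le
    have hl2 : sl^2 = lam := Real.sq_sqrt hlam_pos.le
    have hs_eq : Real.sqrt (α*lam) = sa * sl := Real.sqrt_mul hα.le lam
    set s := Real.sqrt (α*lam) with hsdef
    have hs_pos : 0 < s := by rw [hsdef]; positivity
    have hal1 : 1 ≤ α * lam := by
      have h1 : 1/α ≤ lam0 := le_trans (le_max_left _ _) (le_max_right _ _)
      have h2 : 1/α ≤ lam := le_trans h1 hlam_ge
      rw [div_le_iff₀ hα] at h2
      nlinarith only [h2]
    have hs1 : 1 ≤ s := by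
      rw [hsdef, show (1:ℝ) = Real.sqrt 1 by simp]
      exact Real.sqrt_le_sqrt hal1
    set t0 : ℝ := sa / sl with ht0def
    have ht0_pos : 0 < t0 := by positivity
    set Q : ℝ := lam ^ ((3:ℝ)/4) with hQdef
    have hQ_pos : 0 < Q := by positivity
    have h32 : lam ^ ((3:ℝ)/2) = lam * sl := by
      rw [show (3:ℝ)/2 = 1 + 1/2 by norm_num, Real.rpow_add hlam_pos, Real.rpow_one,
        ← Real.sqrt_eq_rpow]
    have hQsq : Q^2 = lam * sl := by
      rw [sq, hQdef, ← Real.rpow_add hlam_pos]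
      norm_num [h32]
    have hQle : Q ≤ lam * sl := by
      rw [← h32, hQdef]
      exact Real.rpow_le_rpow_of_exponent_le hlam1 (by norm_num)
    have hQ1 : 1 ≤ Q := by
      rw [hQdef, show (1:ℝ) = lam ^ (0:ℝ) by rw [Real.rpow_zero]]
      exact Real.rpow_le_rpow_of_exponent_le hlam1 (by norm_num)
    have hPQ : Q ≤ P := by
      rw [hQdef, hPdef]
      exact Real.rpow_le_rpow hlam_pos.le (by linarith only [hlam]) (by norm_num)
    have hP2Q : P ≤ 2 * Q := by
      have h1 : P ≤ (2*lam) ^ ((3:ℝ)/4) := by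
        rw [hPdef]
        exact Real.rpow_le_rpow (by linarith only [hlam])
          (by linarith only [hlam1]) (by norm_num)
      have h2 : (2*lam) ^ ((3:ℝ)/4) = 2 ^ ((3:ℝ)/4) * Q := by
        rw [hQdef, Real.mul_rpow (by norm_num) hlam_pos.le]
      have h3 : (2:ℝ) ^ ((3:ℝ)/4) ≤ 2 := by
        calc (2:ℝ) ^ ((3:ℝ)/4) ≤ 2 ^ (1:ℝ) :=
              Real.rpow_le_rpow_of_exponent_le one_le_two (by norm_num)
          _ = 2 := Real.rpow_one 2
      calc P ≤ 2 ^ ((3:ℝ)/4) * Q := h1.trans_eq h2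
        _ ≤ 2 * Q := mul_le_mul_of_nonneg_right h3 hQ_pos.le
    have ht0T : t0 ≤ T/4 := by
      have h16 : 16*α/T^2 ≤ lam :=
        le_trans (le_trans (le_max_right _ _) (le_max_right _ _)) hlam_ge
      have h1 : Real.sqrt (16*α) ≤ Real.sqrt (T^2*lam) := by
        apply Real.sqrt_le_sqrt
        rw [div_le_iff₀ (by positivity)] at h16
        nlinarith only [h16]
      have h2 : Real.sqrt (16*α) = 4*sa := by
        rw [show (16:ℝ)*α = 4^2*α by ring, Real.sqrt_mul (by positivity : (0:ℝ) ≤ 4^2),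
          Real.sqrt_sq (by norm_num : (0:ℝ) ≤ 4), hsa]
      have h3 : Real.sqrt (T^2*lam) = T*sl := by
        rw [Real.sqrt_mul (sq_nonneg T), Real.sqrt_sq hT.le, hsl]
      rw [h2, h3] at h1
      rw [ht0def, div_le_div_iff₀ hsl_pos (by norm_num : (0:ℝ) < 4)]
      linarith only [h1]
    set δ : ℝ := Real.sqrt sa / Q with hδdef
    have hδ_pos : 0 < δ := by positivity
    have hδsq : δ^2 = sa / (lam * sl) := by
      rw [hδdef, div_pow, Real.sq_sqrt hsa_pos.le, hQsq]
    have hδ_le_t0 : δ ≤ t0 := by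
      apply le_of_pow_le_pow_left₀ two_ne_zero ht0_pos.le
      rw [hδsq, ht0def, div_pow, hl2,
        div_le_div_iff₀ (by positivity) (by positivity)]
      have hss : 1 ≤ sa * sl := by rw [← hs_eq]; exact hs1
      have h := mul_le_mul_of_nonneg_left hss
        (by positivity : (0:ℝ) ≤ sa * lam)
      nlinarith only [h]
    have hδt0 : lam * δ^2 / t0 = 1 := by
      rw [hδsq, ht0def]
      field_simp
    have hs2T : 2*t0 ≤ T/2 := by linarith only [ht0T]
    constructor
    · -- LOWER BOUND, large lambda
      have hsub : Ioc t0 (t0+δ) ⊆ Ioc (0:ℝ) T := by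
        apply Ioc_subset_Ioc ht0_pos.le
        linarith only [hδ_le_t0, hs2T, hT]
      have hlb : ∀ t ∈ Ioc t0 (t0+δ), E * Real.exp (-1 - 2*α/T) ≤ g t := by
        intro t ht
        rw [hgeq t, hEdef]
        exact s6_ptw_lower α T lam t δ hα hT hlam_pos hδ_pos (le_of_eq hδt0)
          ht.1 ht.2 (by linarith only [hδ_le_t0, hs2T])
      have h1 : E * Real.exp (-1 - 2*α/T) * δ ≤ ∫ t in Ioc t0 (t0+δ), g t := by
        have h := setIntegral_ge_of_const_le (μ := volume) measurableSet_Ioc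
          measure_Ioc_lt_top.ne hlb (hgint.mono_set hsub)
        have hvol : (volume (Ioc t0 (t0+δ))).toReal = δ := by
          rw [Real.volume_Ioc, ENNReal.toReal_ofReal (by linarith only [hδ_pos])]; ring
        rw [show volume.real (Ioc t0 (t0+δ)) = δ from hvol, smul_eq_mul] at h; linarith only [h]
      have h2 : ∫ t in Ioc t0 (t0+δ), g t ≤ ∫ t in Ioc (0:ℝ) T, g t :=
        setIntegral_mono_set hgint (ae_of_all _ fun t => (hgpos t).le)
          (HasSubset.Subset.eventuallyLE hsub)
      have hkey : C⁻¹ * (E/P) ≤ E * Real.exp (-1 - 2*α/T) * δ := by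
        have hEQ : E/P ≤ E/Q := div_le_div₀ hE_pos.le le_rfl hQ_pos hPQ
        calc C⁻¹ * (E/P) ≤ c2 * (E/Q) :=
              mul_le_mul hCinv_c2 hEQ (by positivity) hc2_pos.le
          _ = E * Real.exp (-1 - 2*α/T) * δ := by
              rw [hc2def, hδdef]; field_simp
      linarith only [hkey, h1, h2]
    · -- UPPER BOUND, large lambda
      set s2 : ℝ := 2*t0 with hs2def
      have hs2_pos : 0 < s2 := by positivity
      have hs2T' : s2 ≤ T := by
        linarith only [hs2T, hT]
      set b : ℝ := lam / (2*t0) with hbdef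
      have hb_pos : 0 < b := by positivity
      set G : ℝ → ℝ := fun t => E * Real.exp (-b * (t - t0)^2) with hGdef
      have hGeq : ∀ t : ℝ, G t = E * Real.exp (-b * (t - t0)^2) := fun t => rfl
      have hGint : Integrable G := by
        have h := ((integrable_exp_neg_mul_sq hb_pos).comp_sub_right t0).const_mul E
        exact h
      have hGnonneg : ∀ t, 0 ≤ G t := fun t => by rw [hGeq t]; positivity
      have hsplit : ∫ t in Ioc (0:ℝ) T, g t
          = (∫ t in Ioc (0:ℝ) s2, g t) + ∫ t in Ioc s2 T, g t := by
        rw [← Ioc_union_Ioc_eq_Ioc hs2_pos.le hs2T',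
          setIntegral_union (Ioc_disjoint_Ioc_of_le le_rfl) measurableSet_Ioc
            (hgint.mono_set (Ioc_subset_Ioc le_rfl hs2T'))
            (hgint.mono_set (Ioc_subset_Ioc hs2_pos.le le_rfl))]
      have hptw1 : ∀ t ∈ Ioc (0:ℝ) s2, g t ≤ G t := by
        intro t ht
        rw [hgeq t, hGeq t, hEdef]
        exact s6_ptw_upper1 α T lam t hα hT hlam_pos ht.1 ht.2
          (le_trans ht.2 hs2T')
      have hptw2 : ∀ t ∈ Ioc s2 T, g t ≤ E * Real.exp (-(s/2)) := by
        intro t ht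
        rw [hgeq t, hEdef, hsdef]
        exact s6_ptw_upper2 α T lam t hα hT hlam_pos ht.1 ht.2
      have hp1 : ∫ t in Ioc (0:ℝ) s2, g t ≤ E * (K1 / Q) := by
        have step1 : ∫ t in Ioc (0:ℝ) s2, g t ≤ ∫ t in Ioc (0:ℝ) s2, G t :=
          setIntegral_mono_on (hgint.mono_set (Ioc_subset_Ioc le_rfl hs2T'))
            hGint.integrableOn measurableSet_Ioc hptw1
        have step2 : ∫ t in Ioc (0:ℝ) s2, G t ≤ ∫ t : ℝ, G t :=
          setIntegral_le_integral hGint (ae_of_all _ hGnonneg)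
        have step3 : ∫ t : ℝ, G t = E * Real.sqrt (π / b) := by
          simp only [hGdef]
          rw [MeasureTheory.integral_const_mul]
          congr 1
          rw [integral_sub_right_eq_self (fun x => Real.exp (-b * x^2)) t0]
          exact integral_gaussian b
        have hπb : π / b = (2*π*sa) / Q^2 := by
          rw [hbdef, ht0def, hQsq]
          field_simp
        have step4 : Real.sqrt (π / b) = K1 / Q := by
          rw [hπb, Real.sqrt_div (by positivity) _, Real.sqrt_sq hQ_pos.le, hK1def]
        calc ∫ t in Ioc (0:ℝ) s2, g t ≤ ∫ t : ℝ, G t := le_trans step1 step2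
          _ = E * (K1/Q) := by rw [step3, step4]
      have hp2 : ∫ t in Ioc s2 T, g t ≤ E * (K2 / Q) := by
        have step1 : ∫ t in Ioc s2 T, g t ≤ ∫ t in Ioc s2 T, E * Real.exp (-(s/2)) :=
          setIntegral_mono_on (hgint.mono_set (Ioc_subset_Ioc hs2_pos.le le_rfl))
            (integrableOn_const measure_Ioc_lt_top.ne) measurableSet_Ioc hptw2
        have step2 : ∫ t in Ioc s2 T, (E * Real.exp (-(s/2)) : ℝ)
            ≤ T * (E * Real.exp (-(s/2))) := by
          rw [setIntegral_const, measureReal_def, Real.volume_Ioc, smul_eq_mul]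
          apply mul_le_mul _ le_rfl (by positivity) hT.le
          rw [ENNReal.toReal_ofReal (by linarith only [hs2_pos, hs2T'] : (0:ℝ) ≤ T - s2)]
          linarith only [hs2_pos]
        have hexp : Real.exp (-(s/2)) ≤ 216 / s^3 := by
          have h := s6_cube_le_exp (x := s/2) (by positivity)
          calc Real.exp (-(s/2)) = (Real.exp (s/2))⁻¹ := Real.exp_neg _
            _ ≤ (s^3/216)⁻¹ := inv_anti₀ (by positivity) (by linarith only [h])
            _ = 216/s^3 := by rw [inv_div]
        have hs3 : s^3 = (α*sa) * (lam*sl) := by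
          rw [hs_eq]
          linear_combination (sa*sl^3)*ha2 + (α*sa*sl)*hl2
        have step3 : T * Real.exp (-(s/2)) ≤ K2 / Q := by
          have h1 : T * Real.exp (-(s/2)) ≤ T * (216 / s^3) :=
            mul_le_mul_of_nonneg_left hexp hT.le
          have h2 : (α*sa) * Q ≤ s^3 := by
            rw [hs3]
            exact mul_le_mul_of_nonneg_left hQle (by positivity)
          have h3 : T * (216 / s^3) ≤ T * (216 / ((α*sa)*Q)) := by
            apply mul_le_mul_of_nonneg_left _ hT.le
            exact div_le_div₀ (by norm_num) le_rfl (by positivity) h2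
          have h4 : T * (216 / ((α*sa)*Q)) = K2 / Q := by
            rw [hK2def]; field_simp
          linarith only [h1, h3, h4]
        calc ∫ t in Ioc s2 T, g t ≤ T * (E * Real.exp (-(s/2))) := le_trans step1 step2
          _ = E * (T * Real.exp (-(s/2))) := by ring
          _ ≤ E * (K2/Q) := mul_le_mul_of_nonneg_left step3 hE_pos.le
      have hEP : E * (K/Q) ≤ C * (E/P) := by
        have h1 : E * (K/Q) = 2*K * (E/(2*Q)) := by field_simp
        have h2 : E/(2*Q) ≤ E/P := div_le_div₀ hE_pos.le le_rfl hP_pos hP2Q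
        calc E * (K/Q) = 2*K * (E/(2*Q)) := h1
          _ ≤ 2*K * (E/P) := mul_le_mul_of_nonneg_left h2 (by positivity)
          _ ≤ C * (E/P) := mul_le_mul_of_nonneg_right hC_K (by positivity)
      calc ∫ t in Ioc (0:ℝ) T, g t
          = (∫ t in Ioc (0:ℝ) s2, g t) + ∫ t in Ioc s2 T, g t := hsplit
        _ ≤ E * (K1/Q) + E * (K2/Q) := add_le_add hp1 hp2
        _ = E * (K/Q) := by rw [hKdef]; ring
        _ ≤ C * (E/P) := hEP
end

section
/- Assume there exist C₀, γ > 0 such that for every T > 0, every λ ≥ 0 and every y₀ ∈ E_λ, the associated heat solution satisfies ‖y(T)‖² ≤ (C₀/T) e^{2γλ + C₀/T} ∫₀^T ∫_ω |y(t,x)|² dμ(x) dt. Then there exists C > 0 such that for every η > 0, every T > γ + η, every ε > 0 and every y₀ ∈ L²(X,μ): D ‖y(T)‖² ≤ ε^{−β} ∫_{T−η}^T ∫_ω |y(t,x)|² dμ(x) dt + ε ‖y₀‖², where D = min{ e^{−C/η}/C , 1 } and β = γ / (T − (γ + η)). -/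
open MeasureTheory
open scoped ENNReal NNReal

/-- The abstract heat semigroup solution `y(t) = ∑ⱼ e^{-λⱼ t} ⟨y₀, φⱼ⟩ φⱼ`
associated to a Hilbert basis `Φ` of `L²(X, μ)` and nonnegative spectrum `lam`. -/
noncomputable def heatSol {X : Type*} [MeasurableSpace X] {μ : Measure X}
    (Φ : HilbertBasis ℕ ℝ (Lp ℝ 2 μ)) (lam : ℕ → ℝ) (y₀ : Lp ℝ 2 μ) (t : ℝ) :
    Lp ℝ 2 μ :=
  ∑' j, (Real.exp (-(lam j) * t) * (inner ℝ y₀ (Φ j) : ℝ)) • (Φ j : Lp ℝ 2 μ)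

/-- The spectral subspace `E_l = span {φⱼ : λⱼ ≤ l}`. -/
noncomputable def specSpace {X : Type*} [MeasurableSpace X] {μ : Measure X}
    (Φ : HilbertBasis ℕ ℝ (Lp ℝ 2 μ)) (lam : ℕ → ℝ) (l : ℝ) :
    Submodule ℝ (Lp ℝ 2 μ) :=
  Submodule.span ℝ {v | ∃ j, lam j ≤ l ∧ v = Φ j}

/-- The observation `∫_{t₁}^{t₂} ∫_ω |y(t,x)|² dμ(x) dt` of the heat solution on `ω`. -/
noncomputable def obsInt {X : Type*} [MeasurableSpace X] {μ : Measure X}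
    (Φ : HilbertBasis ℕ ℝ (Lp ℝ 2 μ)) (lam : ℕ → ℝ) (ω : Set X)
    (y₀ : Lp ℝ 2 μ) (t₁ t₂ : ℝ) : ℝ :=
  ∫ t in Set.Ioc t₁ t₂, ∫ x in ω, (heatSol Φ lam y₀ t x) ^ 2 ∂μ

section Aux

variable {X : Type*} [MeasurableSpace X] {μ : Measure X}
  (Φ : HilbertBasis ℕ ℝ (Lp ℝ 2 μ)) (lam : ℕ → ℝ)

/-- coefficient sequence of the heat solution -/
noncomputable def heatCoef (u : Lp ℝ 2 μ) (t : ℝ) : ℕ → ℝ :=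
  fun j => Real.exp (-(lam j) * t) * (inner ℝ u (Φ j) : ℝ)

lemma repr_eq_inner (u : Lp ℝ 2 μ) (j : ℕ) : Φ.repr u j = (inner ℝ u (Φ j) : ℝ) := by
  rw [Φ.repr_apply_apply, real_inner_comm]

lemma heatCoef_memℓp (u : Lp ℝ 2 μ) {t : ℝ} (ht : 0 ≤ t) (hlam : ∀ j, 0 ≤ lam j) :
    Memℓp (heatCoef Φ lam u t) 2 := by
  have h := lp.memℓp (Φ.repr u)
  rw [memℓp_gen_iff (by norm_num : 0 < (2:ℝ≥0∞).toReal)] at h ⊢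
  refine Summable.of_nonneg_of_le (fun j => by positivity) (fun j => ?_) h
  have h1 : Real.exp (-(lam j) * t) ≤ 1 := by
    rw [Real.exp_le_one_iff]
    have := mul_nonneg (hlam j) ht
    linarith
  have h2 : ‖heatCoef Φ lam u t j‖ ≤ ‖Φ.repr u j‖ := by
    rw [heatCoef, repr_eq_inner Φ u j, norm_mul]
    calc ‖Real.exp (-(lam j) * t)‖ * ‖(inner ℝ u (Φ j) : ℝ)‖
        ≤ 1 * ‖(inner ℝ u (Φ j) : ℝ)‖ := by
          apply mul_le_mul_of_nonneg_right _ (norm_nonneg _)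
          rw [Real.norm_eq_abs, abs_of_pos (Real.exp_pos _)]; exact h1
      _ = ‖(inner ℝ u (Φ j) : ℝ)‖ := one_mul _
  exact Real.rpow_le_rpow (norm_nonneg _) h2 (by norm_num)

lemma heatSol_eq_symm (u : Lp ℝ 2 μ) {t : ℝ} (ht : 0 ≤ t) (hlam : ∀ j, 0 ≤ lam j) :
    heatSol Φ lam u t = Φ.repr.symm ⟨heatCoef Φ lam u t, heatCoef_memℓp Φ lam u ht hlam⟩ := by
  have h := Φ.hasSum_repr_symm ⟨heatCoef Φ lam u t, heatCoef_memℓp Φ lam u ht hlam⟩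
  exact h.tsum_eq

lemma repr_heatSol (u : Lp ℝ 2 μ) {t : ℝ} (ht : 0 ≤ t) (hlam : ∀ j, 0 ≤ lam j) (j : ℕ) :
    Φ.repr (heatSol Φ lam u t) j = Real.exp (-(lam j) * t) * (inner ℝ u (Φ j) : ℝ) := by
  rw [heatSol_eq_symm Φ lam u ht hlam, LinearIsometryEquiv.apply_symm_apply]
  rfl

lemma inner_heatSol (u : Lp ℝ 2 μ) {t : ℝ} (ht : 0 ≤ t) (hlam : ∀ j, 0 ≤ lam j) (j : ℕ) :
    (inner ℝ (heatSol Φ lam u t) (Φ j) : ℝ) = Real.exp (-(lam j) * t) * (inner ℝ u (Φ j) : ℝ) := by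
  rw [← repr_eq_inner, repr_heatSol Φ lam u ht hlam]

lemma hasSum_normSq (v : Lp ℝ 2 μ) :
    HasSum (fun j => (inner ℝ v (Φ j) : ℝ) ^ 2) (‖v‖ ^ 2) := by
  have h := Φ.hasSum_inner_mul_inner v v
  have h2 : (inner ℝ v v : ℝ) = ‖v‖ ^ 2 := real_inner_self_eq_norm_sq v
  rw [h2] at h
  have hf : (fun j => (inner ℝ v (Φ j) : ℝ) ^ 2) = fun i => inner ℝ v (Φ i) * inner ℝ (Φ i) v := by
    funext j; rw [sq, real_inner_comm v (Φ j)]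
  rw [hf]; exact h

lemma summable_normSq (v : Lp ℝ 2 μ) :
    Summable (fun j => (inner ℝ v (Φ j) : ℝ) ^ 2) := (hasSum_normSq Φ v).summable

lemma normSq_eq_tsum (v : Lp ℝ 2 μ) :
    ‖v‖ ^ 2 = ∑' j, (inner ℝ v (Φ j) : ℝ) ^ 2 := (hasSum_normSq Φ v).tsum_eq.symm

end Aux

section Trunc

variable {X : Type*} [MeasurableSpace X] {μ : Measure X}
  (Φ : HilbertBasis ℕ ℝ (Lp ℝ 2 μ)) (lam : ℕ → ℝ)

/-- truncation to a finite set of modes -/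
noncomputable def trunc (S : Finset ℕ) (v : Lp ℝ 2 μ) : Lp ℝ 2 μ :=
  ∑ j ∈ S, ((inner ℝ v (Φ j) : ℝ)) • (Φ j : Lp ℝ 2 μ)

lemma ext_inner_basis {u u' : Lp ℝ 2 μ}
    (h : ∀ j, (inner ℝ u (Φ j) : ℝ) = (inner ℝ u' (Φ j) : ℝ)) : u = u' := by
  apply Φ.repr.injective
  apply lp.ext
  funext j
  rw [repr_eq_inner, repr_eq_inner]
  exact h j

lemma inner_trunc (S : Finset ℕ) (v : Lp ℝ 2 μ) (k : ℕ) :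
    (inner ℝ (trunc Φ S v) (Φ k) : ℝ) = if k ∈ S then (inner ℝ v (Φ k) : ℝ) else 0 := by
  rw [trunc, sum_inner]
  have : ∀ j ∈ S, (inner ℝ (((inner ℝ v (Φ j) : ℝ)) • (Φ j : Lp ℝ 2 μ)) (Φ k) : ℝ)
      = (inner ℝ v (Φ j) : ℝ) * (if j = k then (1:ℝ) else 0) := by
    intro j _
    rw [real_inner_smul_left, orthonormal_iff_ite.mp Φ.orthonormal j k]
  rw [Finset.sum_congr rfl this]
  by_cases hk : k ∈ S
  · rw [if_pos hk, Finset.sum_eq_single k]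
    · simp
    · intro b _ hb; simp [hb]
    · intro h; exact absurd hk h
  · rw [if_neg hk, Finset.sum_eq_zero]
    intro b hb
    have : b ≠ k := fun he => hk (he ▸ hb)
    simp [this]

lemma inner_sub_trunc (S : Finset ℕ) (v : Lp ℝ 2 μ) (k : ℕ) :
    (inner ℝ (v - trunc Φ S v) (Φ k) : ℝ) = if k ∈ S then 0 else (inner ℝ v (Φ k) : ℝ) := by
  rw [inner_sub_left, inner_trunc]
  by_cases hk : k ∈ S <;> simp [hk]

lemma pythagoras_trunc (S : Finset ℕ) (v : Lp ℝ 2 μ) :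
    ‖v‖ ^ 2 = ‖trunc Φ S v‖ ^ 2 + ‖v - trunc Φ S v‖ ^ 2 := by
  have h1 := hasSum_normSq Φ (trunc Φ S v)
  have h2 := hasSum_normSq Φ (v - trunc Φ S v)
  have h3 := h1.add h2
  have h4 : (fun j => (inner ℝ (trunc Φ S v) (Φ j) : ℝ) ^ 2
      + (inner ℝ (v - trunc Φ S v) (Φ j) : ℝ) ^ 2) = fun j => (inner ℝ v (Φ j) : ℝ) ^ 2 := by
    funext j
    rw [inner_trunc, inner_sub_trunc]
    by_cases hj : j ∈ S <;> simp [hj]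
  rw [h4] at h3
  exact (hasSum_normSq Φ v).unique h3

/-- the heat flow commutes with truncation -/
lemma heatSol_trunc (S : Finset ℕ) (v : Lp ℝ 2 μ) {t : ℝ} (ht : 0 ≤ t)
    (hlam : ∀ j, 0 ≤ lam j) :
    heatSol Φ lam (trunc Φ S v) t = trunc Φ S (heatSol Φ lam v t) := by
  apply ext_inner_basis Φ
  intro j
  rw [inner_heatSol Φ lam _ ht hlam, inner_trunc, inner_trunc, inner_heatSol Φ lam _ ht hlam]
  by_cases hj : j ∈ S <;> simp [hj]

/-- semigroup property -/
lemma heatSol_comp (v : Lp ℝ 2 μ) {s t : ℝ} (hs : 0 ≤ s) (ht : 0 ≤ t)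
    (hlam : ∀ j, 0 ≤ lam j) :
    heatSol Φ lam (heatSol Φ lam v s) t = heatSol Φ lam v (s + t) := by
  apply ext_inner_basis Φ
  intro j
  rw [inner_heatSol Φ lam _ ht hlam, inner_heatSol Φ lam _ hs hlam,
    inner_heatSol Φ lam _ (by linarith : (0:ℝ) ≤ s + t) hlam, ← mul_assoc, ← Real.exp_add]
  ring_nf

lemma norm_heatSol_sq_le (u : Lp ℝ 2 μ) {t : ℝ} (ht : 0 ≤ t) (hlam : ∀ j, 0 ≤ lam j) :
    ‖heatSol Φ lam u t‖ ^ 2 ≤ ‖u‖ ^ 2 := by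
  rw [normSq_eq_tsum Φ, normSq_eq_tsum Φ u]
  apply Summable.tsum_le_tsum _ _ (summable_normSq Φ u)
  · intro j
    rw [inner_heatSol Φ lam u ht hlam, mul_pow]
    have h1 : Real.exp (-(lam j) * t) ≤ 1 := by
      rw [Real.exp_le_one_iff]
      have := mul_nonneg (hlam j) ht
      linarith
    have h0 : (0:ℝ) ≤ Real.exp (-(lam j) * t) := (Real.exp_pos _).le
    have h2 : Real.exp (-(lam j) * t) ^ 2 ≤ 1 := by nlinarith
    nlinarith [sq_nonneg ((inner ℝ u (Φ j) : ℝ))]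
  · exact summable_normSq Φ _

lemma norm_heatSol_le (u : Lp ℝ 2 μ) {t : ℝ} (ht : 0 ≤ t) (hlam : ∀ j, 0 ≤ lam j) :
    ‖heatSol Φ lam u t‖ ≤ ‖u‖ := by
  have h := norm_heatSol_sq_le Φ lam u ht hlam
  nlinarith [norm_nonneg (heatSol Φ lam u t), norm_nonneg u]

/-- high-frequency decay bound -/
lemma norm_sub_trunc_sq_le (S : Finset ℕ) (u : Lp ℝ 2 μ) {l s s' : ℝ}
    (hS : ∀ j, j ∉ S → l ≤ lam j) (hl : 0 ≤ l) (hs' : 0 ≤ s') (hss' : s' ≤ s)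
    (hlam : ∀ j, 0 ≤ lam j) :
    ‖heatSol Φ lam u s - trunc Φ S (heatSol Φ lam u s)‖ ^ 2
      ≤ Real.exp (-2 * l * s') * ‖u‖ ^ 2 := by
  have hs : (0:ℝ) ≤ s := le_trans hs' hss'
  have hexp : ∀ j, j ∉ S → (Real.exp (-(lam j) * s)) ^ 2 ≤ Real.exp (-2 * l * s') := by
    intro j hj
    rw [← Real.exp_nat_mul]
    apply Real.exp_le_exp.mpr
    have h1 : l * s' ≤ lam j * s :=
      mul_le_mul (hS j hj) hss' hs' (le_trans hl (hS j hj))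
    push_cast
    nlinarith
  rw [normSq_eq_tsum Φ]
  have hsum2 : Summable (fun j => Real.exp (-2 * l * s') * (inner ℝ u (Φ j) : ℝ) ^ 2) :=
    (summable_normSq Φ u).mul_left _
  have hle : ∀ j, (inner ℝ (heatSol Φ lam u s - trunc Φ S (heatSol Φ lam u s)) (Φ j) : ℝ) ^ 2
      ≤ Real.exp (-2 * l * s') * (inner ℝ u (Φ j) : ℝ) ^ 2 := by
    intro j
    rw [inner_sub_trunc]
    by_cases hj : j ∈ S
    · rw [if_pos hj]
      have h0 : (0:ℝ) ^ 2 = 0 := by norm_num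
      rw [h0]
      positivity
    · rw [if_neg hj, inner_heatSol Φ lam u hs hlam, mul_pow]
      exact mul_le_mul_of_nonneg_right (hexp j hj) (sq_nonneg _)
  calc ∑' j, (inner ℝ (heatSol Φ lam u s - trunc Φ S (heatSol Φ lam u s)) (Φ j) : ℝ) ^ 2
      ≤ ∑' j, Real.exp (-2 * l * s') * (inner ℝ u (Φ j) : ℝ) ^ 2 :=
        Summable.tsum_le_tsum hle (summable_normSq Φ _) hsum2
    _ = Real.exp (-2 * l * s') * ‖u‖ ^ 2 := by
        rw [tsum_mul_left, normSq_eq_tsum Φ u]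

end Trunc

section Cont

variable {X : Type*} [MeasurableSpace X] {μ : Measure X}
  (Φ : HilbertBasis ℕ ℝ (Lp ℝ 2 μ)) (lam : ℕ → ℝ)

private lemma exp_diff_le_aux {c t s lj : ℝ} (hc : 0 < c) (hct : c ≤ t) (hcs : c ≤ s)
    (hl : 0 ≤ lj) (hts : t ≤ s) :
    Real.exp (-lj * t) - Real.exp (-lj * s) ≤ (s - t) / c := by
  have h1 : Real.exp (-lj * s) = Real.exp (-lj * t) * Real.exp (-lj * (s - t)) := by
    rw [← Real.exp_add]; ring_nf
  have h2 : 1 - Real.exp (-lj * (s - t)) ≤ lj * (s - t) := by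
    have := Real.add_one_le_exp (-(lj * (s - t)))
    have heq : -lj * (s - t) = -(lj * (s - t)) := by ring
    rw [heq]; linarith
  have h3 : Real.exp (-lj * t) ≤ Real.exp (-lj * c) := by
    apply Real.exp_le_exp.mpr
    nlinarith
  have h4 : lj * Real.exp (-lj * c) ≤ 1 / c := by
    have h5 := Real.add_one_le_exp (lj * c)
    have h6 : Real.exp (-lj * c) = (Real.exp (lj * c))⁻¹ := by
      rw [show -lj * c = -(lj * c) by ring, Real.exp_neg]
    rw [h6]
    have h7 : 0 < Real.exp (lj * c) := Real.exp_pos _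
    rw [inv_eq_one_div, mul_one_div, div_le_div_iff₀ h7 hc]
    nlinarith
  have h8 : 0 ≤ 1 - Real.exp (-lj * (s - t)) := by
    have : Real.exp (-lj * (s - t)) ≤ 1 := by
      rw [Real.exp_le_one_iff]
      nlinarith
    linarith
  calc Real.exp (-lj * t) - Real.exp (-lj * s)
      = Real.exp (-lj * t) * (1 - Real.exp (-lj * (s - t))) := by rw [h1]; ring
    _ ≤ Real.exp (-lj * c) * (lj * (s - t)) := by
        apply mul_le_mul h3 h2 h8 (Real.exp_pos _).le
    _ = (lj * Real.exp (-lj * c)) * (s - t) := by ring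
    _ ≤ (1 / c) * (s - t) := by
        apply mul_le_mul_of_nonneg_right h4 (by linarith)
    _ = (s - t) / c := by ring

private lemma exp_diff_le {c t s lj : ℝ} (hc : 0 < c) (hct : c ≤ t) (hcs : c ≤ s)
    (hl : 0 ≤ lj) :
    |Real.exp (-lj * t) - Real.exp (-lj * s)| ≤ |t - s| / c := by
  rcases le_total t s with h | h
  · have hge : Real.exp (-lj * s) ≤ Real.exp (-lj * t) := by
      apply Real.exp_le_exp.mpr; nlinarith
    rw [abs_of_nonneg (by linarith), abs_of_nonpos (by linarith : t - s ≤ 0)]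
    have := exp_diff_le_aux hc hct hcs hl h
    have hid : -(t - s) / c = (s - t) / c := by ring
    rw [hid]
    exact this
  · have hge : Real.exp (-lj * t) ≤ Real.exp (-lj * s) := by
      apply Real.exp_le_exp.mpr; nlinarith
    rw [abs_of_nonpos (by linarith), abs_of_nonneg (by linarith : (0:ℝ) ≤ t - s)]
    have := exp_diff_le_aux hc hcs hct hl h
    have hid : -(Real.exp (-lj * t) - Real.exp (-lj * s))
        = Real.exp (-lj * s) - Real.exp (-lj * t) := by ring
    rw [hid]
    exact this

lemma heatSol_lip (u : Lp ℝ 2 μ) {c t s : ℝ} (hc : 0 < c) (hct : c ≤ t) (hcs : c ≤ s)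
    (hlam : ∀ j, 0 ≤ lam j) :
    ‖heatSol Φ lam u t - heatSol Φ lam u s‖ ≤ (‖u‖ / c) * |t - s| := by
  have ht : (0:ℝ) ≤ t := le_trans hc.le hct
  have hs : (0:ℝ) ≤ s := le_trans hc.le hcs
  have hsq : ‖heatSol Φ lam u t - heatSol Φ lam u s‖ ^ 2 ≤ ((‖u‖ / c) * |t - s|) ^ 2 := by
    rw [normSq_eq_tsum Φ]
    have hsum2 : Summable (fun j => (|t - s| / c) ^ 2 * (inner ℝ u (Φ j) : ℝ) ^ 2) :=
      (summable_normSq Φ u).mul_left _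
    calc ∑' j, (inner ℝ (heatSol Φ lam u t - heatSol Φ lam u s) (Φ j) : ℝ) ^ 2
        ≤ ∑' j, (|t - s| / c) ^ 2 * (inner ℝ u (Φ j) : ℝ) ^ 2 := by
          apply Summable.tsum_le_tsum _ (summable_normSq Φ _) hsum2
          intro j
          rw [inner_sub_left, inner_heatSol Φ lam u ht hlam, inner_heatSol Φ lam u hs hlam]
          have h1 : ((Real.exp (-(lam j) * t) - Real.exp (-(lam j) * s)))^2 ≤ (|t-s|/c)^2 := by
            have h2 := exp_diff_le hc hct hcs (hlam j)
            have h3 := abs_nonneg (Real.exp (-(lam j) * t) - Real.exp (-(lam j) * s))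
            have h4 : |t - s| / c ≥ 0 := by positivity
            nlinarith [sq_abs (Real.exp (-(lam j) * t) - Real.exp (-(lam j) * s))]
          calc (Real.exp (-(lam j) * t) * (inner ℝ u (Φ j) : ℝ)
                - Real.exp (-(lam j) * s) * (inner ℝ u (Φ j) : ℝ)) ^ 2
              = (Real.exp (-(lam j) * t) - Real.exp (-(lam j) * s))^2
                  * (inner ℝ u (Φ j) : ℝ) ^ 2 := by ring
            _ ≤ (|t - s| / c) ^ 2 * (inner ℝ u (Φ j) : ℝ) ^ 2 :=
                mul_le_mul_of_nonneg_right h1 (sq_nonneg _)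
      _ = (|t - s| / c) ^ 2 * ‖u‖ ^ 2 := by rw [tsum_mul_left, normSq_eq_tsum Φ u]
      _ = ((‖u‖ / c) * |t - s|) ^ 2 := by ring
  have h5 : (0:ℝ) ≤ (‖u‖ / c) * |t - s| := by positivity
  nlinarith [norm_nonneg (heatSol Φ lam u t - heatSol Φ lam u s)]

lemma continuousAt_heatSol (u : Lp ℝ 2 μ) (hlam : ∀ j, 0 ≤ lam j) {t₀ : ℝ} (ht₀ : 0 < t₀) :
    ContinuousAt (fun t => heatSol Φ lam u t) t₀ := by
  have hmem : Set.Ici (t₀ / 2) ∈ nhds t₀ := Ici_mem_nhds (by linarith)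
  apply ContinuousOn.continuousAt _ hmem
  have hK : (0:ℝ) ≤ ‖u‖ / (t₀ / 2) := by positivity
  apply LipschitzOnWith.continuousOn (K := Real.toNNReal (‖u‖ / (t₀ / 2)))
  apply LipschitzOnWith.of_dist_le_mul
  intro x hx y hy
  rw [dist_eq_norm, dist_eq_norm, Real.coe_toNNReal _ hK]
  calc ‖heatSol Φ lam u x - heatSol Φ lam u y‖
      ≤ (‖u‖ / (t₀ / 2)) * |x - y| :=
        heatSol_lip Φ lam u (by linarith) hx hy hlam
    _ = ‖u‖ / (t₀ / 2) * ‖x - y‖ := by rw [Real.norm_eq_abs]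

end Cont

section GFun

variable {X : Type*} [MeasurableSpace X] {μ : Measure X}

/-- the observation functional `u ↦ ∫_ω u²` -/
noncomputable def Gfun (ω : Set X) (u : Lp ℝ 2 μ) : ℝ := ∫ x in ω, (u x) ^ 2 ∂μ

lemma integrable_sq_Lp (u : Lp ℝ 2 μ) : Integrable (fun x => (u x) ^ 2) μ := by
  have h := L2.integrable_inner (𝕜 := ℝ) u u
  simpa [RCLike.inner_apply, sq] using h

lemma Gfun_nonneg (ω : Set X) (u : Lp ℝ 2 μ) : 0 ≤ Gfun ω u := by
  apply integral_nonneg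
  intro x
  positivity

lemma normSq_eq_integral (u : Lp ℝ 2 μ) : ‖u‖ ^ 2 = ∫ x, (u x) ^ 2 ∂μ := by
  have h1 : (inner ℝ u u : ℝ) = ‖u‖ ^ 2 := real_inner_self_eq_norm_sq u
  have h2 := L2.inner_def (𝕜 := ℝ) u u
  rw [← h1, h2]
  congr 1
  funext x
  simp [RCLike.inner_apply, sq]

lemma Gfun_le_normSq (ω : Set X) (u : Lp ℝ 2 μ) : Gfun ω u ≤ ‖u‖ ^ 2 := by
  rw [normSq_eq_integral]
  exact setIntegral_le_integral (integrable_sq_Lp u)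
    (Filter.Eventually.of_forall fun x => by positivity)

lemma integral_abs_mul_le (f g : Lp ℝ 2 μ) :
    ∫ x, |f x| * |g x| ∂μ ≤ ‖f‖ * ‖g‖ := by
  have h1 : ∫ x, |f x| * |g x| ∂μ = (inner ℝ (|f|) (|g|) : ℝ) := by
    rw [L2.inner_def]
    apply integral_congr_ae
    filter_upwards [Lp.coeFn_abs f, Lp.coeFn_abs g] with x hf hg
    rw [hf, hg]
    simp [RCLike.inner_apply, mul_comm]
  rw [h1]
  calc (inner ℝ (|f|) (|g|) : ℝ) ≤ ‖(|f| : Lp ℝ 2 μ)‖ * ‖(|g| : Lp ℝ 2 μ)‖ :=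
        real_inner_le_norm _ _
    _ = ‖f‖ * ‖g‖ := by rw [norm_abs_eq_norm, norm_abs_eq_norm]

lemma Gfun_diff_le (ω : Set X) (u v : Lp ℝ 2 μ) :
    |Gfun ω u - Gfun ω v| ≤ ‖u - v‖ * (‖u‖ + ‖v‖) := by
  have hu2 : IntegrableOn (fun x => (u x) ^ 2) ω μ := (integrable_sq_Lp u).integrableOn
  have hv2 : IntegrableOn (fun x => (v x) ^ 2) ω μ := (integrable_sq_Lp v).integrableOn
  have h1 : Gfun ω u - Gfun ω v = ∫ x in ω, ((u x) ^ 2 - (v x) ^ 2) ∂μ := by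
    rw [Gfun, Gfun, integral_sub hu2 hv2]
  have habs : Integrable (fun x => |u x - v x| * (|u x| + |v x|)) μ := by
    have h2 : Integrable (fun x => |(u - v) x| * |u x| + |(u - v) x| * |v x|) μ := by
      apply Integrable.add
      · have := integral_abs_mul_le (u - v) u
        have h3 := L2.integrable_inner (𝕜 := ℝ) (|u - v|) (|u|)
        apply (h3.congr ?_)
        filter_upwards [Lp.coeFn_abs (u - v), Lp.coeFn_abs u] with x ha hb
        simp [RCLike.inner_apply, ha, hb, mul_comm]
      · have h3 := L2.integrable_inner (𝕜 := ℝ) (|u - v|) (|v|)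
        apply (h3.congr ?_)
        filter_upwards [Lp.coeFn_abs (u - v), Lp.coeFn_abs v] with x ha hb
        simp [RCLike.inner_apply, ha, hb, mul_comm]
    apply h2.congr
    filter_upwards [Lp.coeFn_sub u v] with x hx
    rw [hx]
    simp only [Pi.sub_apply]
    ring
  calc |Gfun ω u - Gfun ω v| = |∫ x in ω, ((u x) ^ 2 - (v x) ^ 2) ∂μ| := by rw [h1]
    _ ≤ ∫ x in ω, |(u x) ^ 2 - (v x) ^ 2| ∂μ := by
        have := norm_integral_le_integral_norm (μ := μ.restrict ω)
          (fun x => (u x) ^ 2 - (v x) ^ 2)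
        simpa [Real.norm_eq_abs] using this
    _ ≤ ∫ x, |(u x) ^ 2 - (v x) ^ 2| ∂μ := by
        apply setIntegral_le_integral (((integrable_sq_Lp u).sub (integrable_sq_Lp v)).abs)
        exact Filter.Eventually.of_forall fun x => abs_nonneg _
    _ ≤ ∫ x, |u x - v x| * (|u x| + |v x|) ∂μ := by
        apply integral_mono_ae _ habs
        · refine Filter.Eventually.of_forall fun x => ?_
          dsimp only
          have hx : (u x) ^ 2 - (v x) ^ 2 = (u x - v x) * (u x + v x) := by ring
          rw [hx, abs_mul]
          apply mul_le_mul_of_nonneg_left _ (abs_nonneg _)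
          exact (abs_add_le _ _)
        · exact ((integrable_sq_Lp u).sub (integrable_sq_Lp v)).abs
    _ = (∫ x, |u x - v x| * |u x| ∂μ) + ∫ x, |u x - v x| * |v x| ∂μ := by
        rw [← integral_add]
        · congr 1; funext x; ring
        · apply ((L2.integrable_inner (𝕜 := ℝ) (|u - v|) (|u|)).congr ?_)
          filter_upwards [Lp.coeFn_abs (u - v), Lp.coeFn_abs u, Lp.coeFn_sub u v]
            with x ha hb hc
          simp only [RCLike.inner_apply, conj_trivial, ha, hb, hc, Pi.sub_apply, mul_comm]
        · apply ((L2.integrable_inner (𝕜 := ℝ) (|u - v|) (|v|)).congr ?_)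
          filter_upwards [Lp.coeFn_abs (u - v), Lp.coeFn_abs v, Lp.coeFn_sub u v]
            with x ha hb hc
          simp only [RCLike.inner_apply, conj_trivial, ha, hb, hc, Pi.sub_apply, mul_comm]
    _ ≤ ‖u - v‖ * ‖u‖ + ‖u - v‖ * ‖v‖ := by
        apply add_le_add
        · have h4 := integral_abs_mul_le (u - v) u
          refine le_trans (le_of_eq ?_) h4
          apply integral_congr_ae
          filter_upwards [Lp.coeFn_sub u v] with x hx
          rw [hx]; simp
        · have h4 := integral_abs_mul_le (u - v) v
          refine le_trans (le_of_eq ?_) h4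
          apply integral_congr_ae
          filter_upwards [Lp.coeFn_sub u v] with x hx
          rw [hx]; simp
    _ = ‖u - v‖ * (‖u‖ + ‖v‖) := by ring

lemma continuous_Gfun (ω : Set X) : Continuous (Gfun (μ := μ) ω) := by
  rw [continuous_iff_continuousAt]
  intro u₀
  rw [Metric.continuousAt_iff]
  intro ε hε
  refine ⟨min 1 (ε / (2 * ‖u₀‖ + 2)), by positivity, fun {u} hu => ?_⟩
  rw [dist_eq_norm] at hu ⊢
  have h1 : ‖u - u₀‖ < 1 := lt_of_lt_of_le hu (min_le_left _ _)
  have h2 : ‖u - u₀‖ < ε / (2 * ‖u₀‖ + 2) := lt_of_lt_of_le hu (min_le_right _ _)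
  have h3 : ‖u‖ ≤ ‖u₀‖ + 1 := by
    have := norm_sub_norm_le u u₀
    linarith
  have h4 := Gfun_diff_le ω u u₀
  have h5 : ‖u - u₀‖ * (‖u‖ + ‖u₀‖) ≤ ‖u - u₀‖ * (2 * ‖u₀‖ + 1) := by
    apply mul_le_mul_of_nonneg_left _ (norm_nonneg _)
    linarith
  have h6 : ‖u - u₀‖ * (2 * ‖u₀‖ + 1) < ε := by
    have h7 : (0:ℝ) < 2 * ‖u₀‖ + 2 := by positivity
    calc ‖u - u₀‖ * (2 * ‖u₀‖ + 1) ≤ ‖u - u₀‖ * (2 * ‖u₀‖ + 2) := by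
          apply mul_le_mul_of_nonneg_left _ (norm_nonneg _); linarith
      _ < (ε / (2 * ‖u₀‖ + 2)) * (2 * ‖u₀‖ + 2) := by
          rcases eq_or_lt_of_le (norm_nonneg (u - u₀)) with h8 | h8
          · rw [← h8]; simp; positivity
          · exact mul_lt_mul_of_pos_right h2 h7
      _ = ε := by field_simp
  have h9 : |Gfun ω u - Gfun ω u₀| < ε := lt_of_le_of_lt h4 (lt_of_le_of_lt h5 h6)
  calc ‖Gfun ω u - Gfun ω u₀‖ = |Gfun ω u - Gfun ω u₀| := Real.norm_eq_abs _
    _ < ε := h9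

end GFun

section TimeInt

variable {X : Type*} [MeasurableSpace X] {μ : Measure X}
  (Φ : HilbertBasis ℕ ℝ (Lp ℝ 2 μ)) (lam : ℕ → ℝ)

lemma Gfun_sub_le (ω : Set X) (v q : Lp ℝ 2 μ) :
    Gfun ω (v - q) ≤ 2 * Gfun ω v + 2 * ‖q‖ ^ 2 := by
  have h1 : Gfun ω (v - q) ≤ 2 * Gfun ω v + 2 * Gfun ω q := by
    rw [Gfun, Gfun, Gfun]
    have key : ∫ x in ω, ((v - q) x) ^ 2 ∂μ
        ≤ ∫ x in ω, (2 * (v x) ^ 2 + 2 * (q x) ^ 2) ∂μ := by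
      apply integral_mono_ae ((integrable_sq_Lp (v - q)).integrableOn)
      · apply Integrable.add
        · exact ((integrable_sq_Lp v).integrableOn).const_mul 2
        · exact ((integrable_sq_Lp q).integrableOn).const_mul 2
      · have hae : ∀ᵐ x ∂(μ.restrict ω), (v - q) x = v x - q x := by
          exact ae_restrict_of_ae (by
            filter_upwards [Lp.coeFn_sub v q] with x hx
            rw [hx]; rfl)
        filter_upwards [hae] with x hx
        rw [hx]
        nlinarith [sq_nonneg (v x + q x)]
    calc ∫ x in ω, ((v - q) x) ^ 2 ∂μ
        ≤ ∫ x in ω, (2 * (v x) ^ 2 + 2 * (q x) ^ 2) ∂μ := key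
      _ = 2 * ∫ x in ω, (v x) ^ 2 ∂μ + 2 * ∫ x in ω, (q x) ^ 2 ∂μ := by
          rw [integral_add (((integrable_sq_Lp v).integrableOn).const_mul 2)
            (((integrable_sq_Lp q).integrableOn).const_mul 2),
            integral_const_mul, integral_const_mul]
  have h2 : Gfun ω q ≤ ‖q‖ ^ 2 := Gfun_le_normSq ω q
  linarith

lemma integrableOn_G_shift (ω : Set X) (u : Lp ℝ 2 μ) (hlam : ∀ j, 0 ≤ lam j)
    {c a b : ℝ} (hca : 0 ≤ c + a) :
    IntegrableOn (fun t => Gfun ω (heatSol Φ lam u (c + t))) (Set.Ioc a b) := by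
  refine ⟨?mble, HasFiniteIntegral.restrict_of_bounded (C := ‖u‖ ^ 2) ?fin ?bdd⟩
  case fin =>
    rw [Real.volume_Ioc]
    exact ENNReal.ofReal_lt_top
  case bdd =>
    apply (ae_restrict_iff' measurableSet_Ioc).mpr
    apply Filter.Eventually.of_forall
    intro t ht
    have h0 : 0 ≤ c + t := by have := ht.1; linarith
    have h1 := Gfun_nonneg ω (heatSol Φ lam u (c + t))
    have h2 := Gfun_le_normSq ω (heatSol Φ lam u (c + t))
    have h3 := norm_heatSol_sq_le Φ lam u h0 hlam
    rw [Real.norm_eq_abs, abs_of_nonneg h1]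
    linarith
  case mble =>
    apply ContinuousOn.aestronglyMeasurable _ measurableSet_Ioc
    intro t ht
    apply ContinuousAt.continuousWithinAt
    have h1 : ContinuousAt (fun t : ℝ => heatSol Φ lam u (c + t)) t := by
      have h2 : ContinuousAt (fun t : ℝ => c + t) t := by fun_prop
      have h3 : ContinuousAt (fun s : ℝ => heatSol Φ lam u s) (c + t) :=
        continuousAt_heatSol Φ lam u hlam (by
          have := ht.1
          linarith)
      exact h3.comp h2
    exact (continuous_Gfun ω).continuousAt.comp h1

lemma integral_G_shift (ω : Set X) (u : Lp ℝ 2 μ) {c a b : ℝ} (hab : a ≤ b) :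
    ∫ t in Set.Ioc a b, Gfun ω (heatSol Φ lam u (c + t))
      = ∫ s in Set.Ioc (c + a) (c + b), Gfun ω (heatSol Φ lam u s) := by
  rw [← intervalIntegral.integral_of_le hab,
    ← intervalIntegral.integral_of_le (by linarith : c + a ≤ c + b)]
  exact intervalIntegral.integral_comp_add_left (fun s => Gfun ω (heatSol Φ lam u s)) c

end TimeInt

lemma numeric_key {C₀ η : ℝ} (hC₀ : 0 < C₀) (hη : 0 < η) :
    (Real.exp (-(2 * C₀ + 1) / η) / (2 * C₀ + 1)) * (2 * C₀ * Real.exp (C₀ / η) + 1)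
      ≤ min η 1 := by
  have hC : (0:ℝ) < 2 * C₀ + 1 := by linarith
  have h1 : (1:ℝ) ≤ Real.exp (C₀ / η) := by
    rw [Real.one_le_exp_iff]
    positivity
  have h2 : 2 * C₀ * Real.exp (C₀ / η) + 1 ≤ (2 * C₀ + 1) * Real.exp (C₀ / η) := by
    nlinarith
  have h3 : (Real.exp (-(2 * C₀ + 1) / η) / (2 * C₀ + 1)) * ((2 * C₀ + 1) * Real.exp (C₀ / η))
      = Real.exp (-(C₀ + 1) / η) := by
    have hne : (2 * C₀ + 1) ≠ 0 := ne_of_gt hC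
    have : Real.exp (-(2 * C₀ + 1) / η) / (2 * C₀ + 1) * ((2 * C₀ + 1) * Real.exp (C₀ / η))
        = Real.exp (-(2 * C₀ + 1) / η) * Real.exp (C₀ / η) := by
      field_simp
    rw [this, ← Real.exp_add]
    congr 1
    field_simp
    ring
  have h4 : (Real.exp (-(2 * C₀ + 1) / η) / (2 * C₀ + 1)) * (2 * C₀ * Real.exp (C₀ / η) + 1)
      ≤ Real.exp (-(C₀ + 1) / η) := by
    rw [← h3]
    apply mul_le_mul_of_nonneg_left h2 (by positivity)
  have h5 : Real.exp (-(C₀ + 1) / η) ≤ 1 := by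
    rw [Real.exp_le_one_iff]
    have : 0 < (C₀ + 1) / η := by positivity
    have hid : -(C₀ + 1) / η = -((C₀ + 1) / η) := by ring
    rw [hid]
    linarith
  have h6 : Real.exp (-(C₀ + 1) / η) ≤ η := by
    have h7 : Real.exp (-(C₀ + 1) / η) ≤ Real.exp (-1 / η) := by
      apply Real.exp_le_exp.mpr
      rw [div_le_div_iff₀ hη hη]
      nlinarith
    have h8 : 1 / η ≤ Real.exp (1 / η) := by
      have := Real.add_one_le_exp (1 / η)
      linarith
    have h9 : Real.exp (-1 / η) = 1 / Real.exp (1 / η) := by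
      rw [show -1 / η = -(1 / η) by ring, Real.exp_neg, inv_eq_one_div]
    rw [h9] at h7
    have h10 : 1 / Real.exp (1 / η) ≤ η := by
      rw [div_le_iff₀ (Real.exp_pos _)]
      have h11 : 0 < 1 / η := by positivity
      have h12 : 1 / η * η = 1 := by field_simp
      nlinarith [Real.exp_pos (1 / η)]
    linarith
  exact le_trans h4 (le_min h6 h5)


/-- Large-time approximate final-state observability (abstract spectral form,
case `k = 2`): from the low-frequency observability estimate with cost
`(C₀/T) e^{2γλ + C₀/T}`, one gets, for `T > γ + η`,
`D ‖y(T)‖² ≤ ε^{-β} ∫_{T-η}^T ∫_ω |y|² + ε ‖y₀‖²` with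
`D = min{e^{-C/η}/C, 1}` and `β = γ/(T-(γ+η))`. -/
theorem statement9 {X : Type*} [MeasurableSpace X] (μ : Measure X)
    (ω : Set X) (hω : MeasurableSet ω)
    (Φ : HilbertBasis ℕ ℝ (Lp ℝ 2 μ)) (lam : ℕ → ℝ)
    (hlam : ∀ j, 0 ≤ lam j)
    (hlamtop : Filter.Tendsto lam Filter.atTop Filter.atTop)
    (C₀ γ : ℝ) (hC₀ : 0 < C₀) (hγ : 0 < γ)
    (hobs : ∀ T > (0 : ℝ), ∀ l ≥ (0 : ℝ), ∀ y₀ ∈ specSpace Φ lam l,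
      ‖heatSol Φ lam y₀ T‖ ^ 2 ≤
        (C₀ / T) * Real.exp (2 * γ * l + C₀ / T) * obsInt Φ lam ω y₀ 0 T) :
    ∃ C > (0 : ℝ), ∀ η > (0 : ℝ), ∀ T : ℝ, γ + η < T → ∀ ε > (0 : ℝ),
      ∀ y₀ : Lp ℝ 2 μ,
        min (Real.exp (-C / η) / C) 1 * ‖heatSol Φ lam y₀ T‖ ^ 2 ≤
          ε ^ (-(γ / (T - (γ + η)))) * obsInt Φ lam ω y₀ (T - η) T
            + ε * ‖y₀‖ ^ 2 := by
  refine ⟨2 * C₀ + 1, by linarith, ?_⟩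
  intro η hη T hT ε hε y₀
  have hδ : 0 < T - (γ + η) := by linarith
  have hTη : 0 < T - η := by linarith
  have hT0 : 0 < T := by linarith
  set δ := T - (γ + η) with hδdef
  set D := min (Real.exp (-(2 * C₀ + 1) / η) / (2 * C₀ + 1)) 1 with hDdef
  have hCpos : (0:ℝ) < 2 * C₀ + 1 := by linarith
  have hD0 : 0 < D := lt_min (by positivity) one_pos
  have hD1 : D ≤ 1 := min_le_right _ _
  have hDle : D ≤ Real.exp (-(2 * C₀ + 1) / η) / (2 * C₀ + 1) := min_le_left _ _
  have hObs0 : 0 ≤ obsInt Φ lam ω y₀ (T - η) T := by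
    apply integral_nonneg
    intro t
    apply integral_nonneg
    intro x
    positivity
  have hεβ : 0 < ε ^ (-(γ / δ)) := Real.rpow_pos_of_pos hε _
  have hyT : ‖heatSol Φ lam y₀ T‖ ^ 2 ≤ ‖y₀‖ ^ 2 := norm_heatSol_sq_le Φ lam y₀ hT0.le hlam
  have hB0 : (0:ℝ) ≤ ‖y₀‖ ^ 2 := sq_nonneg _
  rcases le_or_gt 1 ε with hε1 | hε1
  · -- easy case ε ≥ 1
    have h1 : D * ‖heatSol Φ lam y₀ T‖ ^ 2 ≤ ‖y₀‖ ^ 2 := by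
      calc D * ‖heatSol Φ lam y₀ T‖ ^ 2 ≤ 1 * ‖heatSol Φ lam y₀ T‖ ^ 2 :=
            mul_le_mul_of_nonneg_right hD1 (sq_nonneg _)
        _ = ‖heatSol Φ lam y₀ T‖ ^ 2 := one_mul _
        _ ≤ ‖y₀‖ ^ 2 := hyT
    have h2 : ‖y₀‖ ^ 2 ≤ ε * ‖y₀‖ ^ 2 := by nlinarith
    nlinarith [mul_nonneg hεβ.le hObs0]
  · -- main case 0 < ε < 1
    set l := Real.log (1 / ε) / (2 * δ) with hldef
    have hlog : 0 < Real.log (1 / ε) := Real.log_pos (by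
      rw [lt_div_iff₀ hε]
      linarith)
    have hl : 0 ≤ l := by positivity
    obtain ⟨N, hN⟩ := Filter.eventually_atTop.mp (Filter.tendsto_atTop.mp hlamtop (l + 1))
    classical
    set S : Finset ℕ := (Finset.range N).filter (fun j => lam j ≤ l) with hSdef
    have hSmem : ∀ j ∈ S, lam j ≤ l := fun j hj => (Finset.mem_filter.mp hj).2
    have hSnot : ∀ j, j ∉ S → l ≤ lam j := by
      intro j hj
      by_cases hjN : j < N
      · by_contra hcon
        push_neg at hcon
        exact hj (Finset.mem_filter.mpr ⟨Finset.mem_range.mpr hjN, hcon.le⟩)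
      · have := hN j (le_of_not_gt hjN)
        linarith
    set w := heatSol Φ lam y₀ (T - η) with hwdef
    set z₀ := trunc Φ S w with hz₀def
    have hz₀ : z₀ ∈ specSpace Φ lam l := by
      rw [hz₀def, trunc]
      apply Submodule.sum_mem
      intro j hj
      exact Submodule.smul_mem _ _ (Submodule.subset_span ⟨j, hSmem j hj, rfl⟩)
    have hkey := hobs η hη l hl z₀ hz₀
    have hid : ∀ t : ℝ, 0 ≤ t →
        heatSol Φ lam z₀ t = trunc Φ S (heatSol Φ lam y₀ ((T - η) + t)) := by
      intro t ht
      rw [hz₀def, heatSol_trunc Φ lam S w ht hlam, hwdef,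
        heatSol_comp Φ lam y₀ hTη.le ht hlam]
    -- bound the observation of z₀
    set E := Real.exp (-2 * l * (T - η)) * ‖y₀‖ ^ 2 with hEdef
    have hE0 : 0 ≤ E := by positivity
    have hobsz : obsInt Φ lam ω z₀ 0 η
        ≤ 2 * obsInt Φ lam ω y₀ (T - η) T + 2 * E * η := by
      have hrw : obsInt Φ lam ω z₀ 0 η
          = ∫ t in Set.Ioc (0:ℝ) η, Gfun ω (heatSol Φ lam z₀ t) := rfl
      have hrw2 : obsInt Φ lam ω y₀ (T - η) T
          = ∫ s in Set.Ioc (T - η) T, Gfun ω (heatSol Φ lam y₀ s) := rfl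
      have hint1 : IntegrableOn (fun t => Gfun ω (heatSol Φ lam z₀ t)) (Set.Ioc (0:ℝ) η) := by
        have := integrableOn_G_shift Φ lam ω z₀ hlam (c := 0) (a := 0) (b := η) (by norm_num)
        simpa using this
      have hintsh : IntegrableOn (fun t => Gfun ω (heatSol Φ lam y₀ ((T - η) + t)))
          (Set.Ioc (0:ℝ) η) :=
        integrableOn_G_shift Φ lam ω y₀ hlam (c := T - η) (a := 0) (b := η) (by linarith)
      have hint2 : IntegrableOn
          (fun t => 2 * Gfun ω (heatSol Φ lam y₀ ((T - η) + t)) + 2 * E)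
          (Set.Ioc (0:ℝ) η) := by
        apply Integrable.add (hintsh.const_mul 2)
        apply (integrableOn_const_iff (C := 2 * E)).mpr
        right
        rw [Real.volume_Ioc]
        exact ENNReal.ofReal_lt_top
      have hptwise : ∀ t ∈ Set.Ioc (0:ℝ) η,
          Gfun ω (heatSol Φ lam z₀ t)
            ≤ 2 * Gfun ω (heatSol Φ lam y₀ ((T - η) + t)) + 2 * E := by
        intro t ht
        have ht0 : 0 ≤ t := ht.1.le
        rw [hid t ht0]
        set v := heatSol Φ lam y₀ ((T - η) + t) with hvdef
        have hsub : trunc Φ S v = v - (v - trunc Φ S v) := (sub_sub_cancel v (trunc Φ S v)).symm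
        rw [hsub]
        have h1 := Gfun_sub_le ω v (v - trunc Φ S v)
        have h2 : ‖v - trunc Φ S v‖ ^ 2 ≤ E := by
          rw [hEdef]
          exact norm_sub_trunc_sq_le Φ lam S y₀ hSnot hl hTη.le (by linarith) hlam
        linarith
      have hmono := setIntegral_mono_on hint1 hint2 measurableSet_Ioc hptwise
      have hsplit : ∫ t in Set.Ioc (0:ℝ) η,
          (2 * Gfun ω (heatSol Φ lam y₀ ((T - η) + t)) + 2 * E)
          = 2 * (∫ t in Set.Ioc (0:ℝ) η, Gfun ω (heatSol Φ lam y₀ ((T - η) + t))) +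
              2 * E * η := by
        rw [integral_add (hintsh.const_mul 2) (by
          apply (integrableOn_const_iff (C := 2 * E)).mpr
          right
          rw [Real.volume_Ioc]
          exact ENNReal.ofReal_lt_top), integral_const_mul, setIntegral_const]
        rw [Real.volume_real_Ioc_of_le hη.le, smul_eq_mul]
        ring
      have hshift : ∫ t in Set.Ioc (0:ℝ) η, Gfun ω (heatSol Φ lam y₀ ((T - η) + t))
          = ∫ s in Set.Ioc (T - η) T, Gfun ω (heatSol Φ lam y₀ s) := by
        have := integral_G_shift Φ lam ω y₀ (c := T - η) (a := 0) (b := η) hη.le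
        rw [this]
        norm_num
      rw [hrw, hrw2]
      rw [hsplit, hshift] at hmono
      linarith
    -- Pythagoras and the high-frequency bound at time T
    have hPyth := pythagoras_trunc Φ S (heatSol Φ lam y₀ T)
    have hhigh : ‖heatSol Φ lam y₀ T - trunc Φ S (heatSol Φ lam y₀ T)‖ ^ 2
        ≤ Real.exp (-2 * l * δ) * ‖y₀‖ ^ 2 :=
      norm_sub_trunc_sq_le Φ lam S y₀ hSnot hl hδ.le (by rw [hδdef]; linarith) hlam
    have hlow : heatSol Φ lam z₀ η = trunc Φ S (heatSol Φ lam y₀ T) := by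
      have := hid η hη.le
      rw [show T - η + η = T by ring] at this
      exact this
    -- exponential identities
    have hδne : (2 * δ) ≠ 0 := by positivity
    have hlogε : Real.log (1 / ε) = -Real.log ε := by
      rw [one_div, Real.log_inv]
    have hexpδ : Real.exp (-2 * l * δ) = ε := by
      rw [hldef]
      rw [show -2 * (Real.log (1 / ε) / (2 * δ)) * δ = -Real.log (1 / ε) by field_simp]
      rw [hlogε, neg_neg, Real.exp_log hε]
    have hexpγ : Real.exp (2 * γ * l) = ε ^ (-(γ / δ)) := by
      rw [Real.rpow_def_of_pos hε, hldef]
      congr 1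
      rw [hlogε]
      field_simp
    -- assemble
    set A := ‖heatSol Φ lam y₀ T‖ ^ 2 with hAdef
    set B := ‖y₀‖ ^ 2 with hBdef
    set O := obsInt Φ lam ω y₀ (T - η) T with hOdef
    set P := ε ^ (-(γ / δ)) with hPdef
    have hkey2 : ‖trunc Φ S (heatSol Φ lam y₀ T)‖ ^ 2
        ≤ (C₀ / η) * Real.exp (2 * γ * l + C₀ / η) * (2 * O + 2 * E * η) := by
      rw [← hlow]
      calc ‖heatSol Φ lam z₀ η‖ ^ 2
          ≤ (C₀ / η) * Real.exp (2 * γ * l + C₀ / η) * obsInt Φ lam ω z₀ 0 η := hkey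
        _ ≤ (C₀ / η) * Real.exp (2 * γ * l + C₀ / η) * (2 * O + 2 * E * η) := by
            apply mul_le_mul_of_nonneg_left hobsz (by positivity)
    have hEsimp : Real.exp (2 * γ * l) * Real.exp (-2 * l * (T - η)) = ε := by
      rw [← Real.exp_add, ← hexpδ]
      congr 1
      rw [hδdef]
      ring
    have hA : A ≤ (2 * (C₀ / η) * Real.exp (C₀ / η)) * (P * O) +
        (2 * C₀ * Real.exp (C₀ / η) + 1) * (ε * B) := by
      have hc1 : (C₀ / η) * Real.exp (2 * γ * l + C₀ / η) * (2 * O + 2 * E * η)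
          = (2 * (C₀ / η) * Real.exp (C₀ / η)) * (Real.exp (2 * γ * l) * O)
            + (2 * C₀ * Real.exp (C₀ / η)) *
              ((Real.exp (2 * γ * l) * Real.exp (-2 * l * (T - η))) * B) := by
        rw [Real.exp_add, hEdef]
        have hηne : η ≠ 0 := ne_of_gt hη
        field_simp
      have hc2 : (C₀ / η) * Real.exp (2 * γ * l + C₀ / η) * (2 * O + 2 * E * η)
          = (2 * (C₀ / η) * Real.exp (C₀ / η)) * (P * O)
            + (2 * C₀ * Real.exp (C₀ / η)) * (ε * B) := by
        rw [hc1, hEsimp, hexpγ]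
      have h3 : A = ‖trunc Φ S (heatSol Φ lam y₀ T)‖ ^ 2
          + ‖heatSol Φ lam y₀ T - trunc Φ S (heatSol Φ lam y₀ T)‖ ^ 2 := hPyth
      have h4 : ‖heatSol Φ lam y₀ T - trunc Φ S (heatSol Φ lam y₀ T)‖ ^ 2 ≤ ε * B := by
        rw [← hexpδ]
        exact hhigh
      rw [h3]
      have h5 := hkey2
      rw [hc2] at h5
      linarith
    -- numeric endgame
    have hnum := numeric_key hC₀ hη
    have hDM : D * (2 * C₀ * Real.exp (C₀ / η) + 1) ≤ min η 1 := by
      calc D * (2 * C₀ * Real.exp (C₀ / η) + 1)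
          ≤ (Real.exp (-(2 * C₀ + 1) / η) / (2 * C₀ + 1)) *
              (2 * C₀ * Real.exp (C₀ / η) + 1) :=
            mul_le_mul_of_nonneg_right hDle (by positivity)
        _ ≤ min η 1 := hnum
    have hDM1 : D * (2 * C₀ * Real.exp (C₀ / η) + 1) ≤ 1 :=
      le_trans hDM (min_le_right _ _)
    have hDMη : D * (2 * C₀ * Real.exp (C₀ / η) + 1) ≤ η :=
      le_trans hDM (min_le_left _ _)
    have hcoef1 : D * (2 * (C₀ / η) * Real.exp (C₀ / η)) ≤ 1 := by
      have h1 : D * (2 * C₀ * Real.exp (C₀ / η)) ≤ η := by linarith [hDMη, hD0]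
      have h3 : (D * (2 * C₀ * Real.exp (C₀ / η))) / η ≤ 1 := (div_le_one hη).mpr h1
      calc D * (2 * (C₀ / η) * Real.exp (C₀ / η))
          = (D * (2 * C₀ * Real.exp (C₀ / η))) / η := by ring
        _ ≤ 1 := h3
    have hcoef2 : D * (2 * C₀ * Real.exp (C₀ / η) + 1) ≤ 1 := hDM1
    have hPO : 0 ≤ P * O := mul_nonneg hεβ.le hObs0
    have hεB : 0 ≤ ε * B := mul_nonneg hε.le hB0
    calc D * A
        ≤ D * ((2 * (C₀ / η) * Real.exp (C₀ / η)) * (P * O) +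
            (2 * C₀ * Real.exp (C₀ / η) + 1) * (ε * B)) :=
          mul_le_mul_of_nonneg_left hA hD0.le
      _ = (D * (2 * (C₀ / η) * Real.exp (C₀ / η))) * (P * O) +
            (D * (2 * C₀ * Real.exp (C₀ / η) + 1)) * (ε * B) := by ring
      _ ≤ 1 * (P * O) + 1 * (ε * B) :=
          add_le_add (mul_le_mul_of_nonneg_right hcoef1 hPO)
            (mul_le_mul_of_nonneg_right hcoef2 hεB)
      _ = P * O + ε * B := by ring
end

section
/- Let k > 0 and c₀ > 0 be such that for every T > 0 there exists C_T > 0 with: for every λ ≥ 0 and every y₀ ∈ E_λ, ‖y₀‖² ≤ C_T e^{2c₀ λ^{k/2}} ∫₀^T ∫_ω |y(t,x)|² dμ(x) dt. Then for every T > 0 and every θ > c₀ there exists C > 0 such that for every ε > 0 and every y₀ ∈ L²(X,μ) with ‖y₀‖_{k/2,θ} < ∞: ‖y₀‖² ≤ C ε^{−c₀/(θ−c₀)} ∫₀^T ∫_ω |y(t,x)|² dμ(x) dt + ε ‖y₀‖²_{k/2,θ}. -/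
open MeasureTheory

/-! ### Auxiliary lemmas -/

/-- The local integral `∫_ω u²`. -/
noncomputable def s11Psi {X : Type*} [MeasurableSpace X] (ω : Set X) (μ : Measure X)
    (u : Lp ℝ 2 μ) : ℝ := ∫ x in ω, (u x)^2 ∂μ

section S11Aux

variable {X : Type*} [MeasurableSpace X] {μ : Measure X}
  (Φ : HilbertBasis ℕ ℝ (Lp ℝ 2 μ)) {lam : ℕ → ℝ}

lemma s11_coef_summable (u : Lp ℝ 2 μ) : Summable (fun j => (inner ℝ u (Φ j) : ℝ)^2) := by
  have := Φ.summable_inner_mul_inner u u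
  exact this.congr fun j => by rw [real_inner_comm u (Φ j), sq]

lemma s11_norm_sq_eq (u : Lp ℝ 2 μ) : ‖u‖^2 = ∑' j, (inner ℝ u (Φ j) : ℝ)^2 := by
  have := Φ.tsum_inner_mul_inner u u
  rw [real_inner_self_eq_norm_sq] at this
  rw [← this]
  congr 1; ext j; rw [real_inner_comm u (Φ j), sq]

lemma s11_exp_abs_le (hlam : ∀ j, 0 ≤ lam j) {t : ℝ} (ht : 0 ≤ t) (j : ℕ) :
    |Real.exp (-(lam j) * t)| ≤ 1 := by
  rw [abs_of_pos (Real.exp_pos _), Real.exp_le_one_iff]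
  have := mul_nonneg (hlam j) ht
  nlinarith

lemma s11_memlp_mul (u : Lp ℝ 2 μ) {m : ℕ → ℝ} (hm : ∀ j, |m j| ≤ 1) :
    Memℓp (fun j => m j * (Φ.repr u) j) 2 := by
  apply memℓp_gen
  have hs : Summable fun j => ‖(Φ.repr u) j‖ ^ (2:ENNReal).toReal :=
    (lp.memℓp (Φ.repr u)).summable (by norm_num)
  refine hs.of_nonneg_of_le (fun j => ?_) (fun j => ?_)
  · positivity
  · apply Real.rpow_le_rpow (norm_nonneg _) _ ENNReal.toReal_nonneg
    rw [norm_mul]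
    calc ‖m j‖ * ‖(Φ.repr u) j‖ ≤ 1 * ‖(Φ.repr u) j‖ :=
          mul_le_mul_of_nonneg_right (by simpa using hm j) (norm_nonneg _)
      _ = ‖(Φ.repr u) j‖ := one_mul _

lemma s11_heatSol_eq (hlam : ∀ j, 0 ≤ lam j) (u : Lp ℝ 2 μ) {t : ℝ} (ht : 0 ≤ t) :
    heatSol Φ lam u t
      = Φ.repr.symm (⟨_, s11_memlp_mul Φ u (s11_exp_abs_le hlam ht)⟩ :
          lp (fun _ : ℕ => ℝ) 2) := by
  have H := Φ.hasSum_repr_symm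
    (⟨_, s11_memlp_mul Φ u (s11_exp_abs_le hlam ht)⟩ : lp (fun _ : ℕ => ℝ) 2)
  have H2 : HasSum (fun j => (Real.exp (-(lam j) * t) * (inner ℝ u (Φ j) : ℝ)) • (Φ j : Lp ℝ 2 μ))
      (Φ.repr.symm (⟨_, s11_memlp_mul Φ u (s11_exp_abs_le hlam ht)⟩ :
        lp (fun _ : ℕ => ℝ) 2)) := by
    convert H using 2 with j
    show _ = (Real.exp (-(lam j) * t) * (Φ.repr u) j) • (Φ j : Lp ℝ 2 μ)
    rw [Φ.repr_apply_apply, real_inner_comm]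
  exact H2.tsum_eq

lemma s11_heat_coef (hlam : ∀ j, 0 ≤ lam j) (u : Lp ℝ 2 μ) {t : ℝ} (ht : 0 ≤ t) (i : ℕ) :
    (inner ℝ (heatSol Φ lam u t) (Φ i) : ℝ)
      = Real.exp (-(lam i) * t) * (inner ℝ u (Φ i) : ℝ) := by
  rw [real_inner_comm, ← Φ.repr_apply_apply, s11_heatSol_eq Φ hlam u ht,
    LinearIsometryEquiv.apply_symm_apply]
  show Real.exp (-(lam i) * t) * (Φ.repr u) i = _
  rw [Φ.repr_apply_apply, real_inner_comm]

lemma s11_heat_sub (hlam : ∀ j, 0 ≤ lam j) (u v : Lp ℝ 2 μ) {t : ℝ} (ht : 0 ≤ t) :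
    heatSol Φ lam (u - v) t = heatSol Φ lam u t - heatSol Φ lam v t := by
  rw [s11_heatSol_eq Φ hlam (u - v) ht, s11_heatSol_eq Φ hlam u ht,
    s11_heatSol_eq Φ hlam v ht, ← map_sub]
  congr 1
  ext j
  rw [lp.coeFn_sub, Pi.sub_apply]
  show Real.exp (-(lam j) * t) * (Φ.repr (u - v)) j
    = Real.exp (-(lam j) * t) * (Φ.repr u) j - Real.exp (-(lam j) * t) * (Φ.repr v) j
  rw [map_sub, lp.coeFn_sub, Pi.sub_apply]
  ring

lemma s11_heat_norm_sq_le (hlam : ∀ j, 0 ≤ lam j) (u : Lp ℝ 2 μ) {t : ℝ} (ht : 0 ≤ t) :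
    ‖heatSol Φ lam u t‖^2 ≤ ‖u‖^2 := by
  rw [s11_norm_sq_eq Φ, s11_norm_sq_eq Φ]
  apply (s11_coef_summable Φ _).tsum_le_tsum _ (s11_coef_summable Φ u)
  intro j
  rw [s11_heat_coef Φ hlam u ht, mul_pow]
  have h1 : (Real.exp (-(lam j) * t))^2 ≤ 1 := by
    have h := s11_exp_abs_le (lam := lam) hlam ht j
    rw [abs_of_pos (Real.exp_pos _)] at h
    nlinarith [Real.exp_pos (-(lam j)*t)]
  nlinarith [sq_nonneg ((inner ℝ u (Φ j) : ℝ))]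

lemma s11_Psi_nonneg (ω : Set X) (u : Lp ℝ 2 μ) : 0 ≤ s11Psi ω μ u :=
  integral_nonneg fun x => sq_nonneg _

lemma s11_norm_sq_integral (u : Lp ℝ 2 μ) : ‖u‖^2 = ∫ x, (u x)^2 ∂μ := by
  rw [← real_inner_self_eq_norm_sq, L2.inner_def]
  congr 1
  ext x
  simp [RCLike.inner_apply, conj_trivial, sq]

lemma s11_Psi_le (ω : Set X) (u : Lp ℝ 2 μ) : s11Psi ω μ u ≤ ‖u‖^2 := by
  rw [s11_norm_sq_integral]
  exact setIntegral_le_integral (Lp.memLp u).integrable_sq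
    (Filter.Eventually.of_forall fun x => sq_nonneg _)

lemma s11_Lp_norm_abs (u : Lp ℝ 2 μ) : ‖(|u| : Lp ℝ 2 μ)‖ = ‖u‖ := by
  rw [Lp.norm_def, Lp.norm_def]
  congr 1
  rw [eLpNorm_congr_ae (Lp.coeFn_abs u)]
  have : (fun x => |u x|) = fun x => ‖u x‖ := by ext x; rw [Real.norm_eq_abs]
  rw [this, eLpNorm_norm]

lemma s11_Psi_diff_le (ω : Set X) (u v : Lp ℝ 2 μ) :
    |s11Psi ω μ u - s11Psi ω μ v| ≤ ‖u - v‖ * ‖u + v‖ := by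
  have hu : Integrable (fun x => (u x)^2) (μ.restrict ω) :=
    ((Lp.memLp u).restrict ω).integrable_sq
  have hv : Integrable (fun x => (v x)^2) (μ.restrict ω) :=
    ((Lp.memLp v).restrict ω).integrable_sq
  have h1 : s11Psi ω μ u - s11Psi ω μ v = ∫ x in ω, ((u x)^2 - (v x)^2) ∂μ :=
    (integral_sub hu hv).symm
  have hX : Integrable (fun x => |(u x)^2 - (v x)^2|) μ :=
    ((Lp.memLp u).integrable_sq.sub (Lp.memLp v).integrable_sq).abs
  calc |s11Psi ω μ u - s11Psi ω μ v| = |∫ x in ω, ((u x)^2 - (v x)^2) ∂μ| := by rw [h1]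
    _ ≤ ∫ x in ω, |(u x)^2 - (v x)^2| ∂μ := by
        simpa [Real.norm_eq_abs] using
          norm_integral_le_integral_norm (μ := μ.restrict ω) (fun x => (u x)^2 - (v x)^2)
    _ ≤ ∫ x, |(u x)^2 - (v x)^2| ∂μ :=
        setIntegral_le_integral hX (Filter.Eventually.of_forall fun x => abs_nonneg _)
    _ = (inner ℝ (|u - v| : Lp ℝ 2 μ) (|u + v| : Lp ℝ 2 μ) : ℝ) := by
        rw [L2.inner_def]
        apply integral_congr_ae
        filter_upwards [Lp.coeFn_abs (u - v), Lp.coeFn_abs (u + v), Lp.coeFn_sub u v,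
          Lp.coeFn_add u v] with x h1 h2 h3 h4
        simp only [RCLike.inner_apply, conj_trivial]
        rw [h1, h2, h3, h4, Pi.sub_apply, Pi.add_apply, ← abs_mul]
        congr 1
        ring
    _ ≤ ‖(|u - v| : Lp ℝ 2 μ)‖ * ‖(|u + v| : Lp ℝ 2 μ)‖ := real_inner_le_norm _ _
    _ = ‖u - v‖ * ‖u + v‖ := by rw [s11_Lp_norm_abs, s11_Lp_norm_abs]

lemma s11_Psi_continuous (ω : Set X) : Continuous (s11Psi ω μ) := by
  rw [continuous_iff_continuousAt]
  intro v
  rw [ContinuousAt, tendsto_iff_dist_tendsto_zero]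
  apply squeeze_zero (fun u => dist_nonneg) (g := fun u => ‖u - v‖ * (‖u - v‖ + 2 * ‖v‖))
  · intro u
    rw [Real.dist_eq]
    calc |s11Psi ω μ u - s11Psi ω μ v| ≤ ‖u - v‖ * ‖u + v‖ := s11_Psi_diff_le ω u v
      _ ≤ ‖u - v‖ * (‖u - v‖ + 2 * ‖v‖) := by
          apply mul_le_mul_of_nonneg_left _ (norm_nonneg _)
          calc ‖u + v‖ = ‖(u - v) + (2:ℝ) • v‖ := by congr 1; module
            _ ≤ ‖u - v‖ + ‖(2:ℝ) • v‖ := norm_add_le _ _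
            _ = ‖u - v‖ + 2 * ‖v‖ := by rw [norm_smul]; norm_num
  · have hc : Continuous (fun u : Lp ℝ 2 μ => ‖u - v‖ * (‖u - v‖ + 2 * ‖v‖)) := by
      continuity
    have := hc.tendsto v
    simpa using this

lemma s11_heat_contOn (hlam : ∀ j, 0 ≤ lam j) (u : Lp ℝ 2 μ) :
    ContinuousOn (fun t => heatSol Φ lam u t) (Set.Ici 0) := by
  intro s hs
  have hs' : (0:ℝ) ≤ s := hs
  have hD : Filter.Tendsto
      (fun t => ∑' j, ((Real.exp (-(lam j)*t) - Real.exp (-(lam j)*s)) * (inner ℝ u (Φ j):ℝ))^2)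
      (nhdsWithin s (Set.Ici 0)) (nhds 0) := by
    have H : Filter.Tendsto
        (fun t => ∑' j, ((Real.exp (-(lam j)*t) - Real.exp (-(lam j)*s)) * (inner ℝ u (Φ j):ℝ))^2)
        (nhdsWithin s (Set.Ici 0)) (nhds (∑' (_j : ℕ), (0:ℝ))) := by
      apply tendsto_tsum_of_dominated_convergence (s11_coef_summable Φ u)
      · intro j
        have hc : Continuous fun t =>
            ((Real.exp (-(lam j)*t) - Real.exp (-(lam j)*s)) * (inner ℝ u (Φ j):ℝ))^2 := by
          fun_prop
        have h2 := (hc.tendsto s).mono_left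
          (nhdsWithin_le_nhds (s := Set.Ici (0:ℝ)))
        simpa using h2
      · filter_upwards [self_mem_nhdsWithin] with t ht
        intro j
        have ht' : (0:ℝ) ≤ t := ht
        rw [Real.norm_eq_abs, abs_of_nonneg (sq_nonneg _), mul_pow]
        have h2 := s11_exp_abs_le (lam := lam) hlam ht' j
        have h3 := s11_exp_abs_le (lam := lam) hlam hs' j
        rw [abs_of_pos (Real.exp_pos _)] at h2 h3
        have h1 : (Real.exp (-(lam j)*t) - Real.exp (-(lam j)*s))^2 ≤ 1 := by
          nlinarith [Real.exp_pos (-(lam j)*t), Real.exp_pos (-(lam j)*s)]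
        nlinarith [sq_nonneg ((inner ℝ u (Φ j):ℝ))]
    simpa using H
  have hnorm : ∀ t ∈ Set.Ici (0:ℝ), ‖heatSol Φ lam u t - heatSol Φ lam u s‖^2
      = ∑' j, ((Real.exp (-(lam j)*t) - Real.exp (-(lam j)*s)) * (inner ℝ u (Φ j):ℝ))^2 := by
    intro t ht
    rw [s11_norm_sq_eq Φ]
    congr 1; ext j
    rw [inner_sub_left, s11_heat_coef Φ hlam u ht, s11_heat_coef Φ hlam u hs']
    ring
  have hD2 : Filter.Tendsto (fun t => ‖heatSol Φ lam u t - heatSol Φ lam u s‖^2)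
      (nhdsWithin s (Set.Ici 0)) (nhds 0) := by
    apply hD.congr'
    filter_upwards [self_mem_nhdsWithin] with t ht
    exact (hnorm t ht).symm
  have hD3 : Filter.Tendsto (fun t => ‖heatSol Φ lam u t - heatSol Φ lam u s‖)
      (nhdsWithin s (Set.Ici 0)) (nhds 0) := by
    have := (Real.continuous_sqrt.tendsto' 0 0 (by simp)).comp hD2
    refine this.congr fun t => ?_
    simp [Real.sqrt_sq_eq_abs]
  exact tendsto_iff_norm_sub_tendsto_zero.mpr hD3

lemma s11_Psi_sub_le (ω : Set X) (u v : Lp ℝ 2 μ) :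
    s11Psi ω μ (u - v) ≤ 2 * s11Psi ω μ u + 2 * s11Psi ω μ v := by
  have hu : Integrable (fun x => (u x)^2) (μ.restrict ω) :=
    ((Lp.memLp u).restrict ω).integrable_sq
  have hv : Integrable (fun x => (v x)^2) (μ.restrict ω) :=
    ((Lp.memLp v).restrict ω).integrable_sq
  have key : ∀ᵐ x ∂(μ.restrict ω), ((u - v) x)^2 ≤ 2*(u x)^2 + 2*(v x)^2 := by
    filter_upwards [ae_restrict_of_ae (Lp.coeFn_sub u v)] with x hx
    rw [hx, Pi.sub_apply]
    nlinarith [sq_nonneg (u x + v x)]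
  have hmono : s11Psi ω μ (u - v) ≤ ∫ x in ω, (2*(u x)^2 + 2*(v x)^2) ∂μ :=
    integral_mono_ae (((Lp.memLp (u - v)).restrict ω).integrable_sq)
      ((hu.const_mul 2).add (hv.const_mul 2)) key
  have heq : ∫ x in ω, (2*(u x)^2 + 2*(v x)^2) ∂μ = 2 * s11Psi ω μ u + 2 * s11Psi ω μ v := by
    rw [integral_add (hu.const_mul 2) (hv.const_mul 2), integral_const_mul, integral_const_mul]
    rfl
  linarith

lemma s11_obsInt_eq (ω : Set X) (u : Lp ℝ 2 μ) (t₁ t₂ : ℝ) :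
    obsInt Φ lam ω u t₁ t₂ = ∫ t in Set.Ioc t₁ t₂, s11Psi ω μ (heatSol Φ lam u t) := rfl

lemma s11_obs_nonneg (ω : Set X) (u : Lp ℝ 2 μ) (t₁ t₂ : ℝ) :
    0 ≤ obsInt Φ lam ω u t₁ t₂ := by
  rw [s11_obsInt_eq]
  exact integral_nonneg fun t => s11_Psi_nonneg ω _

lemma s11_F_integrableOn (ω : Set X) (hlam : ∀ j, 0 ≤ lam j) (u : Lp ℝ 2 μ)
    {T : ℝ} (hT : 0 < T) :
    IntegrableOn (fun t => s11Psi ω μ (heatSol Φ lam u t)) (Set.Ioc 0 T) := by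
  have hsub : Set.Ioc (0:ℝ) T ⊆ Set.Ici 0 := fun t ht => le_of_lt ht.1
  have hmeas : AEStronglyMeasurable (fun t => s11Psi ω μ (heatSol Φ lam u t))
      (volume.restrict (Set.Ioc 0 T)) := by
    apply ContinuousOn.aestronglyMeasurable _ measurableSet_Ioc
    exact (s11_Psi_continuous ω).comp_continuousOn ((s11_heat_contOn Φ hlam u).mono hsub)
  apply Integrable.mono' (g := fun _ => ‖u‖^2) _ hmeas
  · rw [ae_restrict_iff' measurableSet_Ioc]
    apply Filter.Eventually.of_forall
    intro t ht
    rw [Real.norm_eq_abs, abs_of_nonneg (s11_Psi_nonneg ω _)]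
    exact le_trans (s11_Psi_le ω _) (s11_heat_norm_sq_le Φ hlam u (le_of_lt ht.1))
  · exact integrableOn_const (by rw [Real.volume_Ioc]; exact ENNReal.ofReal_ne_top)

lemma s11_obs_le (ω : Set X) (hlam : ∀ j, 0 ≤ lam j) (u : Lp ℝ 2 μ) {T : ℝ} (hT : 0 < T) :
    obsInt Φ lam ω u 0 T ≤ T * ‖u‖^2 := by
  rw [s11_obsInt_eq]
  have h1 : ∫ t in Set.Ioc (0:ℝ) T, s11Psi ω μ (heatSol Φ lam u t)
      ≤ ∫ _t in Set.Ioc (0:ℝ) T, ‖u‖^2 := by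
    apply setIntegral_mono_on (s11_F_integrableOn Φ ω hlam u hT) _ measurableSet_Ioc
    · intro t ht
      exact le_trans (s11_Psi_le ω _) (s11_heat_norm_sq_le Φ hlam u (le_of_lt ht.1))
    · exact integrableOn_const (by rw [Real.volume_Ioc]; exact ENNReal.ofReal_ne_top)
  calc _ ≤ _ := h1
    _ = T * ‖u‖^2 := by
      rw [setIntegral_const, measureReal_def, Real.volume_Ioc, smul_eq_mul]
      rw [ENNReal.toReal_ofReal (by linarith)]
      ring

lemma s11_obs_split (ω : Set X) (hlam : ∀ j, 0 ≤ lam j) (u v : Lp ℝ 2 μ)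
    {T : ℝ} (hT : 0 < T) :
    obsInt Φ lam ω (u - v) 0 T ≤ 2 * obsInt Φ lam ω u 0 T + 2 * obsInt Φ lam ω v 0 T := by
  rw [s11_obsInt_eq, s11_obsInt_eq, s11_obsInt_eq]
  have hint_u := s11_F_integrableOn Φ ω hlam u hT
  have hint_v := s11_F_integrableOn Φ ω hlam v hT
  have h1 : ∫ t in Set.Ioc (0:ℝ) T, s11Psi ω μ (heatSol Φ lam (u - v) t)
      ≤ ∫ t in Set.Ioc (0:ℝ) T,
          (2 * s11Psi ω μ (heatSol Φ lam u t) + 2 * s11Psi ω μ (heatSol Φ lam v t)) := by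
    apply setIntegral_mono_on (s11_F_integrableOn Φ ω hlam (u - v) hT)
      ((hint_u.const_mul 2).add (hint_v.const_mul 2)) measurableSet_Ioc
    intro t ht
    rw [s11_heat_sub Φ hlam u v (le_of_lt ht.1)]
    exact s11_Psi_sub_le ω _ _
  calc _ ≤ _ := h1
    _ = _ := by
      rw [integral_add (hint_u.const_mul 2) (hint_v.const_mul 2), integral_const_mul,
        integral_const_mul]

lemma s11_spec_decomp (hlamtop : Filter.Tendsto lam Filter.atTop Filter.atTop)
    (l : ℝ) (y₀ : Lp ℝ 2 μ) :
    ∃ P ∈ specSpace Φ lam l, ∀ i,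
      (inner ℝ P (Φ i) : ℝ) = if lam i ≤ l then (inner ℝ y₀ (Φ i) : ℝ) else 0 := by
  obtain ⟨N, hN⟩ := Filter.eventually_atTop.mp (hlamtop.eventually_gt_atTop l)
  set S := (Finset.range N).filter (fun j => lam j ≤ l) with hS
  refine ⟨∑ j ∈ S, ((inner ℝ y₀ (Φ j) : ℝ)) • (Φ j : Lp ℝ 2 μ), ?_, ?_⟩
  · apply Submodule.sum_mem
    intro j hj
    apply Submodule.smul_mem
    apply Submodule.subset_span
    exact ⟨j, (Finset.mem_filter.mp hj).2, rfl⟩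
  · intro i
    have horth := orthonormal_iff_ite.mp Φ.orthonormal
    rw [sum_inner]
    have hterm : ∀ j ∈ S, (inner ℝ ((inner ℝ y₀ (Φ j) : ℝ) • (Φ j : Lp ℝ 2 μ)) (Φ i) : ℝ)
        = if j = i then (inner ℝ y₀ (Φ j) : ℝ) else 0 := by
      intro j _
      rw [real_inner_smul_left, horth j i]
      by_cases h : j = i <;> simp [h]
    rw [Finset.sum_congr rfl hterm, Finset.sum_ite_eq' S i (fun j => (inner ℝ y₀ (Φ j) : ℝ))]
    have hmem : i ∈ S ↔ lam i ≤ l := by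
      rw [hS, Finset.mem_filter, Finset.mem_range]
      constructor
      · exact fun h => h.2
      · intro h
        refine ⟨?_, h⟩
        by_contra hiN
        push_neg at hiN
        exact absurd h (not_le.mpr (hN i hiN))
    by_cases h : lam i ≤ l
    · rw [if_pos (hmem.mpr h), if_pos h]
    · rw [if_neg (fun hi => h (hmem.mp hi)), if_neg h]

end S11Aux

/-- Approximate observability with polynomial cost for Gevrey-regular data
(abstract spectral form): from low-frequency observability at cost
`e^{2c₀λ^{k/2}}`, for `θ > c₀` one gets
`‖y₀‖² ≤ C ε^{-c₀/(θ-c₀)} ∫₀^T ∫_ω |y|² + ε ‖y₀‖²_{k/2,θ}` where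
`‖y₀‖²_{k/2,θ} = ∑ⱼ e^{2θλⱼ^{k/2}} ⟨y₀,φⱼ⟩²`. -/
theorem statement11 {X : Type*} [MeasurableSpace X] (μ : Measure X)
    (ω : Set X) (hω : MeasurableSet ω)
    (Φ : HilbertBasis ℕ ℝ (Lp ℝ 2 μ)) (lam : ℕ → ℝ)
    (hlam : ∀ j, 0 ≤ lam j)
    (hlamtop : Filter.Tendsto lam Filter.atTop Filter.atTop)
    (k c₀ : ℝ) (hk : 0 < k) (hc₀ : 0 < c₀)
    (hobs : ∀ T > (0 : ℝ), ∃ C_T > (0 : ℝ), ∀ l ≥ (0 : ℝ), ∀ y₀ ∈ specSpace Φ lam l,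
      ‖y₀‖ ^ 2 ≤ C_T * Real.exp (2 * c₀ * l ^ (k / 2)) * obsInt Φ lam ω y₀ 0 T) :
    ∀ T > (0 : ℝ), ∀ θ : ℝ, c₀ < θ → ∃ C > (0 : ℝ), ∀ ε > (0 : ℝ),
      ∀ y₀ : Lp ℝ 2 μ,
        Summable (fun j => Real.exp (2 * θ * (lam j) ^ (k / 2)) *
          (inner ℝ y₀ (Φ j) : ℝ) ^ 2) →
        ‖y₀‖ ^ 2 ≤ C * ε ^ (-(c₀ / (θ - c₀))) * obsInt Φ lam ω y₀ 0 T
          + ε * ∑' j, Real.exp (2 * θ * (lam j) ^ (k / 2)) *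
              (inner ℝ y₀ (Φ j) : ℝ) ^ 2 := by
  intro T hT θ hθ
  obtain ⟨C_T, hCT, hC⟩ := hobs T hT
  have hθc : 0 < θ - c₀ := by linarith
  have hθ0 : 0 < θ := lt_trans hc₀ hθ
  set α := c₀ / (θ - c₀) with hα
  have hα0 : 0 < α := div_pos hc₀ hθc
  set K := 2*C_T*T + 1 with hK
  have hK1 : 1 ≤ K := by nlinarith
  have hK0 : 0 < K := by linarith
  refine ⟨2*C_T*K^α, by positivity, ?_⟩
  intro ε hε y₀ hG
  set G := ∑' j, Real.exp (2*θ*(lam j)^(k/2)) * (inner ℝ y₀ (Φ j):ℝ)^2 with hGdef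
  have hexp_ge : ∀ j, 1 ≤ Real.exp (2*θ*(lam j)^(k/2)) := by
    intro j
    apply Real.one_le_exp
    have h := Real.rpow_nonneg (hlam j) (k/2)
    positivity
  have hGnn : 0 ≤ G := tsum_nonneg fun j => by
    have := hexp_ge j
    nlinarith [sq_nonneg ((inner ℝ y₀ (Φ j):ℝ))]
  have hy0G : ‖y₀‖^2 ≤ G := by
    rw [s11_norm_sq_eq Φ, hGdef]
    apply (s11_coef_summable Φ y₀).tsum_le_tsum _ hG
    intro j
    nlinarith [hexp_ge j, sq_nonneg ((inner ℝ y₀ (Φ j):ℝ))]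
  have hobs0 := s11_obs_nonneg Φ (lam := lam) ω y₀ 0 T
  by_cases hcase : K ≤ ε
  · have h1 : ‖y₀‖^2 ≤ ε * G := by nlinarith
    have h2 : 0 ≤ 2*C_T*K^α * ε ^ (-α) * obsInt Φ lam ω y₀ 0 T :=
      mul_nonneg (by positivity) hobs0
    linarith
  · push_neg at hcase
    set ε' := ε / K with hε'def
    have hε'pos : 0 < ε' := div_pos hε hK0
    have hε'lt : ε' < 1 := (div_lt_one hK0).mpr hcase
    set m := Real.log (1/ε') with hm
    have hlogε' : Real.log ε' = -m := by rw [hm, one_div, Real.log_inv, neg_neg]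
    have hεm : ε' = Real.exp (-m) := by rw [← hlogε', Real.exp_log hε'pos]
    have hm0 : 0 ≤ m := by
      rw [hm]
      exact Real.log_nonneg (one_le_one_div hε'pos hε'lt.le)
    set L := (m / (2*(θ - c₀))) ^ (2/k) with hLdef
    have hL0 : 0 ≤ L := Real.rpow_nonneg (by positivity) _
    have hLk : L ^ (k/2) = m / (2*(θ - c₀)) := by
      rw [hLdef, ← Real.rpow_mul (by positivity)]
      rw [show (2/k)*(k/2) = 1 by field_simp, Real.rpow_one]
    set E1 := Real.exp (2*c₀*L^(k/2)) with hE1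
    set E2 := Real.exp (-(2*θ)*L^(k/2)) with hE2
    have hE1pos : 0 < E1 := Real.exp_pos _
    have hE2pos : 0 < E2 := Real.exp_pos _
    have hE1ge : 1 ≤ E1 := by
      rw [hE1, hLk]
      apply Real.one_le_exp
      positivity
    have hE1eq : E1 = ε' ^ (-α) := by
      rw [hE1, hLk, Real.rpow_def_of_pos hε'pos, hlogε']
      congr 1
      rw [hα]
      field_simp
    have hE12 : E1 * E2 = ε' := by
      rw [hE1, hE2, ← Real.exp_add, hLk, hεm]
      congr 1
      field_simp
      ring
    have hE2le : E2 ≤ ε' := by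
      have h := mul_le_mul_of_nonneg_right hE1ge hE2pos.le
      rw [one_mul, hE12] at h
      exact h
    clear_value α K G m ε' L E1 E2
    obtain ⟨P, hPmem, hPcoef⟩ := s11_spec_decomp Φ (lam := lam) hlamtop L y₀
    have hQcoef : ∀ i, (inner ℝ (y₀ - P) (Φ i) : ℝ)
        = if lam i ≤ L then 0 else (inner ℝ y₀ (Φ i):ℝ) := by
      intro i
      rw [inner_sub_left, hPcoef i]
      by_cases h : lam i ≤ L <;> simp [h]
    have hsplit : ‖y₀‖^2 = ‖P‖^2 + ‖y₀ - P‖^2 := by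
      rw [s11_norm_sq_eq Φ, s11_norm_sq_eq Φ, s11_norm_sq_eq Φ,
        ← Summable.tsum_add (s11_coef_summable Φ P) (s11_coef_summable Φ (y₀ - P))]
      congr 1
      ext i
      rw [hPcoef i, hQcoef i]
      by_cases h : lam i ≤ L <;> simp [h]
    have hQnorm : ‖y₀ - P‖^2 ≤ E2 * G := by
      rw [s11_norm_sq_eq Φ, hGdef, ← tsum_mul_left]
      apply (s11_coef_summable Φ _).tsum_le_tsum _ (hG.mul_left _)
      intro j
      rw [hQcoef j]
      by_cases h : lam j ≤ L
      · rw [if_pos h]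
        have h0 : (0:ℝ)^2 = 0 := by norm_num
        rw [h0]
        exact mul_nonneg hE2pos.le (mul_nonneg (Real.exp_pos _).le (sq_nonneg _))
      · rw [if_neg h]
        push_neg at h
        have hrp : L^(k/2) ≤ (lam j)^(k/2) :=
          Real.rpow_le_rpow hL0 h.le (by positivity)
        have h1 : (1:ℝ) ≤ E2 * Real.exp (2*θ*(lam j)^(k/2)) := by
          rw [hE2, ← Real.exp_add]
          apply Real.one_le_exp
          have h2 := mul_le_mul_of_nonneg_left hrp (by linarith : (0:ℝ) ≤ 2*θ)
          linarith
        have h2 := mul_le_mul_of_nonneg_right h1 (sq_nonneg ((inner ℝ y₀ (Φ j):ℝ)))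
        rw [one_mul, mul_assoc] at h2
        exact h2
    have hPnorm := hC L hL0 P hPmem
    rw [← hE1] at hPnorm
    have hobsQ0 := s11_obs_nonneg Φ (lam := lam) ω (y₀ - P) 0 T
    have hobsP : obsInt Φ lam ω P 0 T
        ≤ 2*obsInt Φ lam ω y₀ 0 T + 2*obsInt Φ lam ω (y₀ - P) 0 T := by
      have h := s11_obs_split Φ ω hlam y₀ (y₀ - P) hT
      rw [sub_sub_cancel] at h
      exact h
    have hobsQ : obsInt Φ lam ω (y₀ - P) 0 T ≤ T * (E2 * G) := by
      calc obsInt Φ lam ω (y₀ - P) 0 T ≤ T * ‖y₀ - P‖^2 := s11_obs_le Φ ω hlam _ hT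
        _ ≤ T * (E2 * G) := mul_le_mul_of_nonneg_left hQnorm hT.le
    have hPbound : ‖P‖^2 ≤ C_T * E1 *
        (2*obsInt Φ lam ω y₀ 0 T + 2*(T*(E2*G))) := by
      refine le_trans hPnorm (mul_le_mul_of_nonneg_left ?_ (mul_nonneg hCT.le hE1pos.le))
      linarith
    have hεεK : K * ε' = ε := by rw [hε'def]; field_simp
    clear hC hobs hGdef hG hεm hlogε' hm0 hm hLdef hLk hL0 hPcoef hQcoef hexp_ge hy0G
      hPnorm hPmem hobsQ0 hE1 hE2 m L
    have hKey : ‖y₀‖^2 ≤ 2*C_T*E1*obsInt Φ lam ω y₀ 0 T + ε * G := by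
      have e1 : C_T * E1 * (2*obsInt Φ lam ω y₀ 0 T + 2*(T*(E2*G)))
          = 2*C_T*E1*obsInt Φ lam ω y₀ 0 T + 2*C_T*T*(E1*E2)*G := by ring
      have e2 : 2*C_T*T*(E1*E2)*G + E2*G ≤ ε * G := by
        rw [hE12]
        have h3 : 2*C_T*T*ε'*G + E2*G ≤ 2*C_T*T*ε'*G + ε'*G := by nlinarith
        have h4 : 2*C_T*T*ε'*G + ε'*G = (K * ε') * G := by rw [hK]; ring
        rw [h4, hεεK] at h3
        exact h3
      have h5 : ‖P‖^2 + ‖y₀ - P‖^2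
          ≤ C_T * E1 * (2*obsInt Φ lam ω y₀ 0 T + 2*(T*(E2*G))) + E2*G := by
        linarith
      rw [hsplit]
      rw [e1] at h5
      linarith
    have hfinal : 2*C_T*E1 = 2*C_T*K^α * ε ^ (-α) := by
      rw [hE1eq, hε'def, Real.div_rpow hε.le hK0.le, Real.rpow_neg hK0.le]
      have hKα : (K^α)⁻¹ ≠ 0 := by
        have := Real.rpow_pos_of_pos hK0 α
        positivity
      field_simp
    have hgoal : 2*C_T*E1*obsInt Φ lam ω y₀ 0 T
        = 2*C_T*K^α * ε ^ (-α) * obsInt Φ lam ω y₀ 0 T := by rw [hfinal]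
    rw [hgoal] at hKey
    exact hKey
end

section
/- Let 0 < T < c₀ and Φ : (0,∞) → (0,∞). Suppose λ ≥ 2 is such that, with ε_λ := (1/2) e^{−2λT}, the inequality e^{−2λT} ≤ Φ(ε_λ) · e^{−2c₀ λ} / λ + ε_λ holds. Then Φ(ε_λ) ≥ (2 ε_λ)^{−(c₀/T − 1)}. -/
/-- Optimality argument in the case `k = 2`: if `0 < T < c₀`,
`Φ : (0,∞) → (0,∞)` and, with `ε_λ = (1/2)e^{-2λT}` for some `λ ≥ 2`, one has
`e^{-2λT} ≤ Φ(ε_λ) e^{-2c₀λ}/λ + ε_λ`, then `Φ(ε_λ) ≥ (2ε_λ)^{-(c₀/T - 1)}`. -/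
theorem statement13 (T c₀ : ℝ) (Φ : ℝ → ℝ) (hT : 0 < T) (hTc : T < c₀)
    (hΦ : ∀ x > (0 : ℝ), 0 < Φ x)
    (lam : ℝ) (hlam : 2 ≤ lam)
    (h : Real.exp (-2 * lam * T) ≤
      Φ ((1/2) * Real.exp (-2 * lam * T)) * Real.exp (-2 * c₀ * lam) / lam
        + (1/2) * Real.exp (-2 * lam * T)) :
    Φ ((1/2) * Real.exp (-2 * lam * T)) ≥
      (2 * ((1/2) * Real.exp (-2 * lam * T))) ^ (-(c₀ / T - 1)) := by
  set E := Real.exp (-2 * lam * T) with hEdef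
  have hE : 0 < E := Real.exp_pos _
  have hlam0 : (0:ℝ) < lam := by linarith
  set P := Φ ((1/2) * E) with hPdef
  have hstep : E / 2 ≤ P * Real.exp (-2 * c₀ * lam) / lam := by linarith
  have hP : (E / 2) * lam * Real.exp (2 * c₀ * lam) ≤ P := by
    have h1 : (E / 2) * lam ≤ P * Real.exp (-2 * c₀ * lam) := by
      calc (E / 2) * lam ≤ (P * Real.exp (-2 * c₀ * lam) / lam) * lam := by
            exact mul_le_mul_of_nonneg_right hstep hlam0.le
        _ = P * Real.exp (-2 * c₀ * lam) := by field_simp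
    have h2 := mul_le_mul_of_nonneg_right h1 (Real.exp_pos (2 * c₀ * lam)).le
    calc (E / 2) * lam * Real.exp (2 * c₀ * lam)
        ≤ P * Real.exp (-2 * c₀ * lam) * Real.exp (2 * c₀ * lam) := h2
      _ = P := by rw [mul_assoc, ← Real.exp_add]; ring_nf; simp
  have hrhs : (2 * ((1/2) * E)) ^ (-(c₀ / T - 1)) = E * Real.exp (2 * c₀ * lam) := by
    have : (2:ℝ) * ((1/2) * E) = E := by ring
    rw [this, hEdef, ← Real.exp_mul, ← Real.exp_add]
    congr 1
    field_simp
    ring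
  rw [ge_iff_le, hrhs]
  calc E * Real.exp (2 * c₀ * lam) ≤ (E / 2) * lam * Real.exp (2 * c₀ * lam) := by
        have : E ≤ (E / 2) * lam := by nlinarith
        exact mul_le_mul_of_nonneg_right this (Real.exp_pos _).le
    _ ≤ P := hP
end
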